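/- arXiv:2402.04104 — 13 statements merged into one kernel-verified Lean document; each statement's English description precedes it below -/
import Mathlib

section
/- Let f : [0,1] → ℝ be continuous and concave with f(0) = 0 = f(1) and max_{[0,1]} f > 0. Fix ρ_R ∈ (0,1) and α ∈ ℝ with α > f(ρ_R)/ρ_R. Then there exists a unique ρ_M ∈ (0, ρ_R) such that f(ρ_R) + f(ρ_M) = α (ρ_R − ρ_M). -/
/-- Lemma 2.1: existence and uniqueness of the intermediate state `ρ_M` solving the
Rankine–Hugoniot condition `f(ρ_R) + f(ρ_M) = α (ρ_R − ρ_M)` when `α > f(ρ_R)/ρ_R`. -/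
theorem stmt_0
    (f : ℝ → ℝ)
    (hcont : ContinuousOn f (Set.Icc 0 1))
    (hconc : ConcaveOn ℝ (Set.Icc 0 1) f)
    (hf0 : f 0 = 0) (hf1 : f 1 = 0)
    (hmax : ∃ x ∈ Set.Icc (0:ℝ) 1, 0 < f x)
    (ρR : ℝ) (hρR : ρR ∈ Set.Ioo (0:ℝ) 1)
    (α : ℝ) (hα : f ρR / ρR < α) :
    ∃! ρM : ℝ, ρM ∈ Set.Ioo 0 ρR ∧ f ρR + f ρM = α * (ρR - ρM) := by
  obtain ⟨hρR0, hρR1⟩ := hρR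
  -- f is positive on (0,1)
  have hpos : ∀ ρ ∈ Set.Ioo (0:ℝ) 1, 0 < f ρ := by
    obtain ⟨x, hx, hfx⟩ := hmax
    have hx0 : (0:ℝ) < x := by
      rcases eq_or_lt_of_le hx.1 with h | h
      · exfalso; rw [← h, hf0] at hfx; linarith
      · exact h
    have hx1 : x < 1 := by
      rcases eq_or_lt_of_le hx.2 with h | h
      · exfalso; rw [h, hf1] at hfx; linarith
      · exact h
    intro ρ hρ
    obtain ⟨hρ0, hρ1⟩ := hρ
    rcases lt_trichotomy ρ x with h | h | h
    · have ha : 0 ≤ (x - ρ) / x := by apply div_nonneg <;> linarith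
      have hb : 0 < ρ / x := by positivity
      have hab : (x - ρ) / x + ρ / x = 1 := by field_simp; ring
      have hcomb : ((x - ρ) / x) • (0:ℝ) + (ρ / x) • x = ρ := by
        simp only [smul_eq_mul]; field_simp; ring
      have hci := hconc.2 (Set.mem_Icc.2 ⟨le_refl 0, by norm_num⟩)
        (Set.mem_Icc.2 ⟨hx0.le, hx1.le⟩) ha hb.le hab
      rw [hcomb] at hci
      simp only [smul_eq_mul, hf0, mul_zero, zero_add] at hci
      nlinarith [mul_pos hb hfx]
    · rw [h]; exact hfx
    · have hx1' : (1:ℝ) - x ≠ 0 := by intro hc; linarith [sub_eq_zero.mp hc]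
      have ha : 0 < (1 - ρ) / (1 - x) := by apply div_pos <;> linarith
      have hb : 0 ≤ (ρ - x) / (1 - x) := by apply div_nonneg <;> linarith
      have hab : (1 - ρ) / (1 - x) + (ρ - x) / (1 - x) = 1 := by
        field_simp; ring
      have hcomb : ((1 - ρ) / (1 - x)) • x + ((ρ - x) / (1 - x)) • (1:ℝ) = ρ := by
        simp only [smul_eq_mul]
        field_simp
        ring
      have hci := hconc.2 (Set.mem_Icc.2 ⟨hx0.le, hx1.le⟩)
        (Set.mem_Icc.2 ⟨by norm_num, le_refl 1⟩) ha.le hb hab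
      rw [hcomb] at hci
      simp only [smul_eq_mul, hf1, mul_zero, add_zero] at hci
      nlinarith [mul_pos ha hfx]
  have hfρR : 0 < f ρR := hpos ρR ⟨hρR0, hρR1⟩
  have hgl : f ρR < α * ρR := (div_lt_iff₀ hρR0).mp hα
  -- IVT for g ρ = f ρR + f ρ - α * (ρR - ρ)
  have hsub : Set.Icc (0:ℝ) ρR ⊆ Set.Icc 0 1 :=
    Set.Icc_subset_Icc (le_refl 0) hρR1.le
  have hgcont : ContinuousOn (fun ρ => f ρR + f ρ - α * (ρR - ρ)) (Set.Icc 0 ρR) := by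
    apply ContinuousOn.sub
    · exact continuousOn_const.add (hcont.mono hsub)
    · exact continuousOn_const.mul (continuousOn_const.sub continuousOn_id)
  have h0mem : (0:ℝ) ∈ Set.Ioo (f ρR + f 0 - α * (ρR - 0)) (f ρR + f ρR - α * (ρR - ρR)) := by
    constructor
    · rw [hf0]; linarith
    · linarith
  obtain ⟨ρM, hρM, hgρM⟩ := intermediate_value_Ioo hρR0.le hgcont h0mem
  simp only at hgρM
  have heqM : f ρR + f ρM = α * (ρR - ρM) := by linarith
  -- key uniqueness helper
  have key : ∀ y z : ℝ, y ∈ Set.Ioo 0 ρR → z ∈ Set.Ioo 0 ρR → y < z →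
      f ρR + f y = α * (ρR - y) → f ρR + f z = α * (ρR - z) → False := by
    intro y z hy hz hyz hey hez
    have hden : 0 < ρR - y := by linarith [hy.2]
    have ha : 0 ≤ (ρR - z) / (ρR - y) := by
      apply div_nonneg
      · linarith [hz.2]
      · exact hden.le
    have hb : 0 < (z - y) / (ρR - y) := by
      apply div_pos
      · linarith
      · exact hden
    have hab : (ρR - z) / (ρR - y) + (z - y) / (ρR - y) = 1 := by field_simp; ring
    have hcomb : ((ρR - z) / (ρR - y)) • y + ((z - y) / (ρR - y)) • ρR = z := by
      simp only [smul_eq_mul]; field_simp; ring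
    have hci := hconc.2 (Set.mem_Icc.2 ⟨hy.1.le, hy.2.le.trans hρR1.le⟩)
      (Set.mem_Icc.2 ⟨hρR0.le, hρR1.le⟩) ha hb.le hab
    rw [hcomb] at hci
    simp only [smul_eq_mul] at hci
    have haid : (ρR - z) / (ρR - y) * (ρR - y) = ρR - z := by field_simp
    have hfy : f y = α * (ρR - y) - f ρR := by linarith
    have h2 : (ρR - z) / (ρR - y) * f y
        = α * (ρR - z) - (ρR - z) / (ρR - y) * f ρR := by
      rw [hfy, mul_sub, mul_comm α, ← mul_assoc, haid]; ring
    have h4 : (ρR - z) / (ρR - y) * f ρR + (z - y) / (ρR - y) * f ρR = f ρR := by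
      rw [← add_mul, hab, one_mul]
    linarith [mul_pos hb hfρR]
  refine ⟨ρM, ⟨hρM, heqM⟩, ?_⟩
  rintro y ⟨hy, hey⟩
  rcases lt_trichotomy y ρM with h | h | h
  · exact absurd (key y ρM hy hρM h hey heqM) (fun h => h)
  · exact h
  · exact absurd (key ρM y hρM hy h heqM hey) (fun h => h)
end

section
/- Let f : [0,1] → ℝ be continuous and concave with f(0) = 0 = f(1) and max_{[0,1]} f > 0. Fix ρ_L ∈ (0,1) and α ∈ ℝ with α < −f(ρ_L)/ρ_L. Then there exists a unique ρ_M ∈ (0, ρ_L) such that f(ρ_M) + f(ρ_L) = α (ρ_M − ρ_L). -/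
/-- Mirror of Lemma 2.1: existence and uniqueness of the intermediate state `ρ_M` solving
`f(ρ_M) + f(ρ_L) = α (ρ_M − ρ_L)` when `α < −f(ρ_L)/ρ_L`. -/
theorem stmt_1
    (f : ℝ → ℝ)
    (hcont : ContinuousOn f (Set.Icc 0 1))
    (hconc : ConcaveOn ℝ (Set.Icc 0 1) f)
    (hf0 : f 0 = 0) (hf1 : f 1 = 0)
    (hmax : ∃ x ∈ Set.Icc (0:ℝ) 1, 0 < f x)
    (ρL : ℝ) (hρL : ρL ∈ Set.Ioo (0:ℝ) 1)
    (α : ℝ) (hα : α < -(f ρL / ρL)) :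
    ∃! ρM : ℝ, ρM ∈ Set.Ioo 0 ρL ∧ f ρM + f ρL = α * (ρM - ρL) := by
  obtain ⟨hρL0, hρL1⟩ := hρL
  obtain ⟨x0, hx0, hfx0⟩ := hmax
  have hρLmem : ρL ∈ Set.Icc (0:ℝ) 1 := ⟨hρL0.le, hρL1.le⟩
  have h0mem : (0:ℝ) ∈ Set.Icc (0:ℝ) 1 := Set.left_mem_Icc.2 zero_le_one
  have h1mem : (1:ℝ) ∈ Set.Icc (0:ℝ) 1 := Set.right_mem_Icc.2 zero_le_one
  -- f ρL > 0
  have hfρL : 0 < f ρL := by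
    rcases lt_trichotomy x0 ρL with h | h | h
    · have hd : (0:ℝ) < 1 - x0 := by linarith [hx0.2]
      have ha' : (0:ℝ) ≤ (1 - ρL)/(1 - x0) := div_nonneg (by linarith) hd.le
      have hb' : (0:ℝ) ≤ (ρL - x0)/(1 - x0) := div_nonneg (by linarith) hd.le
      have hab' : (1 - ρL)/(1 - x0) + (ρL - x0)/(1 - x0) = 1 := by
        rw [← add_div, show (1 - ρL) + (ρL - x0) = 1 - x0 by ring, div_self hd.ne']
      have key := hconc.2 hx0 h1mem ha' hb' hab' 
      have harg : ((1 - ρL)/(1 - x0)) • x0 + ((ρL - x0)/(1 - x0)) • (1:ℝ) = ρL := by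
        simp only [smul_eq_mul]
        field_simp
        ring
      rw [harg] at key
      simp only [smul_eq_mul, hf1, mul_zero, add_zero] at key
      have : 0 < (1 - ρL)/(1 - x0) * f x0 := mul_pos (div_pos (by linarith) hd) hfx0
      linarith
    · rwa [← h]
    · have hd : (0:ℝ) < x0 := lt_trans hρL0 h
      have ha' : (0:ℝ) ≤ (x0 - ρL)/x0 := div_nonneg (by linarith) hd.le
      have hb' : (0:ℝ) ≤ ρL/x0 := div_nonneg hρL0.le hd.le
      have hab' : (x0 - ρL)/x0 + ρL/x0 = 1 := by
        rw [← add_div, show (x0 - ρL) + ρL = x0 by ring, div_self hd.ne']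
      have key := hconc.2 h0mem hx0 ha' hb' hab' 
      have harg : ((x0 - ρL)/x0) • (0:ℝ) + (ρL/x0) • x0 = ρL := by
        simp only [smul_eq_mul]
        field_simp
        ring
      rw [harg] at key
      simp only [smul_eq_mul, hf0, mul_zero, add_zero] at key
      have : 0 < ρL/x0 * f x0 := mul_pos (div_pos hρL0 hd) hfx0
      linarith
  -- the auxiliary function
  set g : ℝ → ℝ := fun x => f x + f ρL - α * (x - ρL) with hg
  have hgcont : ContinuousOn g (Set.Icc 0 ρL) := by
    apply ContinuousOn.sub
    · exact (hcont.mono (Set.Icc_subset_Icc le_rfl hρL1.le)).add continuousOn_const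
    · exact (continuousOn_const.mul (continuousOn_id.sub continuousOn_const))
  have hg0 : g 0 < 0 := by
    have : α * ρL < -f ρL := by
      have h := hα
      rw [← neg_div] at h
      exact (lt_div_iff₀ hρL0).1 h
    simp only [hg, hf0]
    nlinarith
  have hgρL : 0 < g ρL := by
    simp only [hg]
    simp
    linarith
  -- existence via IVT
  have : (0:ℝ) ∈ Set.Ioo (g 0) (g ρL) := ⟨hg0, hgρL⟩
  obtain ⟨ρM, hρMmem, hρMval⟩ := intermediate_value_Ioo hρL0.le hgcont this
  have hρMeq : f ρM + f ρL = α * (ρM - ρL) := by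
    have : f ρM + f ρL - α * (ρM - ρL) = 0 := hρMval
    linarith
  -- uniqueness helper
  have key : ∀ a b : ℝ, a ∈ Set.Ioo 0 ρL → b ∈ Set.Ioo 0 ρL → a < b →
      f a + f ρL = α * (a - ρL) → f b + f ρL = α * (b - ρL) → False := by
    intro a b ha hb hab hfa hfb
    have hd : (0:ℝ) < ρL - a := by linarith [ha.2]
    have hamem : a ∈ Set.Icc (0:ℝ) 1 := ⟨ha.1.le, le_trans ha.2.le hρL1.le⟩
    have ha' : (0:ℝ) ≤ (ρL - b)/(ρL - a) := by
      apply div_nonneg _ hd.le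
      linarith [hb.2]
    have hb' : (0:ℝ) ≤ (b - a)/(ρL - a) := div_nonneg (by linarith) hd.le
    have hab' : (ρL - b)/(ρL - a) + (b - a)/(ρL - a) = 1 := by
      rw [← add_div, show (ρL - b) + (b - a) = ρL - a by ring, div_self hd.ne']
    have hc := hconc.2 hamem hρLmem ha' hb' hab' 
    have harg : ((ρL - b)/(ρL - a)) • a + ((b - a)/(ρL - a)) • ρL = b := by
      simp only [smul_eq_mul]
      field_simp
      ring
    rw [harg] at hc
    simp only [smul_eq_mul] at hc
    have hc2 : (ρL - b) * f a + (b - a) * f ρL ≤ f b * (ρL - a) := by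
      have := mul_le_mul_of_nonneg_right hc hd.le
      field_simp at this
      nlinarith [this]
    nlinarith [mul_pos (sub_pos.2 hab) hfρL, hb.2]
  refine ⟨ρM, ⟨hρMmem, hρMeq⟩, ?_⟩
  rintro y ⟨hymem, hyeq⟩
  rcases lt_trichotomy y ρM with h | h | h
  · exact absurd (key y ρM hymem hρMmem h hyeq hρMeq) (fun hF => hF.elim)
  · exact h
  · exact absurd (key ρM y hρMmem hymem h hρMeq hyeq) (fun hF => hF.elim)
end

section
/- Let f : [0,1] → ℝ be continuous and concave with f(0) = 0 = f(1), and let α ∈ ℝ. Suppose (p_l, p_r) ∈ [0,1]² and (q_l, q_r) ∈ [0,1]² both belong to the germ G̃_α, i.e. f(p_r) + f(p_l) = α (p_r − p_l) and f(q_r) + f(q_l) = α (q_r − q_l). Then the L¹-dissipativity inequality holds: sign(p_l − q_l)·(f(q_l) − f(p_l)) − sign(p_r − q_r)·(f(p_r) − f(q_r)) ≥ α (|p_l − q_l| − |p_r − q_r|), where sign(0) = 0. -/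
/-- Quasiconcavity consequence: if a concave function on `[0,1]` strictly increases
from `a` to `b`, then it is `≤ g a` to the left of `a`. -/
lemma qc_aux (g : ℝ → ℝ) (hg : ConcaveOn ℝ (Set.Icc 0 1) g) {x a b : ℝ}
    (hx : x ∈ Set.Icc (0:ℝ) 1) (hb : b ∈ Set.Icc (0:ℝ) 1)
    (hxa : x ≤ a) (hab : a ≤ b) (hgab : g a < g b) : g x ≤ g a := by
  rcases eq_or_lt_of_le hxa with rfl | hxa
  · exact le_refl _
  rcases eq_or_lt_of_le hab with rfl | hab
  · exact absurd hgab (lt_irrefl _)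
  have hbx : (0:ℝ) < b - x := by linarith
  set μ : ℝ := (b - a) / (b - x) with hμdef
  have hμ0 : 0 < μ := div_pos (by linarith) hbx
  have hν0 : 0 ≤ 1 - μ := by
    rw [sub_nonneg, hμdef]
    exact div_le_one_of_le₀ (by linarith) hbx.le
  have hsum : μ + (1 - μ) = 1 := by ring
  have key := hg.2 hx hb hμ0.le hν0 hsum
  simp only [smul_eq_mul] at key
  have hpt : μ * x + (1 - μ) * b = a := by
    rw [hμdef]
    field_simp
    ring
  rw [hpt] at key
  nlinarith [key, mul_nonneg hν0 (sub_nonneg.2 hgab.le)]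

/-- The germ `G̃_α` is L¹-dissipative: for any two pairs of traces in the germ, the
difference of the Kruzhkov entropy fluxes across the interface is bounded below by
`α (|p_l − q_l| − |p_r − q_r|)`. -/
theorem stmt_2
    (f : ℝ → ℝ)
    (hcont : ContinuousOn f (Set.Icc 0 1))
    (hconc : ConcaveOn ℝ (Set.Icc 0 1) f)
    (hf0 : f 0 = 0) (hf1 : f 1 = 0)
    (α : ℝ)
    (pl pr ql qr : ℝ)
    (hpl : pl ∈ Set.Icc (0:ℝ) 1) (hpr : pr ∈ Set.Icc (0:ℝ) 1)
    (hql : ql ∈ Set.Icc (0:ℝ) 1) (hqr : qr ∈ Set.Icc (0:ℝ) 1)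
    (hp : f pr + f pl = α * (pr - pl))
    (hq : f qr + f ql = α * (qr - ql)) :
    Real.sign (pl - ql) * (f ql - f pl) - Real.sign (pr - qr) * (f pr - f qr)
      ≥ α * (|pl - ql| - |pr - qr|) := by
  -- f is nonnegative on [0,1]
  have hfnn : ∀ x ∈ Set.Icc (0:ℝ) 1, 0 ≤ f x := by
    intro x hx
    have h0 : (0:ℝ) ∈ Set.Icc (0:ℝ) 1 := by norm_num
    have h1 : (1:ℝ) ∈ Set.Icc (0:ℝ) 1 := by norm_num
    have := hconc.2 h0 h1 (show (0:ℝ) ≤ 1 - x by linarith [hx.2]) hx.1 (by ring)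
    simp only [smul_eq_mul, mul_zero, mul_one, zero_add] at this
    simpa [hf0, hf1] using this
  -- g := f + α·id is concave
  have hg : ConcaveOn ℝ (Set.Icc (0:ℝ) 1) (fun x => f x + α * x) := by
    refine ⟨convex_Icc _ _, ?_⟩
    intro x hx y hy a b ha hb hab
    have := hconc.2 hx hy ha hb hab
    simp only [smul_eq_mul] at this ⊢
    ring_nf
    ring_nf at this
    nlinarith [this]
  -- h := f − α·id is concave
  have hh : ConcaveOn ℝ (Set.Icc (0:ℝ) 1) (fun x => f x - α * x) := by
    refine ⟨convex_Icc _ _, ?_⟩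
    intro x hx y hy a b ha hb hab
    have := hconc.2 hx hy ha hb hab
    simp only [smul_eq_mul] at this ⊢
    ring_nf
    ring_nf at this
    nlinarith [this]
  -- core lemma: if Ql < Pl and Pr < Qr with both pairs in the germ, then g Ql ≥ g Pl
  have hcore : ∀ Pl Pr Ql Qr : ℝ, Pl ∈ Set.Icc (0:ℝ) 1 → Pr ∈ Set.Icc (0:ℝ) 1 →
      Ql ∈ Set.Icc (0:ℝ) 1 → Qr ∈ Set.Icc (0:ℝ) 1 →
      f Pr + f Pl = α * (Pr - Pl) → f Qr + f Ql = α * (Qr - Ql) →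
      Ql < Pl → Pr < Qr → f Ql + α * Ql ≥ f Pl + α * Pl := by
    intro Pl Pr Ql Qr hPl hPr hQl hQr hP hQ h1 h2
    by_contra hcon
    push_neg at hcon
    have hP' : f Pr + f Pl = α * Pr - α * Pl := by linear_combination hP
    have hQ' : f Qr + f Ql = α * Qr - α * Ql := by linear_combination hQ
    have hh' : f Pr - α * Pr < f Qr - α * Qr := by linarith
    set t := min Ql Pr with htdef
    have ht : t ∈ Set.Icc (0:ℝ) 1 :=
      ⟨le_min hQl.1 hPr.1, le_trans (min_le_left _ _) hQl.2⟩
    have hgt : f t + α * t ≤ f Ql + α * Ql :=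
      qc_aux _ hg ht hPl (min_le_left _ _) h1.le hcon
    have hht : f t - α * t ≤ f Pr - α * Pr :=
      qc_aux _ hh ht hQr (min_le_right _ _) h2.le hh'
    have hft : 0 ≤ f t := hfnn t ht
    linarith
  -- linear identity between left and right "defect"
  have hlin : f pr - f qr - α * (pr - qr) = f ql - f pl - α * (pl - ql) := by
    linear_combination hp - hq
  -- the key claim
  have claim : (Real.sign (pl - ql) - Real.sign (pr - qr)) *
      (f ql - f pl - α * (pl - ql)) ≥ 0 := by
    rcases lt_trichotomy pl ql with h1 | h1 | h1 <;>
      rcases lt_trichotomy pr qr with h2 | h2 | h2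
    · rw [Real.sign_of_neg (by linarith : pl - ql < 0),
        Real.sign_of_neg (by linarith : pr - qr < 0)]
      simp
    · subst h2
      have hG : f ql - f pl - α * (pl - ql) = 0 := by linear_combination -hlin
      rw [hG, mul_zero]
    · rw [Real.sign_of_neg (by linarith : pl - ql < 0),
        Real.sign_of_pos (by linarith : 0 < pr - qr)]
      have := hcore ql qr pl pr hql hqr hpl hpr hq hp h1 h2
      nlinarith [this]
    · subst h1
      simp
    · subst h1
      simp
    · subst h1
      simp
    · rw [Real.sign_of_pos (by linarith : 0 < pl - ql),
        Real.sign_of_neg (by linarith : pr - qr < 0)]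
      have := hcore pl pr ql qr hpl hpr hql hqr hp hq h1 h2
      nlinarith [this]
    · subst h2
      have hG : f ql - f pl - α * (pl - ql) = 0 := by linear_combination -hlin
      rw [hG, mul_zero]
    · rw [Real.sign_of_pos (by linarith : 0 < pl - ql),
        Real.sign_of_pos (by linarith : 0 < pr - qr)]
      simp
  -- sign x * x = |x|
  have hs : ∀ x : ℝ, Real.sign x * x = |x| := by
    intro x
    rcases lt_trichotomy x 0 with h | h | h
    · rw [Real.sign_of_neg h, abs_of_neg h]
      ring
    · simp [h]
    · rw [Real.sign_of_pos h, abs_of_pos h]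
      ring
  rw [← hs (pl - ql), ← hs (pr - qr)]
  have hT : Real.sign (pr - qr) * (f pr - f qr - α * (pr - qr)) =
      Real.sign (pr - qr) * (f ql - f pl - α * (pl - ql)) := by rw [hlin]
  nlinarith [claim, hT]
end

section
/- Let f : [0,1] → ℝ be concave with f(0) = 0, and let α ∈ ℝ. Then the interface flux h₀ is nondecreasing in its first argument and nonincreasing in its second argument: for all a, a', b, b' ∈ [0,1], if a ≤ a' then h₀(a,b,α) ≤ h₀(a',b,α), and if b ≤ b' then h₀(a,b',α) ≤ h₀(a,b,α). -/
/-- Godunov-type interface flux along the interface of slope `α`. -/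
noncomputable def h0flux (f : ℝ → ℝ) (a b α : ℝ) : ℝ :=
  -max (α * b - f b) 0 + max (-α * a - f a) 0

lemma key_mono (f : ℝ → ℝ) (hconc : ConcaveOn ℝ (Set.Icc 0 1) f) (hf0 : f 0 = 0)
    (β a a' : ℝ) (ha : 0 ≤ a) (haa : a ≤ a') (ha' : a' ≤ 1) :
    max (β * a - f a) 0 ≤ max (β * a' - f a') 0 := by
  rcases eq_or_lt_of_le (ha.trans haa) with h0 | h0
  · have : a = 0 := le_antisymm (haa.trans h0.symm.le) ha
    simp [this, ← h0, hf0]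
  · set t := a / a' with ht
    have ht0 : 0 ≤ t := div_nonneg ha h0.le
    have ht1 : t ≤ 1 := div_le_one_of_le₀ haa h0.le
    have hta : t * a' = a := div_mul_cancel₀ a h0.ne'
    have hfa : t * f a' ≤ f a := by
      have := hconc.2 (x := a') ⟨h0.le, ha'⟩ (y := 0) ⟨le_refl 0, zero_le_one⟩
        ht0 (by linarith : (0:ℝ) ≤ 1 - t) (by ring)
      simpa [hf0, hta] using this
    have h1 : β * a - f a ≤ t * (β * a' - f a') := by
      have : t * (β * a') = β * a := by rw [mul_comm β a', ← mul_assoc, hta, mul_comm]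
      nlinarith [this]
    have h2 : t * (β * a' - f a') ≤ max (β * a' - f a') 0 := by
      rcases le_total (β * a' - f a') 0 with h | h
      · exact le_trans (by nlinarith) (le_max_right _ _)
      · exact le_trans (by nlinarith) (le_max_left _ _)
    exact max_le (h1.trans h2) (le_max_right _ _)

/-- The interface flux `h₀` is nondecreasing in its first argument and
nonincreasing in its second argument. -/
theorem stmt_5
    (f : ℝ → ℝ)
    (hconc : ConcaveOn ℝ (Set.Icc 0 1) f)
    (hf0 : f 0 = 0)
    (α : ℝ) :
    ∀ a a' b b' : ℝ, a ∈ Set.Icc (0:ℝ) 1 → a' ∈ Set.Icc (0:ℝ) 1 →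
      b ∈ Set.Icc (0:ℝ) 1 → b' ∈ Set.Icc (0:ℝ) 1 →
      (a ≤ a' → h0flux f a b α ≤ h0flux f a' b α) ∧
      (b ≤ b' → h0flux f a b' α ≤ h0flux f a b α) := by
  intro a a' b b' ha ha' hb hb'
  constructor
  · intro hle
    have := key_mono f hconc hf0 (-α) a a' ha.1 hle ha'.2
    unfold h0flux; linarith
  · intro hle
    have := key_mono f hconc hf0 α b b' hb.1 hle hb'.2
    unfold h0flux; linarith
end

section
/- Let f : [0,1] → ℝ be continuous and Lipschitz on [0,1] with constant L > 0. Then the Godunov fluxes satisfy, for all a, a', b, b' ∈ [0,1], |h^±(a,b) − h^±(a',b')| ≤ L (|a − a'| + |b − b'|). -/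
/-- Godunov numerical flux for the flux `+f`. -/
noncomputable def hplus (f : ℝ → ℝ) (a b : ℝ) : ℝ :=
  if a ≤ b then sInf (f '' Set.Icc a b) else sSup (f '' Set.Icc b a)

/-- Godunov numerical flux for the flux `−f`. -/
noncomputable def hminus (f : ℝ → ℝ) (a b : ℝ) : ℝ :=
  if a ≤ b then sInf ((fun s => -f s) '' Set.Icc a b)
  else sSup ((fun s => -f s) '' Set.Icc b a)

lemma min_attain {f : ℝ → ℝ} {a b : ℝ} (hab : a ≤ b)
    (hc : ContinuousOn f (Set.Icc a b)) :
    ∃ s ∈ Set.Icc a b, sInf (f '' Set.Icc a b) = f s ∧ ∀ x ∈ Set.Icc a b, f s ≤ f x := by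
  obtain ⟨s, hs, hmin⟩ := isCompact_Icc.exists_isMinOn (Set.nonempty_Icc.2 hab) hc
  have hmin' : ∀ x ∈ Set.Icc a b, f s ≤ f x := fun x hx => hmin hx
  refine ⟨s, hs, le_antisymm
    (csInf_le (isCompact_Icc.image_of_continuousOn hc).bddBelow ⟨s, hs, rfl⟩)
    (le_csInf ((Set.nonempty_Icc.2 hab).image f) ?_), hmin'⟩
  rintro _ ⟨x, hx, rfl⟩; exact hmin' x hx

lemma max_attain {f : ℝ → ℝ} {a b : ℝ} (hab : a ≤ b)
    (hc : ContinuousOn f (Set.Icc a b)) :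
    ∃ s ∈ Set.Icc a b, sSup (f '' Set.Icc a b) = f s ∧ ∀ x ∈ Set.Icc a b, f x ≤ f s := by
  obtain ⟨s, hs, hmax⟩ := isCompact_Icc.exists_isMaxOn (Set.nonempty_Icc.2 hab) hc
  have hmax' : ∀ x ∈ Set.Icc a b, f x ≤ f s := fun x hx => hmax hx
  refine ⟨s, hs, le_antisymm
    (csSup_le ((Set.nonempty_Icc.2 hab).image f) ?_)
    (le_csSup (isCompact_Icc.image_of_continuousOn hc).bddAbove ⟨s, hs, rfl⟩), hmax'⟩
  rintro _ ⟨x, hx, rfl⟩; exact hmax' x hx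

section Lip

variable {f : ℝ → ℝ} {L : ℝ}
variable (hcont : ContinuousOn f (Set.Icc 0 1)) (hL : 0 ≤ L)
variable (hlip : ∀ x ∈ Set.Icc (0:ℝ) 1, ∀ y ∈ Set.Icc (0:ℝ) 1, |f x - f y| ≤ L * |x - y|)

include hcont hL hlip

omit hcont hL in
lemma lip_diff : ∀ x ∈ Set.Icc (0:ℝ) 1, ∀ y ∈ Set.Icc (0:ℝ) 1, f x - f y ≤ L * |x - y| :=
  fun x hx y hy => (le_abs_self _).trans (hlip x hx y hy)

/-- monotone and Lipschitz in the first argument -/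
lemma lipA {a₁ a₂ b : ℝ} (ha₁ : a₁ ∈ Set.Icc (0:ℝ) 1) (ha₂ : a₂ ∈ Set.Icc (0:ℝ) 1)
    (hb : b ∈ Set.Icc (0:ℝ) 1) (h12 : a₁ ≤ a₂) :
    hplus f a₁ b ≤ hplus f a₂ b ∧ hplus f a₂ b ≤ hplus f a₁ b + L * (a₂ - a₁) := by
  have lipd := lip_diff hlip
  by_cases h2b : a₂ ≤ b
  · -- both inf
    have h1b : a₁ ≤ b := h12.trans h2b
    have hsub1 : Set.Icc a₁ b ⊆ Set.Icc (0:ℝ) 1 := Set.Icc_subset_Icc ha₁.1 hb.2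
    have hsub2 : Set.Icc a₂ b ⊆ Set.Icc (0:ℝ) 1 := Set.Icc_subset_Icc ha₂.1 hb.2
    have hc1 := hcont.mono hsub1
    have hc2 := hcont.mono hsub2
    rw [hplus, if_pos h1b, hplus, if_pos h2b]
    obtain ⟨s, hs, hseq, hsmin⟩ := min_attain h1b hc1
    constructor
    · exact csInf_le_csInf (isCompact_Icc.image_of_continuousOn hc1).bddBelow
        ((Set.nonempty_Icc.2 h2b).image f) (Set.image_mono (f := f) (Set.Icc_subset_Icc h12 le_rfl))
    · have hs' : max s a₂ ∈ Set.Icc a₂ b := ⟨le_max_right _ _, max_le hs.2 h2b⟩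
      have h1 : sInf (f '' Set.Icc a₂ b) ≤ f (max s a₂) :=
        csInf_le (isCompact_Icc.image_of_continuousOn hc2).bddBelow ⟨_, hs', rfl⟩
      have h2 : f (max s a₂) - f s ≤ L * |max s a₂ - s| :=
        lipd _ (hsub2 hs') _ (hsub1 hs)
      have h3 : |max s a₂ - s| ≤ a₂ - a₁ := by
        rw [abs_of_nonneg (by simp [le_max_left])]
        rcases max_cases s a₂ with ⟨h, _⟩ | ⟨h, _⟩ <;> rw [h] <;> linarith [hs.1]
      nlinarith [hseq, h1, h2, h3]
  · push_neg at h2b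
    by_cases h1b : a₁ ≤ b
    · -- inf vs sup
      have hsub1 : Set.Icc a₁ b ⊆ Set.Icc (0:ℝ) 1 := Set.Icc_subset_Icc ha₁.1 hb.2
      have hsub2 : Set.Icc b a₂ ⊆ Set.Icc (0:ℝ) 1 := Set.Icc_subset_Icc hb.1 ha₂.2
      have hc1 := hcont.mono hsub1
      have hc2 := hcont.mono hsub2
      rw [hplus, if_pos h1b, hplus, if_neg (not_le.2 h2b)]
      obtain ⟨s, hs, hseq, hsmin⟩ := min_attain h1b hc1
      obtain ⟨t, ht, hteq, htmax⟩ := max_attain h2b.le hc2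
      constructor
      · have h1 : sInf (f '' Set.Icc a₁ b) ≤ f b :=
          csInf_le (isCompact_Icc.image_of_continuousOn hc1).bddBelow
            ⟨b, ⟨h1b, le_rfl⟩, rfl⟩
        have h2 : f b ≤ sSup (f '' Set.Icc b a₂) :=
          le_csSup (isCompact_Icc.image_of_continuousOn hc2).bddAbove
            ⟨b, ⟨le_rfl, h2b.le⟩, rfl⟩
        linarith
      · have h2 : f t - f s ≤ L * |t - s| := lipd _ (hsub2 ht) _ (hsub1 hs)
        have h3 : |t - s| ≤ a₂ - a₁ := by
          rw [abs_of_nonneg (by linarith [ht.1, hs.2])]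
          linarith [ht.2, hs.1]
        nlinarith [hseq, hteq, h2, h3]
    · -- both sup
      push_neg at h1b
      have hsub1 : Set.Icc b a₁ ⊆ Set.Icc (0:ℝ) 1 := Set.Icc_subset_Icc hb.1 ha₁.2
      have hsub2 : Set.Icc b a₂ ⊆ Set.Icc (0:ℝ) 1 := Set.Icc_subset_Icc hb.1 ha₂.2
      have hc1 := hcont.mono hsub1
      have hc2 := hcont.mono hsub2
      rw [hplus, if_neg (not_le.2 h1b), hplus, if_neg (not_le.2 h2b)]
      obtain ⟨t, ht, hteq, htmax⟩ := max_attain (le_of_lt h2b) hc2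
      constructor
      · exact csSup_le_csSup (isCompact_Icc.image_of_continuousOn hc2).bddAbove
          ((Set.nonempty_Icc.2 h1b.le).image f) (Set.image_mono (f := f) (Set.Icc_subset_Icc le_rfl h12))
      · have ht' : min t a₁ ∈ Set.Icc b a₁ := ⟨le_min ht.1 h1b.le, min_le_right _ _⟩
        have h1 : f (min t a₁) ≤ sSup (f '' Set.Icc b a₁) :=
          le_csSup (isCompact_Icc.image_of_continuousOn hc1).bddAbove ⟨_, ht', rfl⟩
        have h2 : f t - f (min t a₁) ≤ L * |t - min t a₁| :=
          lipd _ (hsub2 ht) _ (hsub1 ht')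
        have h3 : |t - min t a₁| ≤ a₂ - a₁ := by
          rw [abs_of_nonneg (by simp [min_le_left])]
          rcases min_cases t a₁ with ⟨h, _⟩ | ⟨h, _⟩ <;> rw [h] <;> linarith [ht.2]
        nlinarith [hteq, h1, h2, h3]

/-- antitone and Lipschitz in the second argument -/
lemma lipB {a b₁ b₂ : ℝ} (ha : a ∈ Set.Icc (0:ℝ) 1) (hb₁ : b₁ ∈ Set.Icc (0:ℝ) 1)
    (hb₂ : b₂ ∈ Set.Icc (0:ℝ) 1) (h12 : b₁ ≤ b₂) :
    hplus f a b₂ ≤ hplus f a b₁ ∧ hplus f a b₁ ≤ hplus f a b₂ + L * (b₂ - b₁) := by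
  have lipd := lip_diff hlip
  by_cases h1a : a ≤ b₁
  · -- both inf
    have h2a : a ≤ b₂ := h1a.trans h12
    have hsub1 : Set.Icc a b₁ ⊆ Set.Icc (0:ℝ) 1 := Set.Icc_subset_Icc ha.1 hb₁.2
    have hsub2 : Set.Icc a b₂ ⊆ Set.Icc (0:ℝ) 1 := Set.Icc_subset_Icc ha.1 hb₂.2
    have hc1 := hcont.mono hsub1
    have hc2 := hcont.mono hsub2
    rw [hplus, if_pos h2a, hplus, if_pos h1a]
    obtain ⟨s, hs, hseq, hsmin⟩ := min_attain h2a hc2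
    constructor
    · exact csInf_le_csInf (isCompact_Icc.image_of_continuousOn hc2).bddBelow
        ((Set.nonempty_Icc.2 h1a).image f) (Set.image_mono (f := f) (Set.Icc_subset_Icc le_rfl h12))
    · have hs' : min s b₁ ∈ Set.Icc a b₁ := ⟨le_min hs.1 h1a, min_le_right _ _⟩
      have h1 : sInf (f '' Set.Icc a b₁) ≤ f (min s b₁) :=
        csInf_le (isCompact_Icc.image_of_continuousOn hc1).bddBelow ⟨_, hs', rfl⟩
      have h2 : f (min s b₁) - f s ≤ L * |min s b₁ - s| := lipd _ (hsub1 hs') _ (hsub2 hs)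
      have h3 : |min s b₁ - s| ≤ b₂ - b₁ := by
        rw [abs_of_nonpos (by simp [min_le_left]), neg_sub]
        rcases min_cases s b₁ with ⟨h, _⟩ | ⟨h, _⟩ <;> rw [h] <;> linarith [hs.2]
      nlinarith [hseq, h1, h2, h3]
  · push_neg at h1a
    by_cases h2a : a ≤ b₂
    · -- sup vs inf
      have hsub1 : Set.Icc b₁ a ⊆ Set.Icc (0:ℝ) 1 := Set.Icc_subset_Icc hb₁.1 ha.2
      have hsub2 : Set.Icc a b₂ ⊆ Set.Icc (0:ℝ) 1 := Set.Icc_subset_Icc ha.1 hb₂.2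
      have hc1 := hcont.mono hsub1
      have hc2 := hcont.mono hsub2
      rw [hplus, if_pos h2a, hplus, if_neg (not_le.2 h1a)]
      obtain ⟨t, ht, hteq, htmax⟩ := max_attain h1a.le hc1
      obtain ⟨s, hs, hseq, hsmin⟩ := min_attain h2a hc2
      constructor
      · have h1 : sInf (f '' Set.Icc a b₂) ≤ f a :=
          csInf_le (isCompact_Icc.image_of_continuousOn hc2).bddBelow ⟨a, ⟨le_rfl, h2a⟩, rfl⟩
        have h2 : f a ≤ sSup (f '' Set.Icc b₁ a) :=
          le_csSup (isCompact_Icc.image_of_continuousOn hc1).bddAbove ⟨a, ⟨h1a.le, le_rfl⟩, rfl⟩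
        linarith
      · have h2 : f t - f s ≤ L * |t - s| := lipd _ (hsub1 ht) _ (hsub2 hs)
        have h3 : |t - s| ≤ b₂ - b₁ := by
          rw [abs_of_nonpos (by linarith [ht.2, hs.1]), neg_sub]
          linarith [ht.1, hs.2]
        nlinarith [hseq, hteq, h2, h3]
    · -- both sup
      push_neg at h2a
      have hsub1 : Set.Icc b₁ a ⊆ Set.Icc (0:ℝ) 1 := Set.Icc_subset_Icc hb₁.1 ha.2
      have hsub2 : Set.Icc b₂ a ⊆ Set.Icc (0:ℝ) 1 := Set.Icc_subset_Icc hb₂.1 ha.2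
      have hc1 := hcont.mono hsub1
      have hc2 := hcont.mono hsub2
      rw [hplus, if_neg (not_le.2 h2a), hplus, if_neg (not_le.2 h1a)]
      obtain ⟨t, ht, hteq, htmax⟩ := max_attain h1a.le hc1
      constructor
      · exact csSup_le_csSup (isCompact_Icc.image_of_continuousOn hc1).bddAbove
          ((Set.nonempty_Icc.2 h2a.le).image f) (Set.image_mono (f := f) (Set.Icc_subset_Icc h12 le_rfl))
      · have ht' : max t b₂ ∈ Set.Icc b₂ a := ⟨le_max_right _ _, max_le ht.2 h2a.le⟩
        have h1 : f (max t b₂) ≤ sSup (f '' Set.Icc b₂ a) :=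
          le_csSup (isCompact_Icc.image_of_continuousOn hc2).bddAbove ⟨_, ht', rfl⟩
        have h2 : f t - f (max t b₂) ≤ L * |t - max t b₂| := lipd _ (hsub1 ht) _ (hsub2 ht')
        have h3 : |t - max t b₂| ≤ b₂ - b₁ := by
          rw [abs_of_nonpos (by simp [le_max_left]), neg_sub]
          rcases max_cases t b₂ with ⟨h, _⟩ | ⟨h, _⟩ <;> rw [h] <;> linarith [ht.1]
        nlinarith [hteq, h1, h2, h3]

lemma hplus_key : ∀ a a' b b' : ℝ, a ∈ Set.Icc (0:ℝ) 1 → a' ∈ Set.Icc (0:ℝ) 1 →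
    b ∈ Set.Icc (0:ℝ) 1 → b' ∈ Set.Icc (0:ℝ) 1 →
    |hplus f a b - hplus f a' b'| ≤ L * (|a - a'| + |b - b'|) := by
  intro a a' b b' ha ha' hb hb'
  have stepA : ∀ x y z : ℝ, x ∈ Set.Icc (0:ℝ) 1 → y ∈ Set.Icc (0:ℝ) 1 → z ∈ Set.Icc (0:ℝ) 1 →
      |hplus f x z - hplus f y z| ≤ L * |x - y| := by
    intro x y z hx hy hz
    rcases le_total x y with h | h
    · obtain ⟨m1, m2⟩ := lipA hcont hL hlip hx hy hz h
      rw [abs_of_nonpos (by linarith), abs_of_nonpos (by linarith)]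
      linarith
    · obtain ⟨m1, m2⟩ := lipA hcont hL hlip hy hx hz h
      rw [abs_of_nonneg (by linarith), abs_of_nonneg (by linarith)]
      linarith
  have stepB : ∀ x y z : ℝ, x ∈ Set.Icc (0:ℝ) 1 → y ∈ Set.Icc (0:ℝ) 1 → z ∈ Set.Icc (0:ℝ) 1 →
      |hplus f z x - hplus f z y| ≤ L * |x - y| := by
    intro x y z hx hy hz
    rcases le_total x y with h | h
    · obtain ⟨m1, m2⟩ := lipB hcont hL hlip hz hx hy h
      rw [abs_of_nonneg (by linarith), abs_of_nonpos (by linarith)]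
      linarith
    · obtain ⟨m1, m2⟩ := lipB hcont hL hlip hz hy hx h
      rw [abs_of_nonpos (by linarith), abs_of_nonneg (by linarith)]
      linarith
  calc |hplus f a b - hplus f a' b'|
      ≤ |hplus f a b - hplus f a' b| + |hplus f a' b - hplus f a' b'| := abs_sub_le _ _ _
    _ ≤ L * |a - a'| + L * |b - b'| := add_le_add (stepA a a' b ha ha' hb) (stepB b b' a' hb hb' ha')
    _ = L * (|a - a'| + |b - b'|) := by ring

end Lip

/-- Lipschitz continuity of the Godunov fluxes `h⁺` and `h⁻` with constant `L`. -/
theorem stmt_8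
    (f : ℝ → ℝ)
    (hcont : ContinuousOn f (Set.Icc 0 1))
    (L : ℝ) (hL : 0 < L)
    (hlip : ∀ x ∈ Set.Icc (0:ℝ) 1, ∀ y ∈ Set.Icc (0:ℝ) 1, |f x - f y| ≤ L * |x - y|) :
    ∀ a a' b b' : ℝ, a ∈ Set.Icc (0:ℝ) 1 → a' ∈ Set.Icc (0:ℝ) 1 →
      b ∈ Set.Icc (0:ℝ) 1 → b' ∈ Set.Icc (0:ℝ) 1 →
      |hplus f a b - hplus f a' b'| ≤ L * (|a - a'| + |b - b'|) ∧
      |hminus f a b - hminus f a' b'| ≤ L * (|a - a'| + |b - b'|) := by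
  intro a a' b b' ha ha' hb hb'
  have hminus_eq : ∀ x y : ℝ, hminus f x y = hplus (fun s => -f s) x y := fun x y => rfl
  have hcont' : ContinuousOn (fun s => -f s) (Set.Icc 0 1) := hcont.neg
  have hlip' : ∀ x ∈ Set.Icc (0:ℝ) 1, ∀ y ∈ Set.Icc (0:ℝ) 1,
      |(fun s => -f s) x - (fun s => -f s) y| ≤ L * |x - y| := by
    intro x hx y hy
    have heq : (fun s => -f s) x - (fun s => -f s) y = -(f x - f y) := by ring
    rw [heq, abs_neg]
    exact hlip x hx y hy
  refine ⟨hplus_key hcont hL.le hlip a a' b b' ha ha' hb hb', ?_⟩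
  rw [hminus_eq, hminus_eq]
  exact hplus_key hcont' hL.le hlip' a a' b b' ha ha' hb hb'
end

section
/- Let f : [0,1] → ℝ be continuous and Lipschitz on [0,1] with constant L > 0, and let k, h > 0 satisfy the CFL condition k·L ≤ h/2. Then the maps (a,b,c) ↦ H^+(a,b,c) := b − (k/h)(h⁺(b,c) − h⁺(a,b)) and (a,b,c) ↦ H^−(a,b,c) := b − (k/h)(h⁻(b,c) − h⁻(a,b)) are nondecreasing in each of the three arguments a, b, c ∈ [0,1]. -/
/-- Godunov marching operator for the flux `+f`. -/
noncomputable def Hplus (f : ℝ → ℝ) (k h a b c : ℝ) : ℝ :=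
  b - (k / h) * (hplus f b c - hplus f a b)

/-- Godunov marching operator for the flux `−f`. -/
noncomputable def Hminus (f : ℝ → ℝ) (k h a b c : ℝ) : ℝ :=
  b - (k / h) * (hminus f b c - hminus f a b)

open Set

lemma aux_min (g : ℝ → ℝ) (hg : ContinuousOn g (Icc 0 1))
    {s t : ℝ} (hs : s ∈ Icc (0:ℝ) 1) (ht : t ∈ Icc (0:ℝ) 1) (hst : s ≤ t) :
    ∃ x ∈ Icc s t, sInf (g '' Icc s t) = g x ∧ ∀ y ∈ Icc s t, g x ≤ g y := by
  have hc : ContinuousOn g (Icc s t) := hg.mono (Icc_subset_Icc hs.1 ht.2)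
  obtain ⟨x, hx, hmin⟩ := isCompact_Icc.exists_isMinOn ⟨s, left_mem_Icc.2 hst⟩ hc
  refine ⟨x, hx, ?_, fun y hy => hmin hy⟩
  refine IsLeast.csInf_eq ⟨⟨x, hx, rfl⟩, ?_⟩
  rintro _ ⟨y, hy, rfl⟩
  exact hmin hy

lemma aux_max (g : ℝ → ℝ) (hg : ContinuousOn g (Icc 0 1))
    {s t : ℝ} (hs : s ∈ Icc (0:ℝ) 1) (ht : t ∈ Icc (0:ℝ) 1) (hst : s ≤ t) :
    ∃ x ∈ Icc s t, sSup (g '' Icc s t) = g x ∧ ∀ y ∈ Icc s t, g y ≤ g x := by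
  have hc : ContinuousOn g (Icc s t) := hg.mono (Icc_subset_Icc hs.1 ht.2)
  obtain ⟨x, hx, hmax⟩ := isCompact_Icc.exists_isMaxOn ⟨s, left_mem_Icc.2 hst⟩ hc
  refine ⟨x, hx, ?_, fun y hy => hmax hy⟩
  refine IsGreatest.csSup_eq ⟨⟨x, hx, rfl⟩, ?_⟩
  rintro _ ⟨y, hy, rfl⟩
  exact hmax hy

lemma aux_bddBelow (g : ℝ → ℝ) (hg : ContinuousOn g (Icc 0 1))
    {s t : ℝ} (hs : s ∈ Icc (0:ℝ) 1) (ht : t ∈ Icc (0:ℝ) 1) :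
    BddBelow (g '' Icc s t) :=
  ((isCompact_Icc).image_of_continuousOn (hg.mono (Icc_subset_Icc hs.1 ht.2))).bddBelow

lemma aux_bddAbove (g : ℝ → ℝ) (hg : ContinuousOn g (Icc 0 1))
    {s t : ℝ} (hs : s ∈ Icc (0:ℝ) 1) (ht : t ∈ Icc (0:ℝ) 1) :
    BddAbove (g '' Icc s t) :=
  ((isCompact_Icc).image_of_continuousOn (hg.mono (Icc_subset_Icc hs.1 ht.2))).bddAbove

lemma lip_le (g : ℝ → ℝ) {L : ℝ}
    (hlip : ∀ x ∈ Icc (0:ℝ) 1, ∀ y ∈ Icc (0:ℝ) 1, |g x - g y| ≤ L * |x - y|)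
    {x y : ℝ} (hx : x ∈ Icc (0:ℝ) 1) (hy : y ∈ Icc (0:ℝ) 1) :
    g x - g y ≤ L * |x - y| :=
  le_trans (le_abs_self _) (hlip x hx y hy)

lemma mem01 {s t x : ℝ} (hs : s ∈ Icc (0:ℝ) 1) (ht : t ∈ Icc (0:ℝ) 1)
    (hx : x ∈ Icc s t) : x ∈ Icc (0:ℝ) 1 :=
  ⟨le_trans hs.1 hx.1, le_trans hx.2 ht.2⟩

lemma hplus_mono_fst (g : ℝ → ℝ) (hg : ContinuousOn g (Icc 0 1))
    {a a' b : ℝ} (ha : a ∈ Icc (0:ℝ) 1) (ha' : a' ∈ Icc (0:ℝ) 1) (hb : b ∈ Icc (0:ℝ) 1)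
    (haa : a ≤ a') : hplus g a b ≤ hplus g a' b := by
  rcases le_or_gt a' b with h1 | h1
  · have h2 : a ≤ b := le_trans haa h1
    rw [hplus, hplus, if_pos h2, if_pos h1]
    exact csInf_le_csInf (aux_bddBelow g hg ha hb)
      ⟨g a', ⟨a', left_mem_Icc.2 h1, rfl⟩⟩
      (image_mono (Icc_subset_Icc haa le_rfl))
  · rcases le_or_gt a b with h2 | h2
    · rw [hplus, hplus, if_pos h2, if_neg (not_le.2 h1)]
      exact le_trans (csInf_le (aux_bddBelow g hg ha hb) ⟨b, right_mem_Icc.2 h2, rfl⟩)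
        (le_csSup (aux_bddAbove g hg hb ha') ⟨b, left_mem_Icc.2 h1.le, rfl⟩)
    · rw [hplus, hplus, if_neg (not_le.2 h2), if_neg (not_le.2 (lt_of_lt_of_le h2 haa))]
      exact csSup_le_csSup (aux_bddAbove g hg hb ha')
        ⟨g b, ⟨b, left_mem_Icc.2 h2.le, rfl⟩⟩
        (image_mono (Icc_subset_Icc le_rfl haa))

lemma hplus_anti_snd (g : ℝ → ℝ) (hg : ContinuousOn g (Icc 0 1))
    {a b b' : ℝ} (ha : a ∈ Icc (0:ℝ) 1) (hb : b ∈ Icc (0:ℝ) 1) (hb' : b' ∈ Icc (0:ℝ) 1)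
    (hbb : b ≤ b') : hplus g a b' ≤ hplus g a b := by
  rcases le_or_gt a b with h1 | h1
  · have h2 : a ≤ b' := le_trans h1 hbb
    rw [hplus, hplus, if_pos h1, if_pos h2]
    exact csInf_le_csInf (aux_bddBelow g hg ha hb')
      ⟨g b, ⟨b, right_mem_Icc.2 h1, rfl⟩⟩
      (image_mono (Icc_subset_Icc le_rfl hbb))
  · rcases le_or_gt a b' with h2 | h2
    · rw [hplus, hplus, if_pos h2, if_neg (not_le.2 h1)]
      exact le_trans (csInf_le (aux_bddBelow g hg ha hb') ⟨a, left_mem_Icc.2 h2, rfl⟩)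
        (le_csSup (aux_bddAbove g hg hb ha) ⟨a, right_mem_Icc.2 h1.le, rfl⟩)
    · rw [hplus, hplus, if_neg (not_le.2 h2), if_neg (not_le.2 h1)]
      exact csSup_le_csSup (aux_bddAbove g hg hb ha)
        ⟨g a, ⟨a, right_mem_Icc.2 h2.le, rfl⟩⟩
        (image_mono (Icc_subset_Icc hbb le_rfl))

lemma hplus_lip_fst (g : ℝ → ℝ) (hg : ContinuousOn g (Icc 0 1)) {L : ℝ} (hL0 : 0 ≤ L)
    (hlip : ∀ x ∈ Icc (0:ℝ) 1, ∀ y ∈ Icc (0:ℝ) 1, |g x - g y| ≤ L * |x - y|)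
    {a a' b : ℝ} (ha : a ∈ Icc (0:ℝ) 1) (ha' : a' ∈ Icc (0:ℝ) 1) (hb : b ∈ Icc (0:ℝ) 1)
    (haa : a ≤ a') : hplus g a' b - hplus g a b ≤ L * (a' - a) := by
  rcases le_or_gt a' b with h1 | h1
  · have h2 : a ≤ b := le_trans haa h1
    rw [hplus, hplus, if_pos h2, if_pos h1]
    obtain ⟨x, hx, hxeq, _⟩ := aux_min g hg ha hb h2
    rw [hxeq]
    have hx01 : x ∈ Icc (0:ℝ) 1 := mem01 ha hb hx
    rcases le_or_gt a' x with h3 | h3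
    · have h4 : sInf (g '' Icc a' b) ≤ g x :=
        csInf_le (aux_bddBelow g hg ha' hb) ⟨x, ⟨h3, hx.2⟩, rfl⟩
      have : 0 ≤ L * (a' - a) := mul_nonneg hL0 (by linarith)
      linarith
    · have h4 : sInf (g '' Icc a' b) ≤ g a' :=
        csInf_le (aux_bddBelow g hg ha' hb) ⟨a', left_mem_Icc.2 h1, rfl⟩
      have h5 := lip_le g hlip ha' hx01
      rw [abs_of_nonneg (by linarith)] at h5
      have h6 : L * (a' - x) ≤ L * (a' - a) :=
        mul_le_mul_of_nonneg_left (by linarith [hx.1]) hL0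
      linarith
  · rcases le_or_gt a b with h2 | h2
    · rw [hplus, hplus, if_pos h2, if_neg (not_le.2 h1)]
      obtain ⟨x, hx, hxeq, _⟩ := aux_min g hg ha hb h2
      obtain ⟨y, hy, hyeq, _⟩ := aux_max g hg hb ha' h1.le
      rw [hxeq, hyeq]
      have hx01 : x ∈ Icc (0:ℝ) 1 := mem01 ha hb hx
      have hy01 : y ∈ Icc (0:ℝ) 1 := mem01 hb ha' hy
      have h5 := lip_le g hlip hy01 hx01
      rw [abs_of_nonneg (by linarith [hx.2, hy.1])] at h5
      have h6 : L * (y - x) ≤ L * (a' - a) :=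
        mul_le_mul_of_nonneg_left (by linarith [hx.1, hy.2]) hL0
      linarith
    · have h2' : b < a' := lt_of_lt_of_le h2 haa
      rw [hplus, hplus, if_neg (not_le.2 h2), if_neg (not_le.2 h2')]
      obtain ⟨y, hy, hyeq, _⟩ := aux_max g hg hb ha' h2'.le
      rw [hyeq]
      have hy01 : y ∈ Icc (0:ℝ) 1 := mem01 hb ha' hy
      rcases le_or_gt y a with h3 | h3
      · have h4 : g y ≤ sSup (g '' Icc b a) :=
          le_csSup (aux_bddAbove g hg hb ha) ⟨y, ⟨hy.1, h3⟩, rfl⟩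
        have : 0 ≤ L * (a' - a) := mul_nonneg hL0 (by linarith)
        linarith
      · have h4 : g a ≤ sSup (g '' Icc b a) :=
          le_csSup (aux_bddAbove g hg hb ha) ⟨a, right_mem_Icc.2 h2.le, rfl⟩
        have h5 := lip_le g hlip hy01 ha
        rw [abs_of_nonneg (by linarith)] at h5
        have h6 : L * (y - a) ≤ L * (a' - a) :=
          mul_le_mul_of_nonneg_left (by linarith [hy.2]) hL0
        linarith

lemma hplus_lip_snd (g : ℝ → ℝ) (hg : ContinuousOn g (Icc 0 1)) {L : ℝ} (hL0 : 0 ≤ L)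
    (hlip : ∀ x ∈ Icc (0:ℝ) 1, ∀ y ∈ Icc (0:ℝ) 1, |g x - g y| ≤ L * |x - y|)
    {a b b' : ℝ} (ha : a ∈ Icc (0:ℝ) 1) (hb : b ∈ Icc (0:ℝ) 1) (hb' : b' ∈ Icc (0:ℝ) 1)
    (hbb : b ≤ b') : hplus g a b - hplus g a b' ≤ L * (b' - b) := by
  rcases le_or_gt a b with h1 | h1
  · have h2 : a ≤ b' := le_trans h1 hbb
    rw [hplus, hplus, if_pos h1, if_pos h2]
    obtain ⟨x, hx, hxeq, _⟩ := aux_min g hg ha hb' h2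
    rw [hxeq]
    have hx01 : x ∈ Icc (0:ℝ) 1 := mem01 ha hb' hx
    rcases le_or_gt x b with h3 | h3
    · have h4 : sInf (g '' Icc a b) ≤ g x :=
        csInf_le (aux_bddBelow g hg ha hb) ⟨x, ⟨hx.1, h3⟩, rfl⟩
      have : 0 ≤ L * (b' - b) := mul_nonneg hL0 (by linarith)
      linarith
    · have h4 : sInf (g '' Icc a b) ≤ g b :=
        csInf_le (aux_bddBelow g hg ha hb) ⟨b, right_mem_Icc.2 h1, rfl⟩
      have h5 := lip_le g hlip hb hx01
      rw [abs_of_nonpos (by linarith), neg_sub] at h5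
      have h6 : L * (x - b) ≤ L * (b' - b) :=
        mul_le_mul_of_nonneg_left (by linarith [hx.2]) hL0
      linarith
  · rcases le_or_gt a b' with h2 | h2
    · rw [hplus, hplus, if_neg (not_le.2 h1), if_pos h2]
      obtain ⟨y, hy, hyeq, _⟩ := aux_max g hg hb ha h1.le
      obtain ⟨x, hx, hxeq, _⟩ := aux_min g hg ha hb' h2
      rw [hxeq, hyeq]
      have hx01 : x ∈ Icc (0:ℝ) 1 := mem01 ha hb' hx
      have hy01 : y ∈ Icc (0:ℝ) 1 := mem01 hb ha hy
      have h5 := lip_le g hlip hy01 hx01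
      rw [abs_of_nonpos (by linarith [hy.2, hx.1]), neg_sub] at h5
      have h6 : L * (x - y) ≤ L * (b' - b) :=
        mul_le_mul_of_nonneg_left (by linarith [hy.1, hx.2]) hL0
      linarith
    · rw [hplus, hplus, if_neg (not_le.2 h1), if_neg (not_le.2 h2)]
      obtain ⟨y, hy, hyeq, _⟩ := aux_max g hg hb ha h1.le
      rw [hyeq]
      have hy01 : y ∈ Icc (0:ℝ) 1 := mem01 hb ha hy
      rcases le_or_gt b' y with h3 | h3
      · have h4 : g y ≤ sSup (g '' Icc b' a) :=
          le_csSup (aux_bddAbove g hg hb' ha) ⟨y, ⟨h3, hy.2⟩, rfl⟩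
        have : 0 ≤ L * (b' - b) := mul_nonneg hL0 (by linarith)
        linarith
      · have h4 : g b' ≤ sSup (g '' Icc b' a) :=
          le_csSup (aux_bddAbove g hg hb' ha) ⟨b', left_mem_Icc.2 h2.le, rfl⟩
        have h5 := lip_le g hlip hy01 hb'
        rw [abs_of_nonpos (by linarith), neg_sub] at h5
        have h6 : L * (b' - y) ≤ L * (b' - b) :=
          mul_le_mul_of_nonneg_left (by linarith [hy.1]) hL0
        linarith

lemma Hplus_mono (g : ℝ → ℝ) (hg : ContinuousOn g (Icc 0 1)) {L : ℝ} (hL0 : 0 ≤ L)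
    (hlip : ∀ x ∈ Icc (0:ℝ) 1, ∀ y ∈ Icc (0:ℝ) 1, |g x - g y| ≤ L * |x - y|)
    {k h : ℝ} (hk : 0 < k) (hh : 0 < h) (hCFL : k * L ≤ h / 2)
    {a a' b b' c c' : ℝ}
    (ha : a ∈ Icc (0:ℝ) 1) (ha' : a' ∈ Icc (0:ℝ) 1)
    (hb : b ∈ Icc (0:ℝ) 1) (hb' : b' ∈ Icc (0:ℝ) 1)
    (hc : c ∈ Icc (0:ℝ) 1) (hc' : c' ∈ Icc (0:ℝ) 1)
    (haa : a ≤ a') (hbb : b ≤ b') (hcc : c ≤ c') :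
    Hplus g k h a b c ≤ Hplus g k h a' b' c' := by
  have hlam : 0 ≤ k / h := le_of_lt (div_pos hk hh)
  have hlamL : (k / h) * (2 * L) ≤ 1 := by
    rw [div_mul_eq_mul_div, div_le_one hh]
    nlinarith
  have s1 : hplus g a b ≤ hplus g a' b := hplus_mono_fst g hg ha ha' hb haa
  have s2 : hplus g b c' ≤ hplus g b c := hplus_anti_snd g hg hb hc hc' hcc
  have s3 : hplus g b' c' - hplus g b c' ≤ L * (b' - b) :=
    hplus_lip_fst g hg hL0 hlip hb hb' hc' hbb
  have s4 : hplus g a' b - hplus g a' b' ≤ L * (b' - b) :=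
    hplus_lip_snd g hg hL0 hlip ha' hb hb' hbb
  have hD : (hplus g b' c' - hplus g a' b') - (hplus g b c - hplus g a b)
      ≤ 2 * L * (b' - b) := by linarith
  have h6 : (k / h) * ((hplus g b' c' - hplus g a' b') - (hplus g b c - hplus g a b))
      ≤ (k / h) * (2 * L * (b' - b)) := mul_le_mul_of_nonneg_left hD hlam
  have h7 : (k / h) * (2 * L * (b' - b)) ≤ b' - b := by
    have := mul_le_mul_of_nonneg_right hlamL (sub_nonneg.2 hbb)
    nlinarith
  simp only [Hplus]
  linarith

/-- Under the CFL condition `kL ≤ h/2`, the marching operators `H^±` are nondecreasing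
in each of their three arguments. -/
theorem stmt_11
    (f : ℝ → ℝ)
    (hcont : ContinuousOn f (Set.Icc 0 1))
    (L : ℝ) (hL : 0 < L)
    (hlip : ∀ x ∈ Set.Icc (0:ℝ) 1, ∀ y ∈ Set.Icc (0:ℝ) 1, |f x - f y| ≤ L * |x - y|)
    (k h : ℝ) (hk : 0 < k) (hh : 0 < h)
    (hCFL : k * L ≤ h / 2) :
    ∀ a a' b b' c c' : ℝ,
      a ∈ Set.Icc (0:ℝ) 1 → a' ∈ Set.Icc (0:ℝ) 1 →
      b ∈ Set.Icc (0:ℝ) 1 → b' ∈ Set.Icc (0:ℝ) 1 →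
      c ∈ Set.Icc (0:ℝ) 1 → c' ∈ Set.Icc (0:ℝ) 1 →
      a ≤ a' → b ≤ b' → c ≤ c' →
      Hplus f k h a b c ≤ Hplus f k h a' b' c' ∧
      Hminus f k h a b c ≤ Hminus f k h a' b' c' := by
  intro a a' b b' c c' ha ha' hb hb' hc hc' haa hbb hcc
  constructor
  · exact Hplus_mono f hcont hL.le hlip hk hh hCFL ha ha' hb hb' hc hc' haa hbb hcc
  · have hg : ContinuousOn (fun s => -f s) (Icc (0:ℝ) 1) := hcont.neg
    have hlip' : ∀ x ∈ Icc (0:ℝ) 1, ∀ y ∈ Icc (0:ℝ) 1,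
        |(fun s => -f s) x - (fun s => -f s) y| ≤ L * |x - y| := by
      intro x hx y hy
      have := hlip x hx y hy
      simp only []
      rw [show (-f x) - (-f y) = -(f x - f y) by ring, abs_neg]
      exact this
    exact Hplus_mono (fun s => -f s) hg hL.le hlip' hk hh hCFL ha ha' hb hb' hc hc' haa hbb hcc
end

section
/- Let f : [0,1] → ℝ be continuous, concave, Lipschitz with constant L > 0, with f(0) = 0 = f(1). Let k, h > 0, α ∈ ℝ and Δ_L, Δ_R satisfy the CFL condition k·max(L, |α|) ≤ h/2 and h ≤ Δ_L ≤ 2h, h ≤ Δ_R ≤ 2h. Then the interface marching operators H^{AB}_L(a,b,c) := (Δ_L b − k(h₀(b,c,α) − h⁻(a,b)))/(Δ_L + αk) and H^{AC}_R(a,b,c) := (Δ_R b − k(h⁺(b,c) − h₀(a,b,α)))/(Δ_R − αk) are nondecreasing in each of the three arguments a, b, c ∈ [0,1]. -/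
/-- Left interface marching operator (Cases A, B). -/
noncomputable def HABL (f : ℝ → ℝ) (α k ΔL a b c : ℝ) : ℝ :=
  (ΔL * b - k * (h0flux f b c α - hminus f a b)) / (ΔL + α * k)

/-- Right interface marching operator (Cases A, C). -/
noncomputable def HACR (f : ℝ → ℝ) (α k ΔR a b c : ℝ) : ℝ :=
  (ΔR * b - k * (hplus f b c - h0flux f a b α)) / (ΔR - α * k)

set_option maxHeartbeats 1000000

/-- Under the CFL condition, the interface marching operators `H^{AB}_L` and `H^{AC}_R`
are nondecreasing in each of their three arguments. -/
theorem stmt_12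
    (f : ℝ → ℝ)
    (hcont : ContinuousOn f (Set.Icc 0 1))
    (hconc : ConcaveOn ℝ (Set.Icc 0 1) f)
    (L : ℝ) (hL : 0 < L)
    (hlip : ∀ x ∈ Set.Icc (0:ℝ) 1, ∀ y ∈ Set.Icc (0:ℝ) 1, |f x - f y| ≤ L * |x - y|)
    (hf0 : f 0 = 0) (hf1 : f 1 = 0)
    (k h α ΔL ΔR : ℝ) (hk : 0 < k) (hh : 0 < h)
    (hCFL : k * max L |α| ≤ h / 2)
    (hΔL : h ≤ ΔL ∧ ΔL ≤ 2 * h) (hΔR : h ≤ ΔR ∧ ΔR ≤ 2 * h) :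
    ∀ a a' b b' c c' : ℝ,
      a ∈ Set.Icc (0:ℝ) 1 → a' ∈ Set.Icc (0:ℝ) 1 →
      b ∈ Set.Icc (0:ℝ) 1 → b' ∈ Set.Icc (0:ℝ) 1 →
      c ∈ Set.Icc (0:ℝ) 1 → c' ∈ Set.Icc (0:ℝ) 1 →
      a ≤ a' → b ≤ b' → c ≤ c' →
      HABL f α k ΔL a b c ≤ HABL f α k ΔL a' b' c' ∧
      HACR f α k ΔR a b c ≤ HACR f α k ΔR a' b' c' := by
  obtain ⟨θ, hθmem, hθmax⟩ := isCompact_Icc.exists_isMaxOn (Set.nonempty_Icc.mpr zero_le_one) hcont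
  have hθ0 : (0:ℝ) ≤ θ := hθmem.1
  have hθ1 : θ ≤ 1 := hθmem.2
  have hQ : QuasiconcaveOn ℝ (Set.Icc 0 1) f := hconc.quasiconcaveOn
  -- minimum of a concave function on a subinterval is at the endpoints
  have emin : ∀ p q s : ℝ, 0 ≤ p → p ≤ s → s ≤ q → q ≤ 1 → min (f p) (f q) ≤ f s := by
    intro p q s hp hps hsq hq1
    have hps' : p ≤ q := hps.trans hsq
    have hmem : s ∈ {x ∈ Set.Icc (0:ℝ) 1 | min (f p) (f q) ≤ f x} := by
      apply (hQ (min (f p) (f q))).segment_subset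
        ⟨⟨hp, by linarith⟩, min_le_left _ _⟩ ⟨⟨by linarith, hq1⟩, min_le_right _ _⟩
      rw [segment_eq_Icc hps']
      exact ⟨hps, hsq⟩
    exact hmem.2
  have mono_le : ∀ x y : ℝ, 0 ≤ x → x ≤ y → y ≤ θ → f x ≤ f y := by
    intro x y hx hxy hyθ
    have h1 := emin x θ y hx hxy hyθ hθ1
    have hfxθ : f x ≤ f θ := hθmax ⟨hx, by linarith⟩
    rwa [min_eq_left hfxθ] at h1
  have mono_ge : ∀ x y : ℝ, θ ≤ x → x ≤ y → y ≤ 1 → f y ≤ f x := by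
    intro x y hθx hxy hy1
    have h1 := emin θ y x hθ0 hθx hxy hy1
    have hfyθ : f y ≤ f θ := hθmax ⟨by linarith, hy1⟩
    rwa [min_eq_right hfyθ] at h1
  have himg : ∀ p q : ℝ, 0 ≤ p → q ≤ 1 → IsCompact (f '' Set.Icc p q) := by
    intro p q hp hq
    exact isCompact_Icc.image_of_continuousOn (hcont.mono (Set.Icc_subset_Icc hp hq))
  have himgn : ∀ p q : ℝ, 0 ≤ p → q ≤ 1 → IsCompact ((fun s => -f s) '' Set.Icc p q) := by
    intro p q hp hq
    exact isCompact_Icc.image_of_continuousOn ((hcont.mono (Set.Icc_subset_Icc hp hq)).neg)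
  -- maximum of f over [p,q] is attained at the median of p, θ, q
  have hub : ∀ p q : ℝ, 0 ≤ p → p ≤ q → q ≤ 1 → ∀ s, p ≤ s → s ≤ q →
      f s ≤ f (max p (min θ q)) := by
    intro p q hp hpq hq s hs1 hs2
    rcases le_total θ p with h | h
    · have heq : max p (min θ q) = p := by
        rw [max_eq_left]; exact (min_le_left θ q).trans h
      rw [heq]; exact mono_ge p s h hs1 (hs2.trans hq)
    · rcases le_total q θ with h2 | h2
      · have heq : max p (min θ q) = q := by rw [min_eq_right h2, max_eq_right hpq]
        rw [heq]; exact mono_le s q (hp.trans hs1) hs2 h2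
      · have heq : max p (min θ q) = θ := by rw [min_eq_left h2, max_eq_right h]
        rw [heq]; exact hθmax ⟨hp.trans hs1, hs2.trans hq⟩
  have infIcc : ∀ p q : ℝ, 0 ≤ p → p ≤ q → q ≤ 1 →
      sInf (f '' Set.Icc p q) = min (f p) (f q) := by
    intro p q hp hpq hq
    apply le_antisymm
    · exact le_min (csInf_le (himg p q hp hq).bddBelow ⟨p, ⟨le_refl p, hpq⟩, rfl⟩)
        (csInf_le (himg p q hp hq).bddBelow ⟨q, ⟨hpq, le_refl q⟩, rfl⟩)
    · apply le_csInf ((Set.nonempty_Icc.mpr hpq).image f)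
      rintro y ⟨s, ⟨hs1, hs2⟩, rfl⟩
      exact emin p q s hp hs1 hs2 hq
  have supIcc : ∀ p q : ℝ, 0 ≤ p → p ≤ q → q ≤ 1 →
      sSup (f '' Set.Icc p q) = f (max p (min θ q)) := by
    intro p q hp hpq hq
    have hm1 : p ≤ max p (min θ q) := le_max_left _ _
    have hm2 : max p (min θ q) ≤ q := max_le hpq (min_le_right _ _)
    apply le_antisymm
    · apply csSup_le ((Set.nonempty_Icc.mpr hpq).image f)
      rintro y ⟨s, ⟨hs1, hs2⟩, rfl⟩
      exact hub p q hp hpq hq s hs1 hs2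
    · exact le_csSup (himg p q hp hq).bddAbove ⟨_, ⟨hm1, hm2⟩, rfl⟩
  have infIccN : ∀ p q : ℝ, 0 ≤ p → p ≤ q → q ≤ 1 →
      sInf ((fun s => -f s) '' Set.Icc p q) = -f (max p (min θ q)) := by
    intro p q hp hpq hq
    have hm1 : p ≤ max p (min θ q) := le_max_left _ _
    have hm2 : max p (min θ q) ≤ q := max_le hpq (min_le_right _ _)
    apply le_antisymm
    · exact csInf_le (himgn p q hp hq).bddBelow ⟨_, ⟨hm1, hm2⟩, rfl⟩
    · apply le_csInf ((Set.nonempty_Icc.mpr hpq).image (fun s => -f s))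
      rintro y ⟨s, ⟨hs1, hs2⟩, rfl⟩
      exact neg_le_neg (hub p q hp hpq hq s hs1 hs2)
  have supIccN : ∀ p q : ℝ, 0 ≤ p → p ≤ q → q ≤ 1 →
      sSup ((fun s => -f s) '' Set.Icc p q) = -min (f p) (f q) := by
    intro p q hp hpq hq
    apply le_antisymm
    · apply csSup_le ((Set.nonempty_Icc.mpr hpq).image (fun s => -f s))
      rintro y ⟨s, ⟨hs1, hs2⟩, rfl⟩
      exact neg_le_neg (emin p q s hp hs1 hs2 hq)
    · rcases min_cases (f p) (f q) with ⟨hmin, _⟩ | ⟨hmin, _⟩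
      · rw [hmin]
        exact le_csSup (himgn p q hp hq).bddAbove ⟨p, ⟨le_refl p, hpq⟩, rfl⟩
      · rw [hmin]
        exact le_csSup (himgn p q hp hq).bddAbove ⟨q, ⟨hpq, le_refl q⟩, rfl⟩
  -- closed forms for the Godunov fluxes
  have hplus_eq : ∀ a b : ℝ, a ∈ Set.Icc (0:ℝ) 1 → b ∈ Set.Icc (0:ℝ) 1 →
      hplus f a b = min (f (min a θ)) (f (max b θ)) := by
    intro a b ha hb
    unfold hplus
    split_ifs with hab
    · rw [infIcc a b ha.1 hab hb.2]
      rcases le_total θ a with h | h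
      · rw [min_eq_right h, max_eq_left (h.trans hab),
          min_eq_right (mono_ge a b h hab hb.2), min_eq_right (hθmax hb)]
      · rcases le_total b θ with h2 | h2
        · rw [min_eq_left h, max_eq_right h2,
            min_eq_left (mono_le a b ha.1 hab h2), min_eq_left (hθmax ha)]
        · rw [min_eq_left h, max_eq_left h2]
    · push_neg at hab
      have hba : b ≤ a := hab.le
      rw [supIcc b a hb.1 hba ha.2]
      rcases le_total θ b with h | h
      · rw [min_eq_left (h.trans hba), max_eq_left h, min_eq_right (h.trans hba),
          min_eq_right (hθmax hb)]
      · rcases le_total a θ with h2 | h2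
        · rw [min_eq_right h2, max_eq_right hba, min_eq_left h2, max_eq_right h,
            min_eq_left (hθmax ha)]
        · rw [min_eq_left h2, max_eq_right h, min_eq_right h2, min_self]
  have hminus_eq : ∀ a b : ℝ, a ∈ Set.Icc (0:ℝ) 1 → b ∈ Set.Icc (0:ℝ) 1 →
      hminus f a b = -min (f (max a θ)) (f (min b θ)) := by
    intro a b ha hb
    unfold hminus
    split_ifs with hab
    · rw [infIccN a b ha.1 hab hb.2]
      rcases le_total θ a with h | h
      · rw [min_eq_left (h.trans hab), max_eq_left h, min_eq_right (h.trans hab),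
          min_eq_left (hθmax ha)]
      · rcases le_total b θ with h2 | h2
        · rw [min_eq_right h2, max_eq_right hab, max_eq_right (hab.trans h2),
            min_eq_left h2, min_eq_right (hθmax hb)]
        · rw [min_eq_left h2, max_eq_right h, min_eq_right h2, min_self]
    · push_neg at hab
      have hba : b ≤ a := hab.le
      rw [supIccN b a hb.1 hba ha.2]
      rcases le_total θ b with h | h
      · rw [max_eq_left (h.trans hba), min_eq_right h,
          min_eq_right (mono_ge b a h hba ha.2), min_eq_left (hθmax ha)]
      · rcases le_total a θ with h2 | h2
        · rw [max_eq_right h2, min_eq_left h,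
            min_eq_left (mono_le b a hb.1 hba h2), min_eq_right (hθmax hb)]
        · rw [max_eq_left h2, min_eq_left h, min_comm (f b) (f a)]
  -- monotonicity of x ↦ max (β x − f x) 0 (convexity of β x − f x, vanishing at 0)
  have maxmono : ∀ β x y : ℝ, 0 ≤ x → x ≤ y → y ≤ 1 →
      max (β * x - f x) 0 ≤ max (β * y - f y) 0 := by
    intro β x y hx hxy hy
    rcases le_or_gt (β * x - f x) 0 with hneg | hpos
    · rw [max_eq_right hneg]; exact le_max_right _ _
    · have hx0 : 0 < x := by
        rcases eq_or_lt_of_le hx with h0 | h0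
        · exfalso; rw [← h0, mul_zero, hf0, sub_zero] at hpos; exact lt_irrefl 0 hpos
        · exact h0
      have hy0 : 0 < y := lt_of_lt_of_le hx0 hxy
      have ht0 : 0 ≤ x / y := div_nonneg hx hy0.le
      have ht1 : x / y ≤ 1 := (div_le_one hy0).2 hxy
      have hc := hconc.2 (Set.mem_Icc.2 ⟨le_refl 0, zero_le_one⟩)
        (Set.mem_Icc.2 ⟨hx.trans hxy, hy⟩) (by linarith : (0:ℝ) ≤ 1 - x / y) ht0 (by ring)
      have hxy' : (1 - x / y) • (0:ℝ) + (x / y) • y = x := by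
        simp only [smul_eq_mul, mul_zero, zero_add]
        field_simp
      rw [hxy', hf0] at hc
      simp only [smul_eq_mul, mul_zero, zero_add] at hc
      -- hc : x / y * f y ≤ f x
      have h4 : (x / y) * (β * y - f y) = β * x - (x / y) * f y := by
        field_simp
      have key : β * x - f x ≤ (x / y) * (β * y - f y) := by
        rw [h4]; linarith [hc]
      rcases le_or_gt 0 (β * y - f y) with h2 | h2
      · have h3 : (x / y) * (β * y - f y) ≤ 1 * (β * y - f y) :=
          mul_le_mul_of_nonneg_right ht1 h2
        rw [max_eq_left hpos.le]
        calc β * x - f x ≤ (x / y) * (β * y - f y) := key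
          _ ≤ 1 * (β * y - f y) := h3
          _ = β * y - f y := one_mul _
          _ ≤ max (β * y - f y) 0 := le_max_left _ _
      · have h3 : (x / y) * (β * y - f y) ≤ 0 := mul_nonpos_of_nonneg_of_nonpos ht0 h2.le
        rw [max_eq_left hpos.le]
        exact le_trans (key.trans h3) (le_max_right _ _)
  have lip2 : ∀ x y : ℝ, 0 ≤ x → x ≤ y → y ≤ 1 → |f y - f x| ≤ L * (y - x) := by
    intro x y hx hxy hy
    have h1 := hlip y ⟨hx.trans hxy, hy⟩ x ⟨hx, hxy.trans hy⟩
    rwa [abs_of_nonneg (by linarith : (0:ℝ) ≤ y - x)] at h1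
  have pstep : ∀ u v : ℝ, max u 0 ≤ max (u - v) 0 + max v 0 := by
    intro u v
    exact max_le (by linarith [le_max_left (u - v) (0:ℝ), le_max_left v (0:ℝ)])
      (add_nonneg (le_max_right _ _) (le_max_right _ _))
  have stepA : ∀ β x y : ℝ, 0 ≤ x → x ≤ y → y ≤ θ →
      max (β * y - f y) 0 - max (β * x - f x) 0 + (f y - f x) ≤ (|β| + L) * (y - x) := by
    intro β x y hx hxy hyθ
    have hy1 : y ≤ 1 := hyθ.trans hθ1
    have habs := abs_le.1 (lip2 x y hx hxy hy1)
    have h1 := pstep (β * y - f y) (β * x - f x)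
    have hβδ : β * (y - x) ≤ |β| * (y - x) :=
      mul_le_mul_of_nonneg_right (le_abs_self β) (sub_nonneg.2 hxy)
    have hLδ : 0 ≤ L * (y - x) := mul_nonneg hL.le (sub_nonneg.2 hxy)
    have hβδ0 : 0 ≤ |β| * (y - x) := mul_nonneg (abs_nonneg β) (sub_nonneg.2 hxy)
    have hmax : max ((β * y - f y) - (β * x - f x)) 0 ≤ (|β| + L) * (y - x) - (f y - f x) := by
      apply max_le
      · nlinarith
      · nlinarith
    linarith
  have stepB : ∀ β x y : ℝ, θ ≤ x → x ≤ y → y ≤ 1 →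
      max (β * y - f y) 0 - max (β * x - f x) 0 ≤ (|β| + L) * (y - x) := by
    intro β x y hθx hxy hy
    have hx0 : 0 ≤ x := hθ0.trans hθx
    have habs := abs_le.1 (lip2 x y hx0 hxy hy)
    have h1 := pstep (β * y - f y) (β * x - f x)
    have hβδ : β * (y - x) ≤ |β| * (y - x) :=
      mul_le_mul_of_nonneg_right (le_abs_self β) (sub_nonneg.2 hxy)
    have hLδ : 0 ≤ L * (y - x) := mul_nonneg hL.le (sub_nonneg.2 hxy)
    have hβδ0 : 0 ≤ |β| * (y - x) := mul_nonneg (abs_nonneg β) (sub_nonneg.2 hxy)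
    have hmax : max ((β * y - f y) - (β * x - f x)) 0 ≤ (|β| + L) * (y - x) := by
      apply max_le
      · nlinarith
      · nlinarith
    linarith
  have stepG : ∀ β x y : ℝ, 0 ≤ x → x ≤ y → y ≤ 1 →
      max (β * y - f y) 0 - max (β * x - f x) 0 + (f (min y θ) - f (min x θ)) ≤
        (|β| + L) * (y - x) := by
    intro β x y hx hxy hy
    rcases le_total y θ with hcase | hcase
    · rw [min_eq_left hcase, min_eq_left (hxy.trans hcase)]
      exact stepA β x y hx hxy hcase
    · rcases le_total θ x with h2 | h2
      · rw [min_eq_right hcase, min_eq_right h2]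
        have := stepB β x y h2 hxy hy
        linarith
      · rw [min_eq_right hcase, min_eq_left h2]
        have hA := stepA β x θ hx h2 le_rfl
        have hB := stepB β θ y le_rfl hcase hy
        linarith
  have minstep : ∀ A u v : ℝ, u ≤ v → min A v ≤ min A u + (v - u) := by
    intro A u v huv
    simp only [min_def]
    split_ifs <;> linarith
  have minstep' : ∀ A u v : ℝ, u ≤ v → min v A ≤ min u A + (v - u) := by
    intro A u v huv
    simp only [min_def]
    split_ifs <;> linarith
  -- CFL consequences
  have hkabs : k * |α| ≤ h / 2 :=
    le_trans (mul_le_mul_of_nonneg_left (le_max_right L |α|) hk.le) hCFL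
  have hkL : k * L ≤ h / 2 :=
    le_trans (mul_le_mul_of_nonneg_left (le_max_left L |α|) hk.le) hCFL
  have hDL : 0 < ΔL + α * k := by
    nlinarith [mul_le_mul_of_nonneg_right (neg_abs_le α) hk.le, hΔL.1]
  have hDR : 0 < ΔR - α * k := by
    nlinarith [mul_le_mul_of_nonneg_right (le_abs_self α) hk.le, hΔR.1]
  have hcoefL : k * (|α| + L) ≤ ΔL := by
    have : k * (|α| + L) = k * |α| + k * L := by ring
    linarith [hΔL.1]
  have hcoefR : k * (|α| + L) ≤ ΔR := by
    have : k * (|α| + L) = k * |α| + k * L := by ring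
    linarith [hΔR.1]
  -- main estimates
  intro a a' b b' c c' ha ha' hb hb' hc hc' haa hbb hcc
  have F1 : f (max a' θ) ≤ f (max a θ) :=
    mono_ge (max a θ) (max a' θ) (le_max_right _ _) (max_le_max haa le_rfl)
      (max_le ha'.2 hθ1)
  have F2 : f (min b θ) ≤ f (min b' θ) :=
    mono_le (min b θ) (min b' θ) (le_min hb.1 hθ0) (min_le_min hbb le_rfl)
      (min_le_right b' θ)
  have F3 : f (max c' θ) ≤ f (max c θ) :=
    mono_ge (max c θ) (max c' θ) (le_max_right _ _) (max_le_max hcc le_rfl)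
      (max_le hc'.2 hθ1)
  constructor
  · -- HABL
    have hnum : ΔL * b - k * (h0flux f b c α - hminus f a b) ≤
        ΔL * b' - k * (h0flux f b' c' α - hminus f a' b') := by
      rw [hminus_eq a b ha hb, hminus_eq a' b' ha' hb']
      unfold h0flux
      have G1 : max (α * c - f c) 0 ≤ max (α * c' - f c') 0 := maxmono α c c' hc.1 hcc hc'.2
      have SG1 : max (-α * b' - f b') 0 - max (-α * b - f b) 0 +
          (f (min b' θ) - f (min b θ)) ≤ (|α| + L) * (b' - b) := by
        have := stepG (-α) b b' hb.1 hbb hb'.2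
        rwa [abs_neg] at this
      have chain : min (f (max a' θ)) (f (min b' θ)) ≤ min (f (max a θ)) (f (min b' θ)) :=
        min_le_min F1 le_rfl
      have MS1 : min (f (max a θ)) (f (min b' θ)) ≤
          min (f (max a θ)) (f (min b θ)) + (f (min b' θ) - f (min b θ)) := by
        have := minstep (f (max a θ)) (f (min b θ)) (f (min b' θ)) F2
        linarith
      have hsum : min (f (max a' θ)) (f (min b' θ)) + max (-α * b' - f b') 0 ≤
          min (f (max a θ)) (f (min b θ)) + max (-α * b - f b) 0 + (|α| + L) * (b' - b) := by
        linarith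
      have hksum := mul_le_mul_of_nonneg_left hsum hk.le
      have hkG1 := mul_le_mul_of_nonneg_left G1 hk.le
      have hiv : k * ((|α| + L) * (b' - b)) ≤ ΔL * (b' - b) := by
        rw [← mul_assoc]
        exact mul_le_mul_of_nonneg_right hcoefL (sub_nonneg.2 hbb)
      linarith [hksum, hkG1, hiv]
    unfold HABL
    rw [div_eq_mul_inv, div_eq_mul_inv]
    exact mul_le_mul_of_nonneg_right hnum (le_of_lt (inv_pos.2 hDL))
  · -- HACR
    have hnum : ΔR * b - k * (hplus f b c - h0flux f a b α) ≤
        ΔR * b' - k * (hplus f b' c' - h0flux f a' b' α) := by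
      rw [hplus_eq b c hb hc, hplus_eq b' c' hb' hc']
      unfold h0flux
      have G2 : max (-α * a - f a) 0 ≤ max (-α * a' - f a') 0 :=
        maxmono (-α) a a' ha.1 haa ha'.2
      have SG2 : max (α * b' - f b') 0 - max (α * b - f b) 0 +
          (f (min b' θ) - f (min b θ)) ≤ (|α| + L) * (b' - b) :=
        stepG α b b' hb.1 hbb hb'.2
      have chain2 : min (f (min b' θ)) (f (max c' θ)) ≤ min (f (min b' θ)) (f (max c θ)) :=
        min_le_min le_rfl F3
      have MS2 : min (f (min b' θ)) (f (max c θ)) ≤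
          min (f (min b θ)) (f (max c θ)) + (f (min b' θ) - f (min b θ)) := by
        have := minstep' (f (max c θ)) (f (min b θ)) (f (min b' θ)) F2
        linarith
      have hsum : min (f (min b' θ)) (f (max c' θ)) + max (α * b' - f b') 0 ≤
          min (f (min b θ)) (f (max c θ)) + max (α * b - f b) 0 + (|α| + L) * (b' - b) := by
        linarith
      have hksum := mul_le_mul_of_nonneg_left hsum hk.le
      have hkG2 := mul_le_mul_of_nonneg_left G2 hk.le
      have hiv : k * ((|α| + L) * (b' - b)) ≤ ΔR * (b' - b) := by
        rw [← mul_assoc]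
        exact mul_le_mul_of_nonneg_right hcoefR (sub_nonneg.2 hbb)
      linarith [hksum, hkG2, hiv]
    unfold HACR
    rw [div_eq_mul_inv, div_eq_mul_inv]
    exact mul_le_mul_of_nonneg_right hnum (le_of_lt (inv_pos.2 hDR))
end

section
/- Let f : [0,1] → ℝ be continuous, concave, Lipschitz with constant L > 0, with f(0) = 0 = f(1). Let k, h > 0, α ∈ ℝ and Δ_L, Δ_R satisfy the CFL condition k·max(L, |α|) ≤ h/2 and h ≤ Δ_L ≤ 2h, h ≤ Δ_R ≤ 2h. Then the interface marching operators H^C_L(a,b,c,d) := (Δ_L b + h c − k(h₀(c,d,α) − h⁻(a,b)))/(Δ_L + h + αk) and H^B_R(a,b,c,d) := (Δ_R b + h c − k(h⁺(c,d) − h₀(a,b,α)))/(Δ_R + h − αk) are nondecreasing in each of the four arguments a, b, c, d ∈ [0,1]. -/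
/-- Left interface marching operator (Case C). -/
noncomputable def HCL (f : ℝ → ℝ) (α k h ΔL a b c d : ℝ) : ℝ :=
  (ΔL * b + h * c - k * (h0flux f c d α - hminus f a b)) / (ΔL + h + α * k)

/-- Right interface marching operator (Case B). -/
noncomputable def HBR (f : ℝ → ℝ) (α k h ΔR a b c d : ℝ) : ℝ :=
  (ΔR * b + h * c - k * (hplus f c d - h0flux f a b α)) / (ΔR + h - α * k)

section GodunovAux

open Set

lemma glip {g : ℝ → ℝ} {L : ℝ}
    (hg : ∀ x ∈ Icc (0:ℝ) 1, ∀ y ∈ Icc (0:ℝ) 1, |g x - g y| ≤ L * |x - y|)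
    {x y : ℝ} (hx : x ∈ Icc (0:ℝ) 1) (hy : y ∈ Icc (0:ℝ) 1) :
    g x ≤ g y + L * |x - y| := by
  have h := hg x hx y hy
  have h2 : g x - g y ≤ |g x - g y| := le_abs_self _
  linarith

lemma memIcc01 {a b s : ℝ} (ha : a ∈ Icc (0:ℝ) 1) (hb : b ∈ Icc (0:ℝ) 1)
    (hs : s ∈ Icc a b) : s ∈ Icc (0:ℝ) 1 :=
  ⟨le_trans ha.1 hs.1, le_trans hs.2 hb.2⟩

lemma bddAboveI {g : ℝ → ℝ} {L : ℝ} (hL : 0 ≤ L)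
    (hg : ∀ x ∈ Icc (0:ℝ) 1, ∀ y ∈ Icc (0:ℝ) 1, |g x - g y| ≤ L * |x - y|)
    {a b : ℝ} (ha : a ∈ Icc (0:ℝ) 1) (hb : b ∈ Icc (0:ℝ) 1) :
    BddAbove (g '' Icc a b) := by
  refine ⟨g 0 + L, ?_⟩
  rintro _ ⟨s, hs, rfl⟩
  have hs01 := memIcc01 ha hb hs
  have h := glip hg hs01 ⟨le_refl (0:ℝ), zero_le_one⟩
  have habs : |s - 0| ≤ 1 := by rw [sub_zero, abs_of_nonneg hs01.1]; exact hs01.2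
  nlinarith

lemma bddBelowI {g : ℝ → ℝ} {L : ℝ} (hL : 0 ≤ L)
    (hg : ∀ x ∈ Icc (0:ℝ) 1, ∀ y ∈ Icc (0:ℝ) 1, |g x - g y| ≤ L * |x - y|)
    {a b : ℝ} (ha : a ∈ Icc (0:ℝ) 1) (hb : b ∈ Icc (0:ℝ) 1) :
    BddBelow (g '' Icc a b) := by
  refine ⟨g 0 - L, ?_⟩
  rintro _ ⟨s, hs, rfl⟩
  have hs01 := memIcc01 ha hb hs
  have h := glip hg ⟨le_refl (0:ℝ), zero_le_one⟩ hs01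
  have habs : |0 - s| ≤ 1 := by rw [zero_sub, abs_neg, abs_of_nonneg hs01.1]; exact hs01.2
  nlinarith

variable {g : ℝ → ℝ} {L : ℝ} (hL : 0 ≤ L)
    (hg : ∀ x ∈ Icc (0:ℝ) 1, ∀ y ∈ Icc (0:ℝ) 1, |g x - g y| ≤ L * |x - y|)

include hL hg

lemma hplus_mono_left {a a' b : ℝ} (ha : a ∈ Icc (0:ℝ) 1) (ha' : a' ∈ Icc (0:ℝ) 1)
    (hb : b ∈ Icc (0:ℝ) 1) (haa : a ≤ a') : hplus g a b ≤ hplus g a' b := by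
  unfold hplus
  rcases le_or_gt a b with h1 | h1
  · rcases le_or_gt a' b with h2 | h2
    · rw [if_pos h1, if_pos h2]
      exact csInf_le_csInf (bddBelowI hL hg ha hb) ((nonempty_Icc.2 h2).image g)
        (image_mono (f := g) (Icc_subset_Icc haa le_rfl))
    · rw [if_pos h1, if_neg (not_le.2 h2)]
      calc sInf (g '' Icc a b) ≤ g b := csInf_le (bddBelowI hL hg ha hb) ⟨b, ⟨h1, le_rfl⟩, rfl⟩
        _ ≤ sSup (g '' Icc b a') := le_csSup (bddAboveI hL hg hb ha') ⟨b, ⟨le_rfl, h2.le⟩, rfl⟩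
  · have h2 : ¬ a' ≤ b := not_le.2 (lt_of_lt_of_le h1 haa)
    rw [if_neg (not_le.2 h1), if_neg h2]
    exact csSup_le_csSup (bddAboveI hL hg hb ha') ((nonempty_Icc.2 h1.le).image g)
      (image_mono (f := g) (Icc_subset_Icc le_rfl haa))

lemma hplus_anti_right {a b b' : ℝ} (ha : a ∈ Icc (0:ℝ) 1) (hb : b ∈ Icc (0:ℝ) 1)
    (hb' : b' ∈ Icc (0:ℝ) 1) (hbb : b ≤ b') : hplus g a b' ≤ hplus g a b := by
  unfold hplus
  rcases le_or_gt a b with h1 | h1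
  · rw [if_pos h1, if_pos (h1.trans hbb)]
    exact csInf_le_csInf (bddBelowI hL hg ha hb') ((nonempty_Icc.2 h1).image g)
      (image_mono (f := g) (Icc_subset_Icc le_rfl hbb))
  · rcases le_or_gt a b' with h2 | h2
    · rw [if_pos h2, if_neg (not_le.2 h1)]
      calc sInf (g '' Icc a b') ≤ g a := csInf_le (bddBelowI hL hg ha hb') ⟨a, ⟨le_rfl, h2⟩, rfl⟩
        _ ≤ sSup (g '' Icc b a) := le_csSup (bddAboveI hL hg hb ha) ⟨a, ⟨h1.le, le_rfl⟩, rfl⟩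
    · rw [if_neg (not_le.2 h2), if_neg (not_le.2 h1)]
      exact csSup_le_csSup (bddAboveI hL hg hb ha) ((nonempty_Icc.2 h2.le).image g)
        (image_mono (f := g) (Icc_subset_Icc hbb le_rfl))

lemma hplus_lip_left {a a' b : ℝ} (ha : a ∈ Icc (0:ℝ) 1) (ha' : a' ∈ Icc (0:ℝ) 1)
    (hb : b ∈ Icc (0:ℝ) 1) (haa : a ≤ a') :
    hplus g a' b ≤ hplus g a b + L * (a' - a) := by
  have hC : 0 ≤ L * (a' - a) := mul_nonneg hL (by linarith)
  unfold hplus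
  rcases le_or_gt a' b with h2 | h2
  · have h1 : a ≤ b := haa.trans h2
    rw [if_pos h1, if_pos h2]
    have key : sInf (g '' Icc a' b) - L * (a' - a) ≤ sInf (g '' Icc a b) := by
      apply le_csInf ((nonempty_Icc.2 h1).image g)
      rintro _ ⟨s, hs, rfl⟩
      have hts : max a' s ∈ Icc a' b := ⟨le_max_left _ _, max_le h2 hs.2⟩
      have h3 : sInf (g '' Icc a' b) ≤ g (max a' s) :=
        csInf_le (bddBelowI hL hg ha' hb) ⟨_, hts, rfl⟩
      have h4 := glip hg (memIcc01 ha' hb hts) (memIcc01 ha hb hs)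
      have h5 : |max a' s - s| ≤ a' - a := by
        rcases le_total a' s with h | h
        · rw [max_eq_right h]; simp; linarith
        · rw [max_eq_left h, abs_of_nonneg (by linarith)]; linarith [hs.1]
      nlinarith
    linarith
  · rcases le_or_gt a b with h1 | h1
    · rw [if_pos h1, if_neg (not_le.2 h2)]
      have hsup : sSup (g '' Icc b a') ≤ g b + L * (a' - b) := by
        apply csSup_le ((nonempty_Icc.2 h2.le).image g)
        rintro _ ⟨s, hs, rfl⟩
        have h4 := glip hg (memIcc01 hb ha' hs) (memIcc01 ha hb ⟨h1, le_rfl⟩)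
        have h5 : |s - b| ≤ a' - b := by rw [abs_of_nonneg (by linarith [hs.1])]; linarith [hs.2]
        nlinarith
      have hinf : g b - L * (b - a) ≤ sInf (g '' Icc a b) := by
        apply le_csInf ((nonempty_Icc.2 h1).image g)
        rintro _ ⟨s, hs, rfl⟩
        have h4 := glip hg (memIcc01 ha hb ⟨h1, le_rfl⟩) (memIcc01 ha hb hs)
        have h5 : |b - s| ≤ b - a := by rw [abs_of_nonneg (by linarith [hs.2])]; linarith [hs.1]
        nlinarith
      linarith
    · rw [if_neg (not_le.2 h1), if_neg (not_le.2 h2)]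
      apply csSup_le ((nonempty_Icc.2 (h2.le)).image g)
      rintro _ ⟨s, hs, rfl⟩
      have hts : min s a ∈ Icc b a := ⟨le_min hs.1 h1.le, min_le_right _ _⟩
      have h3 : g (min s a) ≤ sSup (g '' Icc b a) :=
        le_csSup (bddAboveI hL hg hb ha) ⟨_, hts, rfl⟩
      have h4 := glip hg (memIcc01 hb ha' hs) (memIcc01 hb ha hts)
      have h5 : |s - min s a| ≤ a' - a := by
        rcases le_total s a with h | h
        · rw [min_eq_left h]; simp; linarith
        · rw [min_eq_right h, abs_of_nonneg (by linarith)]; linarith [hs.2]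
      nlinarith

lemma hplus_lip_right {a b b' : ℝ} (ha : a ∈ Icc (0:ℝ) 1) (hb : b ∈ Icc (0:ℝ) 1)
    (hb' : b' ∈ Icc (0:ℝ) 1) (hbb : b ≤ b') :
    hplus g a b ≤ hplus g a b' + L * (b' - b) := by
  have hC : 0 ≤ L * (b' - b) := mul_nonneg hL (by linarith)
  unfold hplus
  rcases le_or_gt a b with h1 | h1
  · have h2 : a ≤ b' := h1.trans hbb
    rw [if_pos h1, if_pos h2]
    have key : sInf (g '' Icc a b) - L * (b' - b) ≤ sInf (g '' Icc a b') := by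
      apply le_csInf ((nonempty_Icc.2 h2).image g)
      rintro _ ⟨s, hs, rfl⟩
      have hts : min s b ∈ Icc a b := ⟨le_min hs.1 h1, min_le_right _ _⟩
      have h3 : sInf (g '' Icc a b) ≤ g (min s b) :=
        csInf_le (bddBelowI hL hg ha hb) ⟨_, hts, rfl⟩
      have h4 := glip hg (memIcc01 ha hb hts) (memIcc01 ha hb' hs)
      have h5 : |min s b - s| ≤ b' - b := by
        rcases le_total s b with h | h
        · rw [min_eq_left h]; simp; linarith
        · rw [min_eq_right h, abs_of_nonpos (by linarith)]; linarith [hs.2]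
      nlinarith
    linarith
  · rcases le_or_gt a b' with h2 | h2
    · rw [if_neg (not_le.2 h1), if_pos h2]
      have hsup : sSup (g '' Icc b a) ≤ g a + L * (a - b) := by
        apply csSup_le ((nonempty_Icc.2 h1.le).image g)
        rintro _ ⟨s, hs, rfl⟩
        have h4 := glip hg (memIcc01 hb ha hs) (memIcc01 hb ha ⟨h1.le, le_rfl⟩)
        have h5 : |s - a| ≤ a - b := by rw [abs_of_nonpos (by linarith [hs.2])]; linarith [hs.1]
        nlinarith
      have hinf : g a - L * (b' - a) ≤ sInf (g '' Icc a b') := by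
        apply le_csInf ((nonempty_Icc.2 h2).image g)
        rintro _ ⟨s, hs, rfl⟩
        have h4 := glip hg (memIcc01 ha hb' ⟨le_rfl, h2⟩) (memIcc01 ha hb' hs)
        have h5 : |a - s| ≤ b' - a := by rw [abs_of_nonpos (by linarith [hs.1])]; linarith [hs.2]
        nlinarith
      linarith
    · rw [if_neg (not_le.2 h1), if_neg (not_le.2 h2)]
      apply csSup_le ((nonempty_Icc.2 h1.le).image g)
      rintro _ ⟨s, hs, rfl⟩
      have hts : max s b' ∈ Icc b' a := ⟨le_max_right _ _, max_le hs.2 h2.le⟩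
      have h3 : g (max s b') ≤ sSup (g '' Icc b' a) :=
        le_csSup (bddAboveI hL hg hb' ha) ⟨_, hts, rfl⟩
      have h4 := glip hg (memIcc01 hb ha hs) (memIcc01 hb' ha hts)
      have h5 : |s - max s b'| ≤ b' - b := by
        rcases le_total s b' with h | h
        · rw [max_eq_right h, abs_of_nonpos (by linarith)]; linarith [hs.1]
        · rw [max_eq_left h]; simp; linarith
      nlinarith

end GodunovAux

section ConcaveAux

open Set

lemma max_affine_mono (f : ℝ → ℝ) (hconc : ConcaveOn ℝ (Icc 0 1) f)
    (hf0 : f 0 = 0) (β : ℝ) {x y : ℝ} (hx : x ∈ Icc (0:ℝ) 1) (hy : y ∈ Icc (0:ℝ) 1)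
    (hxy : x ≤ y) : max (β * x - f x) 0 ≤ max (β * y - f y) 0 := by
  rcases le_or_gt (β * x - f x) 0 with h | h
  · rw [max_eq_right h]; exact le_max_right _ _
  · have hx0 : 0 < x := by
      rcases lt_or_eq_of_le hx.1 with h' | h'
      · exact h'
      · exfalso; rw [← h', hf0] at h; simp at h
    have hy0 : 0 < y := lt_of_lt_of_le hx0 hxy
    set t := x / y with ht
    have ht0 : 0 < t := div_pos hx0 hy0
    have ht1 : t ≤ 1 := div_le_one_of_le₀ hxy hy0.le
    have h0mem : (0:ℝ) ∈ Icc (0:ℝ) 1 := ⟨le_rfl, zero_le_one⟩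
    have hcx := hconc.2 h0mem hy (by linarith : (0:ℝ) ≤ 1 - t) ht0.le (by ring)
    simp only [smul_eq_mul, hf0, mul_zero] at hcx
    have hxe : t * y = x := div_mul_cancel₀ x hy0.ne'
    rw [hxe] at hcx
    simp only [zero_add] at hcx
    have hfx : t * f y ≤ f x := by linarith [hcx]
    have hbx : β * x = t * (β * y) := by rw [ht]; field_simp
    have hgy : 0 < β * y - f y := by nlinarith
    have h1 : β * x - f x ≤ β * y - f y := by nlinarith
    calc max (β * x - f x) 0 = β * x - f x := max_eq_left h.le
      _ ≤ β * y - f y := h1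
      _ ≤ max (β * y - f y) 0 := le_max_left _ _

lemma max_lip (u v C : ℝ) (h : |u - v| ≤ C) : max u 0 ≤ max v 0 + C := by
  have h2 : |max u 0 - max v 0| ≤ |u - v| := abs_max_sub_max_le_abs u v 0
  have h3 : max u 0 - max v 0 ≤ |max u 0 - max v 0| := le_abs_self _
  linarith

end ConcaveAux

/-- Under the CFL condition, the interface marching operators `H^C_L` and `H^B_R`
are nondecreasing in each of their four arguments. -/
theorem stmt_13
    (f : ℝ → ℝ)
    (hcont : ContinuousOn f (Set.Icc 0 1))
    (hconc : ConcaveOn ℝ (Set.Icc 0 1) f)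
    (L : ℝ) (hL : 0 < L)
    (hlip : ∀ x ∈ Set.Icc (0:ℝ) 1, ∀ y ∈ Set.Icc (0:ℝ) 1, |f x - f y| ≤ L * |x - y|)
    (hf0 : f 0 = 0) (hf1 : f 1 = 0)
    (k h α ΔL ΔR : ℝ) (hk : 0 < k) (hh : 0 < h)
    (hCFL : k * max L |α| ≤ h / 2)
    (hΔL : h ≤ ΔL ∧ ΔL ≤ 2 * h) (hΔR : h ≤ ΔR ∧ ΔR ≤ 2 * h) :
    ∀ a a' b b' c c' d d' : ℝ,
      a ∈ Set.Icc (0:ℝ) 1 → a' ∈ Set.Icc (0:ℝ) 1 →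
      b ∈ Set.Icc (0:ℝ) 1 → b' ∈ Set.Icc (0:ℝ) 1 →
      c ∈ Set.Icc (0:ℝ) 1 → c' ∈ Set.Icc (0:ℝ) 1 →
      d ∈ Set.Icc (0:ℝ) 1 → d' ∈ Set.Icc (0:ℝ) 1 →
      a ≤ a' → b ≤ b' → c ≤ c' → d ≤ d' →
      HCL f α k h ΔL a b c d ≤ HCL f α k h ΔL a' b' c' d' ∧
      HBR f α k h ΔR a b c d ≤ HBR f α k h ΔR a' b' c' d' := by
  intro a a' b b' c c' d d' ha ha' hb hb' hc hc' hd hd' haa hbb hcc hdd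
  have hL0 : (0:ℝ) ≤ L := hL.le
  have hgneg : ∀ x ∈ Set.Icc (0:ℝ) 1, ∀ y ∈ Set.Icc (0:ℝ) 1,
      |(fun s => -f s) x - (fun s => -f s) y| ≤ L * |x - y| := by
    intro x hx y hy
    simp only
    rw [show -f x - -f y = -(f x - f y) by ring, abs_neg]
    exact hlip x hx y hy
  have hmeq : ∀ u v : ℝ, hminus f u v = hplus (fun s => -f s) u v := fun u v => rfl
  -- CFL consequences
  have hmaxL : L ≤ max L |α| := le_max_left _ _
  have hmaxA : |α| ≤ max L |α| := le_max_right _ _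
  have hkL : k * L ≤ h / 2 := le_trans (by nlinarith) hCFL
  have hkA : k * |α| ≤ h / 2 := le_trans (by nlinarith) hCFL
  have hαa : -|α| ≤ α := neg_abs_le α
  have hαb : α ≤ |α| := le_abs_self α
  have habs0 : 0 ≤ |α| := abs_nonneg α
  constructor
  · -- HCL
    have hD : 0 < ΔL + h + α * k := by nlinarith [hΔL.1]
    -- monotone pieces
    have hm1 : hminus f a b ≤ hminus f a' b := by
      rw [hmeq, hmeq]; exact hplus_mono_left hL0 hgneg ha ha' hb haa
    have hm2 : hminus f a' b ≤ hminus f a' b' + L * (b' - b) := by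
      rw [hmeq, hmeq]; exact hplus_lip_right hL0 hgneg ha' hb hb' hbb
    have hd1 : max (α * d - f d) 0 ≤ max (α * d' - f d') 0 :=
      max_affine_mono f hconc hf0 α hd hd' hdd
    have hc1 : max (-α * c' - f c') 0 ≤ max (-α * c - f c) 0 + (|α| + L) * (c' - c) := by
      apply max_lip
      have h1 : (-α * c' - f c') - (-α * c - f c) = -(α * (c' - c)) - (f c' - f c) := by ring
      rw [h1]
      have h2 := hlip c' hc' c hc
      have h3 : |c' - c| = c' - c := abs_of_nonneg (by linarith)
      calc |(-(α * (c' - c))) - (f c' - f c)| ≤ |(-(α * (c' - c)))| + |f c' - f c| :=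
            abs_sub _ _
        _ ≤ |α| * (c' - c) + L * (c' - c) := by
            rw [abs_neg, abs_mul, h3]
            rw [h3] at h2
            linarith
        _ = (|α| + L) * (c' - c) := by ring
    -- numerator inequality
    have e1 : k * hminus f a b ≤ k * (hminus f a' b' + L * (b' - b)) :=
      mul_le_mul_of_nonneg_left (hm1.trans hm2) hk.le
    have e2 : k * max (α * d - f d) 0 ≤ k * max (α * d' - f d') 0 :=
      mul_le_mul_of_nonneg_left hd1 hk.le
    have e3 : k * max (-α * c' - f c') 0 ≤
        k * (max (-α * c - f c) 0 + (|α| + L) * (c' - c)) :=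
      mul_le_mul_of_nonneg_left hc1 hk.le
    have f1 : k * L * (b' - b) ≤ ΔL * (b' - b) := by
      apply mul_le_mul_of_nonneg_right _ (by linarith)
      linarith [hΔL.1]
    have f2 : (k * |α| + k * L) * (c' - c) ≤ h * (c' - c) := by
      apply mul_le_mul_of_nonneg_right _ (by linarith)
      linarith
    have hnum : ΔL * b + h * c - k * (h0flux f c d α - hminus f a b) ≤
        ΔL * b' + h * c' - k * (h0flux f c' d' α - hminus f a' b') := by
      unfold h0flux
      linarith [e1, e2, e3, f1, f2]
    unfold HCL
    exact div_le_div_of_nonneg_right hnum hD.le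
  · -- HBR
    have hD : 0 < ΔR + h - α * k := by nlinarith [hΔR.1]
    have hp1 : hplus f c' d' ≤ hplus f c' d :=
      hplus_anti_right hL0 hlip hc' hd hd' hdd
    have hp2 : hplus f c' d ≤ hplus f c d + L * (c' - c) :=
      hplus_lip_left hL0 hlip hc hc' hd hcc
    have ha1 : max (-α * a - f a) 0 ≤ max (-α * a' - f a') 0 := by
      have := max_affine_mono f hconc hf0 (-α) ha ha' haa
      simpa using this
    have hb1 : max (α * b' - f b') 0 ≤ max (α * b - f b) 0 + (|α| + L) * (b' - b) := by
      apply max_lip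
      have h1 : (α * b' - f b') - (α * b - f b) = α * (b' - b) - (f b' - f b) := by ring
      rw [h1]
      have h2 := hlip b' hb' b hb
      have h3 : |b' - b| = b' - b := abs_of_nonneg (by linarith)
      calc |α * (b' - b) - (f b' - f b)| ≤ |α * (b' - b)| + |f b' - f b| := abs_sub _ _
        _ ≤ |α| * (b' - b) + L * (b' - b) := by
            rw [abs_mul, h3]
            rw [h3] at h2
            linarith
        _ = (|α| + L) * (b' - b) := by ring
    have e1 : k * hplus f c' d' ≤ k * (hplus f c d + L * (c' - c)) :=
      mul_le_mul_of_nonneg_left (hp1.trans hp2) hk.le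
    have e2 : k * max (-α * a - f a) 0 ≤ k * max (-α * a' - f a') 0 :=
      mul_le_mul_of_nonneg_left ha1 hk.le
    have e3 : k * max (α * b' - f b') 0 ≤
        k * (max (α * b - f b) 0 + (|α| + L) * (b' - b)) :=
      mul_le_mul_of_nonneg_left hb1 hk.le
    have f1 : k * L * (c' - c) ≤ h * (c' - c) := by
      apply mul_le_mul_of_nonneg_right _ (by linarith)
      linarith
    have f2 : (k * |α| + k * L) * (b' - b) ≤ ΔR * (b' - b) := by
      apply mul_le_mul_of_nonneg_right _ (by linarith)
      linarith [hΔR.1]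
    have hnum : ΔR * b + h * c - k * (hplus f c d - h0flux f a b α) ≤
        ΔR * b' + h * c' - k * (hplus f c' d' - h0flux f a' b' α) := by
      unfold h0flux
      linarith [e1, e2, e3, f1, f2]
    unfold HBR
    exact div_le_div_of_nonneg_right hnum hD.le
end

section
/- Let f : [0,1] → ℝ be continuous with f ≥ 0 on [0,1] and f(0) = 0, let α ∈ ℝ, k, h > 0 and Δ_L, Δ_R with Δ_L + αk > 0, Δ_R − αk > 0, Δ_L + h + αk > 0 and Δ_R + h − αk > 0. Then for every b ∈ [0,1]: H^±(b,b,b) = b; H^{AB}_L(b,b,b) = b − (k/(Δ_L + αk))·R_L(b,α); H^C_L(b,b,b,b) = b − (k/(Δ_L + h + αk))·R_L(b,α); H^{AC}_R(b,b,b) = b − (k/(Δ_R − αk))·R_R(b,α); and H^B_R(b,b,b,b) = b − (k/(Δ_R + h − αk))·R_R(b,α). -/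
/-- Left remainder term `R_L`. -/
noncomputable def RL (f : ℝ → ℝ) (b α : ℝ) : ℝ :=
  min (max (α * b + f b) 0) (2 * f b)

/-- Right remainder term `R_R`. -/
noncomputable def RR (f : ℝ → ℝ) (b α : ℝ) : ℝ :=
  2 * f b - RL f b α

lemma key_RL (A F : ℝ) (hF : 0 ≤ F) :
    A + F - max (A - F) 0 + max (-A - F) 0 = min (max (A + F) 0) (2 * F) := by
  rcases le_total (A - F) 0 with h1 | h1 <;>
  rcases le_total (-A - F) 0 with h2 | h2 <;>
  rcases le_total (A + F) 0 with h3 | h3 <;>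
  simp [max_eq_left, max_eq_right, min_def, *] <;>
  first | linarith | (split <;> linarith) | (intro _; linarith)

/-- Values of the marching operators on constant states, in terms of the remainder
terms `R_L` and `R_R`. -/
theorem stmt_14
    (f : ℝ → ℝ)
    (hcont : ContinuousOn f (Set.Icc 0 1))
    (hf : ∀ x ∈ Set.Icc (0:ℝ) 1, 0 ≤ f x) (hf0 : f 0 = 0)
    (α k h ΔL ΔR : ℝ) (hk : 0 < k) (hh : 0 < h)
    (hL1 : 0 < ΔL + α * k) (hR1 : 0 < ΔR - α * k)
    (hL2 : 0 < ΔL + h + α * k) (hR2 : 0 < ΔR + h - α * k)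
    (b : ℝ) (hb : b ∈ Set.Icc (0:ℝ) 1) :
    Hplus f k h b b b = b ∧
    Hminus f k h b b b = b ∧
    HABL f α k ΔL b b b = b - (k / (ΔL + α * k)) * RL f b α ∧
    HCL f α k h ΔL b b b b = b - (k / (ΔL + h + α * k)) * RL f b α ∧
    HACR f α k ΔR b b b = b - (k / (ΔR - α * k)) * RR f b α ∧
    HBR f α k h ΔR b b b b = b - (k / (ΔR + h - α * k)) * RR f b α := by
  have hFb : 0 ≤ f b := hf b hb
  have h1 : hplus f b b = f b := by
    simp [hplus, Set.Icc_self]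
  have h2 : hminus f b b = -f b := by
    simp [hminus, Set.Icc_self]
  refine ⟨?_, ?_, ?_, ?_, ?_, ?_⟩
  · simp [Hplus, h1]
  · simp [Hminus, h2]
  · rw [HABL, h2, h0flux, RL]
    have key := key_RL (α * b) (f b) hFb
    simp only [neg_mul] at key ⊢
    rw [← key]
    field_simp [show ΔL + k * α ≠ 0 by linarith]
    ring
  · rw [HCL, h2, h0flux, RL]
    have key := key_RL (α * b) (f b) hFb
    simp only [neg_mul] at key ⊢
    rw [← key]
    field_simp [show ΔL + h + k * α ≠ 0 by linarith]
    ring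
  · rw [HACR, h1, h0flux, RR, RL]
    have key := key_RL (α * b) (f b) hFb
    simp only [neg_mul] at key ⊢
    rw [← key]
    field_simp [show ΔR - k * α ≠ 0 by linarith]
    ring
  · rw [HBR, h1, h0flux, RR, RL]
    have key := key_RL (α * b) (f b) hFb
    simp only [neg_mul] at key ⊢
    rw [← key]
    field_simp [show ΔR + h - k * α ≠ 0 by linarith]
    ring
end

section
/- Let f : [0,1] → ℝ be continuous, let α ∈ ℝ, k, h > 0 and Δ_L, Δ_R with Δ_L + αk > 0, Δ_R − αk > 0, Δ_L + h + αk > 0 and Δ_R + h − αk > 0. Suppose b, c ∈ [0,1] satisfy the Rankine–Hugoniot condition f(b) + f(c) = α (c − b). Then H^{AB}_L(b,b,c) = b, H^C_L(b,b,b,c) = b, H^{AC}_R(b,c,c) = c, and H^B_R(b,c,c,c) = c. -/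
lemma hplus_self (f : ℝ → ℝ) (a : ℝ) : hplus f a a = f a := by
  simp [hplus, Set.Icc_self]

lemma hminus_self (f : ℝ → ℝ) (a : ℝ) : hminus f a a = -f a := by
  simp [hminus, Set.Icc_self]

lemma h0_eval (t : ℝ) : -max t 0 + max (-t) 0 = -t := by
  rcases le_total t 0 with h | h
  · rw [max_eq_right h, max_eq_left (neg_nonneg.mpr h)]; ring
  · rw [max_eq_left h, max_eq_right (neg_nonpos.mpr h)]; ring

/-- Two-state profiles whose traces satisfy the Rankine–Hugoniot condition (i.e. lie
in the germ `G̃_α`) are exactly preserved by the interface marching formulas. -/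
theorem stmt_15
    (f : ℝ → ℝ)
    (hcont : ContinuousOn f (Set.Icc 0 1))
    (α k h ΔL ΔR : ℝ) (hk : 0 < k) (hh : 0 < h)
    (hL1 : 0 < ΔL + α * k) (hR1 : 0 < ΔR - α * k)
    (hL2 : 0 < ΔL + h + α * k) (hR2 : 0 < ΔR + h - α * k)
    (b c : ℝ) (hb : b ∈ Set.Icc (0:ℝ) 1) (hc : c ∈ Set.Icc (0:ℝ) 1)
    (hRH : f b + f c = α * (c - b)) :
    HABL f α k ΔL b b c = b ∧
    HCL f α k h ΔL b b b c = b ∧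
    HACR f α k ΔR b c c = c ∧
    HBR f α k h ΔR b c c c = c := by
  have hfc : α * c - f c = α * b + f b := by linarith
  have h0 : h0flux f b c α = -(α * b + f b) := by
    rw [h0flux, hfc]
    have : -α * b - f b = -(α * b + f b) := by ring
    rw [this, h0_eval]
  refine ⟨?_, ?_, ?_, ?_⟩
  · rw [HABL, hminus_self, h0, div_eq_iff hL1.ne']; ring
  · rw [HCL, hminus_self, h0, div_eq_iff hL2.ne']; ring
  · rw [HACR, hplus_self, h0, div_eq_iff hR1.ne']; linear_combination (-k) * hRH
  · rw [HBR, hplus_self, h0, div_eq_iff hR2.ne']; linear_combination (-k) * hRH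
end

section
/- Let f : [0,1] → ℝ be continuous, concave, Lipschitz with constant L > 0, with f(0) = 0 = f(1). Let k, h > 0, α ∈ ℝ and Δ_L, Δ_R satisfy the CFL condition k·max(L, |α|) ≤ h/2 and h ≤ Δ_L ≤ 2h, h ≤ Δ_R ≤ 2h. Let M ∈ [0,1]. If a, b, c ∈ [0, M], then H^±(a,b,c) ∈ [0, M], H^{AB}_L(a,b,c) ∈ [0, M] and H^{AC}_R(a,b,c) ∈ [0, M]; if a, b, c, d ∈ [0, M], then H^C_L(a,b,c,d) ∈ [0, M] and H^B_R(a,b,c,d) ∈ [0, M]. Consequently the finite volume approximations remain in [0, ‖ρ₀‖_∞] for all times (uniform L^∞ bound). -/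
lemma gdnv_bounds (g : ℝ → ℝ) (L : ℝ) (hL : 0 ≤ L)
    (hlip : ∀ x ∈ Set.Icc (0:ℝ) 1, ∀ y ∈ Set.Icc (0:ℝ) 1, |g x - g y| ≤ L * |x - y|)
    {a b : ℝ} (ha : a ∈ Set.Icc (0:ℝ) 1) (hb : b ∈ Set.Icc (0:ℝ) 1) :
    (g a - L * max (b - a) 0 ≤ hplus g a b ∧ g b - L * max (b - a) 0 ≤ hplus g a b) ∧
    (hplus g a b ≤ g a + L * max (a - b) 0 ∧ hplus g a b ≤ g b + L * max (a - b) 0) := by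
  unfold hplus
  rcases le_or_gt a b with hab | hab
  · rw [if_pos hab]
    have e1 : max (b - a) 0 = b - a := max_eq_left (by linarith)
    have e2 : max (a - b) 0 = 0 := max_eq_right (by linarith)
    rw [e1, e2]
    have hsub : Set.Icc a b ⊆ Set.Icc (0:ℝ) 1 := Set.Icc_subset_Icc ha.1 hb.2
    have hma : g a ∈ g '' Set.Icc a b := ⟨a, Set.left_mem_Icc.2 hab, rfl⟩
    have hmb : g b ∈ g '' Set.Icc a b := ⟨b, Set.right_mem_Icc.2 hab, rfl⟩
    have hlba : ∀ y ∈ g '' Set.Icc a b, g a - L * (b - a) ≤ y := by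
      rintro y ⟨s, hs, rfl⟩
      have h1 := (abs_le.1 (hlip a ha s (hsub hs))).2
      have h2 : |a - s| ≤ b - a := by
        rw [abs_sub_comm, abs_of_nonneg (by linarith [hs.1])]
        linarith [hs.2]
      nlinarith [mul_le_mul_of_nonneg_left h2 hL]
    have hlbb : ∀ y ∈ g '' Set.Icc a b, g b - L * (b - a) ≤ y := by
      rintro y ⟨s, hs, rfl⟩
      have h1 := (abs_le.1 (hlip b hb s (hsub hs))).2
      have h2 : |b - s| ≤ b - a := by
        rw [abs_of_nonneg (by linarith [hs.2])]
        linarith [hs.1]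
      nlinarith [mul_le_mul_of_nonneg_left h2 hL]
    have hbdd : BddBelow (g '' Set.Icc a b) := ⟨g a - L * (b - a), fun y hy => hlba y hy⟩
    refine ⟨⟨le_csInf ⟨_, hma⟩ hlba, le_csInf ⟨_, hma⟩ hlbb⟩, ?_, ?_⟩
    · have := csInf_le hbdd hma; linarith
    · have := csInf_le hbdd hmb; linarith
  · rw [if_neg (not_le.2 hab)]
    have e1 : max (b - a) 0 = 0 := max_eq_right (by linarith)
    have e2 : max (a - b) 0 = a - b := max_eq_left (by linarith)
    rw [e1, e2]
    have hsub : Set.Icc b a ⊆ Set.Icc (0:ℝ) 1 := Set.Icc_subset_Icc hb.1 ha.2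
    have hma : g a ∈ g '' Set.Icc b a := ⟨a, Set.right_mem_Icc.2 hab.le, rfl⟩
    have hmb : g b ∈ g '' Set.Icc b a := ⟨b, Set.left_mem_Icc.2 hab.le, rfl⟩
    have huba : ∀ y ∈ g '' Set.Icc b a, y ≤ g a + L * (a - b) := by
      rintro y ⟨s, hs, rfl⟩
      have h1 := (abs_le.1 (hlip s (hsub hs) a ha)).2
      have h2 : |s - a| ≤ a - b := by
        rw [abs_sub_comm, abs_of_nonneg (by linarith [hs.2])]
        linarith [hs.1]
      nlinarith [mul_le_mul_of_nonneg_left h2 hL]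
    have hubb : ∀ y ∈ g '' Set.Icc b a, y ≤ g b + L * (a - b) := by
      rintro y ⟨s, hs, rfl⟩
      have h1 := (abs_le.1 (hlip s (hsub hs) b hb)).2
      have h2 : |s - b| ≤ a - b := by
        rw [abs_of_nonneg (by linarith [hs.1])]
        linarith [hs.2]
      nlinarith [mul_le_mul_of_nonneg_left h2 hL]
    have hbdd : BddAbove (g '' Set.Icc b a) := ⟨g a + L * (a - b), fun y hy => huba y hy⟩
    refine ⟨⟨?_, ?_⟩, csSup_le ⟨_, hma⟩ huba, csSup_le ⟨_, hma⟩ hubb⟩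
    · have := le_csSup hbdd hma; linarith
    · have := le_csSup hbdd hmb; linarith

lemma Hplus_mem (g : ℝ → ℝ) (L k h M : ℝ) (hL : 0 ≤ L) (hk : 0 < k) (hh : 0 < h)
    (hkL : k * L ≤ h / 2)
    (hlip : ∀ x ∈ Set.Icc (0:ℝ) 1, ∀ y ∈ Set.Icc (0:ℝ) 1, |g x - g y| ≤ L * |x - y|)
    (hM0 : 0 ≤ M) (hM1 : M ≤ 1)
    {a b c : ℝ} (ha : a ∈ Set.Icc 0 M) (hb : b ∈ Set.Icc 0 M) (hc : c ∈ Set.Icc 0 M) :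
    Hplus g k h a b c ∈ Set.Icc 0 M := by
  have ha1 : a ∈ Set.Icc (0:ℝ) 1 := ⟨ha.1, le_trans ha.2 hM1⟩
  have hb1 : b ∈ Set.Icc (0:ℝ) 1 := ⟨hb.1, le_trans hb.2 hM1⟩
  have hc1 : c ∈ Set.Icc (0:ℝ) 1 := ⟨hc.1, le_trans hc.2 hM1⟩
  have B1 := gdnv_bounds g L hL hlip ha1 hb1
  have B2 := gdnv_bounds g L hL hlip hb1 hc1
  have m1 : max (b - a) 0 ≤ b := max_le (by linarith [ha.1]) hb.1
  have m2 : max (a - b) 0 ≤ M - b := max_le (by linarith [ha.2]) (by linarith [hb.2])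
  have m3 : max (c - b) 0 ≤ M - b := max_le (by linarith [hc.2]) (by linarith [hb.2])
  have m4 : max (b - c) 0 ≤ b := max_le (by linarith [hc.1]) hb.1
  have hYlb : g b - L * b ≤ hplus g a b := by
    nlinarith [B1.1.2, mul_le_mul_of_nonneg_left m1 hL]
  have hYub : hplus g a b ≤ g b + L * (M - b) := by
    nlinarith [B1.2.2, mul_le_mul_of_nonneg_left m2 hL]
  have hXlb : g b - L * (M - b) ≤ hplus g b c := by
    nlinarith [B2.1.1, mul_le_mul_of_nonneg_left m3 hL]
  have hXub : hplus g b c ≤ g b + L * b := by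
    nlinarith [B2.2.1, mul_le_mul_of_nonneg_left m4 hL]
  rw [Hplus, Set.mem_Icc]
  constructor
  · have key : (k / h) * (hplus g b c - hplus g a b) ≤ b := by
      rw [div_mul_eq_mul_div, div_le_iff₀ hh]
      nlinarith [mul_le_mul_of_nonneg_left (show hplus g b c - hplus g a b ≤ 2 * (L * b) by linarith) hk.le,
        mul_le_mul_of_nonneg_right hkL hb.1]
    linarith
  · have key : (k / h) * (hplus g a b - hplus g b c) ≤ M - b := by
      rw [div_mul_eq_mul_div, div_le_iff₀ hh]
      nlinarith [mul_le_mul_of_nonneg_left (show hplus g a b - hplus g b c ≤ 2 * (L * (M - b)) by linarith) hk.le,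
        mul_le_mul_of_nonneg_right hkL (by linarith [hb.2] : (0:ℝ) ≤ M - b)]
    have : (k / h) * (hplus g b c - hplus g a b) = -((k / h) * (hplus g a b - hplus g b c)) := by ring
    linarith

set_option maxHeartbeats 3200000 in
/-- Uniform `L^∞` bound: all the marching operators of the moving-mesh Godunov scheme
map `[0, M]`-valued data to `[0, M]`-valued data, so the finite volume approximations
remain in `[0, ‖ρ₀‖_∞]` for all times. -/
theorem stmt_16
    (f : ℝ → ℝ)
    (hcont : ContinuousOn f (Set.Icc 0 1))
    (hconc : ConcaveOn ℝ (Set.Icc 0 1) f)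
    (L : ℝ) (hL : 0 < L)
    (hlip : ∀ x ∈ Set.Icc (0:ℝ) 1, ∀ y ∈ Set.Icc (0:ℝ) 1, |f x - f y| ≤ L * |x - y|)
    (hf0 : f 0 = 0) (hf1 : f 1 = 0)
    (k h α ΔL ΔR : ℝ) (hk : 0 < k) (hh : 0 < h)
    (hCFL : k * max L |α| ≤ h / 2)
    (hΔL : h ≤ ΔL ∧ ΔL ≤ 2 * h) (hΔR : h ≤ ΔR ∧ ΔR ≤ 2 * h)
    (M : ℝ) (hM : M ∈ Set.Icc (0:ℝ) 1) :
    (∀ a b c : ℝ, a ∈ Set.Icc 0 M → b ∈ Set.Icc 0 M → c ∈ Set.Icc 0 M →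
      Hplus f k h a b c ∈ Set.Icc 0 M ∧
      Hminus f k h a b c ∈ Set.Icc 0 M ∧
      HABL f α k ΔL a b c ∈ Set.Icc 0 M ∧
      HACR f α k ΔR a b c ∈ Set.Icc 0 M) ∧
    (∀ a b c d : ℝ, a ∈ Set.Icc 0 M → b ∈ Set.Icc 0 M → c ∈ Set.Icc 0 M →
      d ∈ Set.Icc 0 M →
      HCL f α k h ΔL a b c d ∈ Set.Icc 0 M ∧
      HBR f α k h ΔR a b c d ∈ Set.Icc 0 M) := by
  obtain ⟨hM0, hM1⟩ := hM
  have hL' : 0 ≤ L := hL.le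
  have hkL : k * L ≤ h / 2 :=
    le_trans (mul_le_mul_of_nonneg_left (le_max_left L |α|) hk.le) hCFL
  have hkabs : k * |α| ≤ h / 2 :=
    le_trans (mul_le_mul_of_nonneg_left (le_max_right L |α|) hk.le) hCFL
  have hkα1 : k * α ≤ h / 2 :=
    le_trans (mul_le_mul_of_nonneg_left (le_abs_self α) hk.le) hkabs
  have hkα2 : -(h / 2) ≤ k * α := by
    have := mul_le_mul_of_nonneg_left (neg_abs_le α) hk.le
    linarith
  have hlipneg : ∀ x ∈ Set.Icc (0:ℝ) 1, ∀ y ∈ Set.Icc (0:ℝ) 1,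
      |(fun s => -f s) x - (fun s => -f s) y| ≤ L * |x - y| := by
    intro x hx y hy
    simp only
    rw [show -f x - -f y = -(f x - f y) by ring, abs_neg]
    exact hlip x hx y hy
  have hfnn : ∀ x ∈ Set.Icc (0:ℝ) 1, 0 ≤ f x := by
    intro x hx
    have h := hconc.2 (Set.mem_Icc.2 ⟨le_refl 0, zero_le_one⟩)
      (Set.mem_Icc.2 ⟨zero_le_one, le_refl 1⟩)
      (show (0:ℝ) ≤ 1 - x by linarith [hx.2]) hx.1 (by ring)
    simpa [hf0, hf1] using h
  have hfL : ∀ x ∈ Set.Icc (0:ℝ) 1, f x ≤ L * x := by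
    intro x hx
    have h1 := (abs_le.1 (hlip x hx 0 ⟨le_refl 0, zero_le_one⟩)).2
    rw [hf0, sub_zero, sub_zero, abs_of_nonneg hx.1] at h1
    exact h1
  constructor
  · intro a b c ha hb hc
    have ha1 : a ∈ Set.Icc (0:ℝ) 1 := ⟨ha.1, le_trans ha.2 hM1⟩
    have hb1 : b ∈ Set.Icc (0:ℝ) 1 := ⟨hb.1, le_trans hb.2 hM1⟩
    have hc1 : c ∈ Set.Icc (0:ℝ) 1 := ⟨hc.1, le_trans hc.2 hM1⟩
    have hfb0 : 0 ≤ f b := hfnn b hb1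
    have hfc0 : 0 ≤ f c := hfnn c hc1
    have hfa0 : 0 ≤ f a := hfnn a ha1
    have hfbL : f b ≤ L * b := hfL b hb1
    have hMb : (0:ℝ) ≤ M - b := by linarith [hb.2]
    have pos1 : (0:ℝ) ≤ h * (M - b) := mul_nonneg hh.le hMb
    have pos2 : (0:ℝ) ≤ h * b := mul_nonneg hh.le hb.1
    have pos3 : (0:ℝ) ≤ ΔL * (M - b) := mul_nonneg (by linarith [hΔL.1]) hMb
    have pos4 : (0:ℝ) ≤ ΔR * (M - b) := mul_nonneg (by linarith [hΔR.1]) hMb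
    -- bounds for hminus f a b (Godunov of -f, bounds at endpoint b)
    have BQ := gdnv_bounds (fun s => -f s) L hL' hlipneg ha1 hb1
    have m1 : max (b - a) 0 ≤ b := max_le (by linarith [ha.1]) hb.1
    have m2 : max (a - b) 0 ≤ M - b := max_le (by linarith [ha.2]) (by linarith [hb.2])
    have hQlb : -f b - L * b ≤ hminus f a b := by
      have h1 : -f b - L * max (b - a) 0 ≤ hminus f a b := BQ.1.2
      linarith [mul_le_mul_of_nonneg_left m1 hL']
    have hQub : hminus f a b ≤ -f b + L * (M - b) := by
      have h1 : hminus f a b ≤ -f b + L * max (a - b) 0 := BQ.2.2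
      linarith [mul_le_mul_of_nonneg_left m2 hL']
    -- bounds for hplus f b c (at endpoint b)
    have BX := gdnv_bounds f L hL' hlip hb1 hc1
    have m3 : max (c - b) 0 ≤ M - b := max_le (by linarith [hc.2]) (by linarith [hb.2])
    have m4 : max (b - c) 0 ≤ b := max_le (by linarith [hc.1]) hb.1
    have hXlb : f b - L * (M - b) ≤ hplus f b c := by
      linarith [BX.1.1, mul_le_mul_of_nonneg_left m3 hL']
    have hXub : hplus f b c ≤ f b + L * b := by
      linarith [BX.2.1, mul_le_mul_of_nonneg_left m4 hL']
    refine ⟨Hplus_mem f L k h M hL' hk hh hkL hlip hM0 hM1 ha hb hc, ?_, ?_, ?_⟩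
    · exact Hplus_mem (fun s => -f s) L k h M hL' hk hh hkL hlipneg hM0 hM1 ha hb hc
    · -- HABL
      have hD : (0:ℝ) < ΔL + α * k := by linarith [hΔL.1]
      rw [HABL, h0flux, Set.mem_Icc]
      constructor
      · apply div_nonneg _ hD.le
        rcases le_or_gt (-α * b - f b) 0 with hcase | hcase
        · rw [max_eq_right hcase]
          linarith [mul_le_mul_of_nonneg_left hQlb hk.le,
            mul_le_mul_of_nonneg_left hfbL hk.le,
            mul_le_mul_of_nonneg_right hkL hb.1,
            mul_le_mul_of_nonneg_right hΔL.1 hb.1,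
            mul_nonneg hk.le (le_max_right (α * c - f c) 0)]
        · rw [max_eq_left hcase.le]
          linarith [mul_le_mul_of_nonneg_left hQlb hk.le,
            mul_le_mul_of_nonneg_left hfbL hk.le,
            mul_le_mul_of_nonneg_right hkL hb.1,
            mul_le_mul_of_nonneg_right hΔL.1 hb.1,
            mul_le_mul_of_nonneg_right hkα2 hb.1,
            mul_nonneg hk.le (le_max_right (α * c - f c) 0)]
      · rw [div_le_iff₀ hD]
        have hMb : (0:ℝ) ≤ M - b := by linarith [hb.2]
        rcases le_or_gt 0 α with hα | hα
        · have hP1u : max (α * c - f c) 0 ≤ α * M :=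
            max_le (by linarith [hc.2, hc.1, mul_le_mul_of_nonneg_left hc.2 hα])
              (mul_nonneg hα hM0)
          linarith [mul_le_mul_of_nonneg_left hP1u hk.le,
            mul_le_mul_of_nonneg_left hQub hk.le,
            mul_le_mul_of_nonneg_right hkL hMb,
            mul_le_mul_of_nonneg_right hΔL.1 hMb,
            mul_nonneg hk.le (le_max_right (-α * b - f b) 0),
            mul_nonneg hk.le hfb0]
        · have hP1u : max (α * c - f c) 0 ≤ 0 :=
            max_le (by linarith [mul_nonneg (neg_nonneg.2 hα.le) hc.1]) le_rfl
          linarith [mul_le_mul_of_nonneg_left hP1u hk.le,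
            mul_le_mul_of_nonneg_left hQub hk.le,
            mul_le_mul_of_nonneg_right hkL hMb,
            mul_le_mul_of_nonneg_left (le_max_left (-α * b - f b) 0) hk.le,
            mul_nonneg (by linarith [hΔL.1] : (0:ℝ) ≤ ΔL + k * α - h / 2) hMb]
    · -- HACR
      have hD : (0:ℝ) < ΔR - α * k := by linarith [hΔR.1]
      rw [HACR, h0flux, Set.mem_Icc]
      constructor
      · apply div_nonneg _ hD.le
        rcases le_or_gt (α * b - f b) 0 with hcase | hcase
        · rw [max_eq_right hcase]
          linarith [mul_le_mul_of_nonneg_left hXub hk.le,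
            mul_le_mul_of_nonneg_left hfbL hk.le,
            mul_le_mul_of_nonneg_right hkL hb.1,
            mul_le_mul_of_nonneg_right hΔR.1 hb.1,
            mul_nonneg hk.le (le_max_right (-α * a - f a) 0)]
        · rw [max_eq_left hcase.le]
          linarith [mul_le_mul_of_nonneg_left hXub hk.le,
            mul_le_mul_of_nonneg_left hfbL hk.le,
            mul_le_mul_of_nonneg_right hkL hb.1,
            mul_le_mul_of_nonneg_right hΔR.1 hb.1,
            mul_le_mul_of_nonneg_right hkα1 hb.1,
            mul_nonneg hk.le (le_max_right (-α * a - f a) 0)]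
      · rw [div_le_iff₀ hD]
        have hMb : (0:ℝ) ≤ M - b := by linarith [hb.2]
        rcases le_or_gt α 0 with hα | hα
        · have hR2u : max (-α * a - f a) 0 ≤ -α * M :=
            max_le (by linarith [mul_le_mul_of_nonneg_left ha.2 (neg_nonneg.2 hα)])
              (mul_nonneg (neg_nonneg.2 hα) hM0)
          linarith [mul_le_mul_of_nonneg_left hR2u hk.le,
            mul_le_mul_of_nonneg_left hXlb hk.le,
            mul_le_mul_of_nonneg_right hkL hMb,
            mul_le_mul_of_nonneg_right hΔR.1 hMb,
            mul_nonneg hk.le (le_max_right (α * b - f b) 0),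
            mul_nonneg hk.le hfb0]
        · have hR2u : max (-α * a - f a) 0 ≤ 0 :=
            max_le (by linarith [mul_nonneg hα.le ha.1]) le_rfl
          linarith [mul_le_mul_of_nonneg_left hR2u hk.le,
            mul_le_mul_of_nonneg_left hXlb hk.le,
            mul_le_mul_of_nonneg_right hkL hMb,
            mul_le_mul_of_nonneg_left (le_max_left (α * b - f b) 0) hk.le,
            mul_nonneg (by linarith [hΔR.1] : (0:ℝ) ≤ ΔR - k * α - k * L) hMb]
  · intro a b c d ha hb hc hd
    have ha1 : a ∈ Set.Icc (0:ℝ) 1 := ⟨ha.1, le_trans ha.2 hM1⟩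
    have hb1 : b ∈ Set.Icc (0:ℝ) 1 := ⟨hb.1, le_trans hb.2 hM1⟩
    have hc1 : c ∈ Set.Icc (0:ℝ) 1 := ⟨hc.1, le_trans hc.2 hM1⟩
    have hd1 : d ∈ Set.Icc (0:ℝ) 1 := ⟨hd.1, le_trans hd.2 hM1⟩
    have hfa0 : 0 ≤ f a := hfnn a ha1
    have hfb0 : 0 ≤ f b := hfnn b hb1
    have hfc0 : 0 ≤ f c := hfnn c hc1
    have hfd0 : 0 ≤ f d := hfnn d hd1
    have hfbL : f b ≤ L * b := hfL b hb1
    have hfcL : f c ≤ L * c := hfL c hc1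
    have hMb : (0:ℝ) ≤ M - b := by linarith [hb.2]
    have hMc : (0:ℝ) ≤ M - c := by linarith [hc.2]
    have pos1 : (0:ℝ) ≤ h * (M - b) := mul_nonneg hh.le hMb
    have pos2 : (0:ℝ) ≤ h * b := mul_nonneg hh.le hb.1
    have pos1c : (0:ℝ) ≤ h * (M - c) := mul_nonneg hh.le hMc
    have pos2c : (0:ℝ) ≤ h * c := mul_nonneg hh.le hc.1
    have pos3 : (0:ℝ) ≤ ΔL * (M - b) := mul_nonneg (by linarith [hΔL.1]) hMb
    have pos4 : (0:ℝ) ≤ ΔR * (M - b) := mul_nonneg (by linarith [hΔR.1]) hMb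
    -- hminus f a b bounds at b
    have BQ := gdnv_bounds (fun s => -f s) L hL' hlipneg ha1 hb1
    have m1 : max (b - a) 0 ≤ b := max_le (by linarith [ha.1]) hb.1
    have m2 : max (a - b) 0 ≤ M - b := max_le (by linarith [ha.2]) (by linarith [hb.2])
    have hQlb : -f b - L * b ≤ hminus f a b := by
      have h1 : -f b - L * max (b - a) 0 ≤ hminus f a b := BQ.1.2
      linarith [mul_le_mul_of_nonneg_left m1 hL']
    have hQub : hminus f a b ≤ -f b + L * (M - b) := by
      have h1 : hminus f a b ≤ -f b + L * max (a - b) 0 := BQ.2.2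
      linarith [mul_le_mul_of_nonneg_left m2 hL']
    -- hplus f c d bounds at c
    have BX := gdnv_bounds f L hL' hlip hc1 hd1
    have m3 : max (d - c) 0 ≤ M - c := max_le (by linarith [hd.2]) (by linarith [hc.2])
    have m4 : max (c - d) 0 ≤ c := max_le (by linarith [hd.1]) hc.1
    have hXlb : f c - L * (M - c) ≤ hplus f c d := by
      linarith [BX.1.1, mul_le_mul_of_nonneg_left m3 hL']
    have hXub : hplus f c d ≤ f c + L * c := by
      linarith [BX.2.1, mul_le_mul_of_nonneg_left m4 hL']
    -- |f c - f b| ≤ L * ((M-b)+(M-c)) type bound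
    have hbc : f b - f c ≤ L * ((M - b) + (M - c)) := by
      have h1 := (abs_le.1 (hlip b hb1 c hc1)).2
      have h2 : |b - c| ≤ (M - b) + (M - c) := abs_le.2 ⟨by linarith [hb.2, hc.2], by linarith [hb.2, hc.2]⟩
      linarith [mul_le_mul_of_nonneg_left h2 hL']
    have hcb : f c - f b ≤ L * ((M - b) + (M - c)) := by
      have h1 := (abs_le.1 (hlip c hc1 b hb1)).2
      have h2 : |c - b| ≤ (M - b) + (M - c) := abs_le.2 ⟨by linarith [hb.2, hc.2], by linarith [hb.2, hc.2]⟩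
      linarith [mul_le_mul_of_nonneg_left h2 hL']
    constructor
    · -- HCL
      have hD : (0:ℝ) < ΔL + h + α * k := by linarith [hΔL.1]
      rw [HCL, h0flux, Set.mem_Icc]
      constructor
      · apply div_nonneg _ hD.le
        rcases le_or_gt (-α * c - f c) 0 with hcase | hcase
        · rw [max_eq_right hcase]
          linarith [mul_le_mul_of_nonneg_left hQlb hk.le,
            mul_le_mul_of_nonneg_left hfbL hk.le,
            mul_le_mul_of_nonneg_right hkL hb.1,
            mul_le_mul_of_nonneg_right hΔL.1 hb.1,
            mul_nonneg hk.le (le_max_right (α * d - f d) 0),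
            mul_nonneg hh.le hc.1]
        · rw [max_eq_left hcase.le]
          linarith [mul_le_mul_of_nonneg_left hQlb hk.le,
            mul_le_mul_of_nonneg_left hfbL hk.le,
            mul_le_mul_of_nonneg_right hkL hb.1,
            mul_le_mul_of_nonneg_right hΔL.1 hb.1,
            mul_le_mul_of_nonneg_right hkα2 hc.1,
            mul_nonneg hk.le (le_max_right (α * d - f d) 0),
            mul_nonneg hk.le hfc0]
      · rw [div_le_iff₀ hD]
        rcases le_or_gt 0 α with hα | hα
        · have hP1u : max (α * d - f d) 0 ≤ α * M :=
            max_le (by linarith [mul_le_mul_of_nonneg_left hd.2 hα]) (mul_nonneg hα hM0)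
          linarith [mul_le_mul_of_nonneg_left hP1u hk.le,
            mul_le_mul_of_nonneg_left hQub hk.le,
            mul_le_mul_of_nonneg_right hkL hMb,
            mul_le_mul_of_nonneg_right hΔL.1 hMb,
            mul_nonneg hk.le (le_max_right (-α * c - f c) 0),
            mul_nonneg hk.le hfb0,
            mul_le_mul_of_nonneg_left hc.2 hh.le]
        · have hP1u : max (α * d - f d) 0 ≤ 0 :=
            max_le (by linarith [mul_nonneg (neg_nonneg.2 hα.le) hd.1]) le_rfl
          linarith [mul_le_mul_of_nonneg_left hP1u hk.le,
            mul_le_mul_of_nonneg_left hQub hk.le,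
            mul_le_mul_of_nonneg_right hkL hMb,
            mul_le_mul_of_nonneg_left (le_max_left (-α * c - f c) 0) hk.le,
            mul_le_mul_of_nonneg_left hcb hk.le,
            mul_le_mul_of_nonneg_right hkα2 hMc,
            mul_le_mul_of_nonneg_right hkL hMc,
            mul_le_mul_of_nonneg_right hΔL.1 hMb,
            mul_le_mul_of_nonneg_left hc.2 hh.le,
            mul_le_mul_of_nonneg_right hkL hMb]
    · -- HBR
      have hD : (0:ℝ) < ΔR + h - α * k := by linarith [hΔR.1]
      rw [HBR, h0flux, Set.mem_Icc]
      constructor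
      · apply div_nonneg _ hD.le
        rcases le_or_gt (α * b - f b) 0 with hcase | hcase
        · rw [max_eq_right hcase]
          linarith [mul_le_mul_of_nonneg_left hXub hk.le,
            mul_le_mul_of_nonneg_left hfcL hk.le,
            mul_le_mul_of_nonneg_right hkL hc.1,
            mul_le_mul_of_nonneg_right hΔR.1 hb.1,
            mul_nonneg hk.le (le_max_right (-α * a - f a) 0)]
        · rw [max_eq_left hcase.le]
          linarith [mul_le_mul_of_nonneg_left hXub hk.le,
            mul_le_mul_of_nonneg_left hfcL hk.le,
            mul_le_mul_of_nonneg_right hkL hc.1,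
            mul_le_mul_of_nonneg_right hΔR.1 hb.1,
            mul_le_mul_of_nonneg_right hkα1 hb.1,
            mul_nonneg hk.le (le_max_right (-α * a - f a) 0),
            mul_nonneg hk.le hfb0]
      · rw [div_le_iff₀ hD]
        rcases le_or_gt α 0 with hα | hα
        · have hR2u : max (-α * a - f a) 0 ≤ -α * M :=
            max_le (by linarith [mul_le_mul_of_nonneg_left ha.2 (neg_nonneg.2 hα)])
              (mul_nonneg (neg_nonneg.2 hα) hM0)
          linarith [mul_le_mul_of_nonneg_left hR2u hk.le,
            mul_le_mul_of_nonneg_left hXlb hk.le,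
            mul_le_mul_of_nonneg_right hkL hMc,
            mul_le_mul_of_nonneg_right hΔR.1 hMb,
            mul_nonneg hk.le (le_max_right (α * b - f b) 0),
            mul_nonneg hk.le hfc0,
            mul_le_mul_of_nonneg_left hc.2 hh.le,
            mul_le_mul_of_nonneg_right hΔR.1 hMb]
        · have hR2u : max (-α * a - f a) 0 ≤ 0 :=
            max_le (by linarith [mul_nonneg hα.le ha.1]) le_rfl
          linarith [mul_le_mul_of_nonneg_left hR2u hk.le,
            mul_le_mul_of_nonneg_left hXlb hk.le,
            mul_le_mul_of_nonneg_right hkL hMc,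
            mul_le_mul_of_nonneg_left (le_max_left (α * b - f b) 0) hk.le,
            mul_le_mul_of_nonneg_left hbc hk.le,
            mul_le_mul_of_nonneg_right hkα1 hMb,
            mul_le_mul_of_nonneg_right hkL hMb,
            mul_le_mul_of_nonneg_right hΔR.1 hMb,
            mul_le_mul_of_nonneg_left hc.2 hh.le]
end

section
/- Let f : [0,1] → ℝ be continuous and Lipschitz on [0,1] with constant L > 0, and let k, h > 0 satisfy the CFL condition k·L ≤ h/2. Then for all a, b, c, κ ∈ [0,1] and for both sign choices ±: h·|H^±(a,b,c) − κ| ≤ h·|b − κ| − k·[(h^±(b∨κ, c∨κ) − h^±(b∧κ, c∧κ)) − (h^±(a∨κ, b∨κ) − h^±(a∧κ, b∧κ))], where ∨ and ∧ denote max and min. (Discrete Kruzhkov entropy inequality on the standard cells.) -/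
section aux
variable {f : ℝ → ℝ} {L : ℝ}

private lemma icc_sub {a b : ℝ} (ha : a ∈ Set.Icc (0:ℝ) 1) (hb : b ∈ Set.Icc (0:ℝ) 1) :
    Set.Icc a b ⊆ Set.Icc (0:ℝ) 1 := Set.Icc_subset_Icc ha.1 hb.2

private lemma img_compact (hcont : ContinuousOn f (Set.Icc 0 1)) {a b : ℝ}
    (ha : a ∈ Set.Icc (0:ℝ) 1) (hb : b ∈ Set.Icc (0:ℝ) 1) :
    IsCompact (f '' Set.Icc a b) :=
  isCompact_Icc.image_of_continuousOn (hcont.mono (icc_sub ha hb))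

private lemma inf_spec (hcont : ContinuousOn f (Set.Icc 0 1)) {a b : ℝ}
    (ha : a ∈ Set.Icc (0:ℝ) 1) (hb : b ∈ Set.Icc (0:ℝ) 1) (hab : a ≤ b) :
    (∃ x ∈ Set.Icc a b, f x = sInf (f '' Set.Icc a b)) ∧
      ∀ x ∈ Set.Icc a b, sInf (f '' Set.Icc a b) ≤ f x := by
  have hc := img_compact hcont ha hb
  have hne : (f '' Set.Icc a b).Nonempty := (Set.nonempty_Icc.2 hab).image f
  refine ⟨?_, fun x hx => csInf_le hc.bddBelow ⟨x, hx, rfl⟩⟩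
  obtain ⟨x, hx, hfx⟩ := hc.sInf_mem hne
  exact ⟨x, hx, hfx⟩

private lemma sup_spec (hcont : ContinuousOn f (Set.Icc 0 1)) {a b : ℝ}
    (ha : a ∈ Set.Icc (0:ℝ) 1) (hb : b ∈ Set.Icc (0:ℝ) 1) (hab : a ≤ b) :
    (∃ x ∈ Set.Icc a b, f x = sSup (f '' Set.Icc a b)) ∧
      ∀ x ∈ Set.Icc a b, f x ≤ sSup (f '' Set.Icc a b) := by
  have hc := img_compact hcont ha hb
  have hne : (f '' Set.Icc a b).Nonempty := (Set.nonempty_Icc.2 hab).image f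
  refine ⟨?_, fun x hx => le_csSup hc.bddAbove ⟨x, hx, rfl⟩⟩
  obtain ⟨x, hx, hfx⟩ := hc.sSup_mem hne
  exact ⟨x, hx, hfx⟩

/-- Godunov flux is nondecreasing in its first argument. -/
private lemma hplus_mono1 (hcont : ContinuousOn f (Set.Icc 0 1)) {a1 a2 b : ℝ}
    (ha1 : a1 ∈ Set.Icc (0:ℝ) 1) (ha2 : a2 ∈ Set.Icc (0:ℝ) 1) (hb : b ∈ Set.Icc (0:ℝ) 1)
    (h12 : a1 ≤ a2) : hplus f a1 b ≤ hplus f a2 b := by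
  rcases le_or_gt a2 b with h2b | hb2
  · have h1b : a1 ≤ b := h12.trans h2b
    rw [hplus, hplus, if_pos h1b, if_pos h2b]
    exact csInf_le_csInf (img_compact hcont ha1 hb).bddBelow
      ((Set.nonempty_Icc.2 h2b).image f)
      (Set.image_mono (f := f) (Set.Icc_subset_Icc_left h12))
  · rcases le_or_gt a1 b with h1b | hb1
    · rw [hplus, hplus, if_pos h1b, if_neg (not_le.2 hb2)]
      have h1 := (inf_spec hcont ha1 hb h1b).2 b ⟨h1b, le_rfl⟩
      have h2 := (sup_spec hcont hb ha2 hb2.le).2 b ⟨le_rfl, hb2.le⟩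
      linarith
    · rw [hplus, hplus, if_neg (not_le.2 hb1), if_neg (not_le.2 hb2)]
      exact csSup_le_csSup (img_compact hcont hb ha2).bddAbove
        ((Set.nonempty_Icc.2 hb1.le).image f)
        (Set.image_mono (f := f) (Set.Icc_subset_Icc_right h12))

/-- Godunov flux is nonincreasing in its second argument. -/
private lemma hplus_anti2 (hcont : ContinuousOn f (Set.Icc 0 1)) {a b1 b2 : ℝ}
    (ha : a ∈ Set.Icc (0:ℝ) 1) (hb1 : b1 ∈ Set.Icc (0:ℝ) 1) (hb2 : b2 ∈ Set.Icc (0:ℝ) 1)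
    (h12 : b1 ≤ b2) : hplus f a b2 ≤ hplus f a b1 := by
  rcases le_or_gt a b1 with hab | hba
  · have hab2 : a ≤ b2 := hab.trans h12
    rw [hplus, hplus, if_pos hab, if_pos hab2]
    exact csInf_le_csInf (img_compact hcont ha hb2).bddBelow
      ((Set.nonempty_Icc.2 hab).image f)
      (Set.image_mono (f := f) (Set.Icc_subset_Icc_right h12))
  · rcases le_or_gt a b2 with hab2 | hba2
    · rw [hplus, hplus, if_pos hab2, if_neg (not_le.2 hba)]
      have h1 := (inf_spec hcont ha hb2 hab2).2 a ⟨le_rfl, hab2⟩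
      have h2 := (sup_spec hcont hb1 ha hba.le).2 a ⟨hba.le, le_rfl⟩
      linarith
    · rw [hplus, hplus, if_neg (not_le.2 hba2), if_neg (not_le.2 hba)]
      exact csSup_le_csSup (img_compact hcont hb1 ha).bddAbove
        ((Set.nonempty_Icc.2 hba2.le).image f)
        (Set.image_mono (f := f) (Set.Icc_subset_Icc_left h12))


/-- One-sided Lipschitz bound in the first argument. -/
private lemma hplus_lip1 (hcont : ContinuousOn f (Set.Icc 0 1)) (hL : 0 ≤ L)
    (hlip : ∀ x ∈ Set.Icc (0:ℝ) 1, ∀ y ∈ Set.Icc (0:ℝ) 1, |f x - f y| ≤ L * |x - y|)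
    {a1 a2 b : ℝ}
    (ha1 : a1 ∈ Set.Icc (0:ℝ) 1) (ha2 : a2 ∈ Set.Icc (0:ℝ) 1) (hb : b ∈ Set.Icc (0:ℝ) 1)
    (h12 : a1 ≤ a2) : hplus f a2 b - hplus f a1 b ≤ L * (a2 - a1) := by
  have hLd : 0 ≤ L * (a2 - a1) := mul_nonneg hL (by linarith)
  rcases le_or_gt a2 b with h2b | hb2
  · have h1b : a1 ≤ b := h12.trans h2b
    rw [hplus, hplus, if_pos h1b, if_pos h2b]
    obtain ⟨⟨x, hx, hfx⟩, _⟩ := inf_spec hcont ha1 hb h1b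
    have hlb2 := (inf_spec hcont ha2 hb h2b).2
    rcases le_or_gt a2 x with hax | hxa
    · have := hlb2 x ⟨hax, hx.2⟩
      linarith [hfx ▸ this]
    · have h1 : sInf (f '' Set.Icc a2 b) ≤ f a2 := hlb2 a2 ⟨le_rfl, h2b⟩
      have hxm : x ∈ Set.Icc (0:ℝ) 1 := icc_sub ha1 hb hx
      have h2 : f a2 - f x ≤ L * (a2 - x) := by
        have := le_of_abs_le (hlip a2 ha2 x hxm)
        rwa [abs_of_nonneg (by linarith : (0:ℝ) ≤ a2 - x)] at this
      have h3 : L * (a2 - x) ≤ L * (a2 - a1) :=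
        mul_le_mul_of_nonneg_left (by linarith [hx.1]) hL
      linarith [hfx]
  · rcases le_or_gt a1 b with h1b | hb1
    · rw [hplus, hplus, if_pos h1b, if_neg (not_le.2 hb2)]
      obtain ⟨⟨y, hy, hfy⟩, _⟩ := inf_spec hcont ha1 hb h1b
      obtain ⟨⟨x, hx, hfx⟩, _⟩ := sup_spec hcont hb ha2 hb2.le
      have hxm : x ∈ Set.Icc (0:ℝ) 1 := icc_sub hb ha2 hx
      have hym : y ∈ Set.Icc (0:ℝ) 1 := icc_sub ha1 hb hy
      have h2 : f x - f b ≤ L * (x - b) := by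
        have := le_of_abs_le (hlip x hxm b hb)
        rwa [abs_of_nonneg (by linarith [hx.1] : (0:ℝ) ≤ x - b)] at this
      have h3 : f b - f y ≤ L * (b - y) := by
        have := le_of_abs_le (hlip b hb y hym)
        rwa [abs_of_nonneg (by linarith [hy.2] : (0:ℝ) ≤ b - y)] at this
      have h4 : L * (x - b) ≤ L * (a2 - b) :=
        mul_le_mul_of_nonneg_left (by linarith [hx.2]) hL
      have h5 : L * (b - y) ≤ L * (b - a1) :=
        mul_le_mul_of_nonneg_left (by linarith [hy.1]) hL
      nlinarith [hfx, hfy]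
    · rw [hplus, hplus, if_neg (not_le.2 hb1), if_neg (not_le.2 hb2)]
      obtain ⟨⟨x, hx, hfx⟩, _⟩ := sup_spec hcont hb ha2 hb2.le
      have hub1 := (sup_spec hcont hb ha1 hb1.le).2
      rcases le_or_gt x a1 with hxa | hax
      · have := hub1 x ⟨hx.1, hxa⟩
        linarith [hfx ▸ this]
      · have h1 : f a1 ≤ sSup (f '' Set.Icc b a1) := hub1 a1 ⟨hb1.le, le_rfl⟩
        have hxm : x ∈ Set.Icc (0:ℝ) 1 := icc_sub hb ha2 hx
        have h2 : f x - f a1 ≤ L * (x - a1) := by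
          have := le_of_abs_le (hlip x hxm a1 ha1)
          rwa [abs_of_nonneg (by linarith : (0:ℝ) ≤ x - a1)] at this
        have h3 : L * (x - a1) ≤ L * (a2 - a1) :=
          mul_le_mul_of_nonneg_left (by linarith [hx.2]) hL
        linarith [hfx]

/-- One-sided Lipschitz bound in the second argument. -/
private lemma hplus_lip2 (hcont : ContinuousOn f (Set.Icc 0 1)) (hL : 0 ≤ L)
    (hlip : ∀ x ∈ Set.Icc (0:ℝ) 1, ∀ y ∈ Set.Icc (0:ℝ) 1, |f x - f y| ≤ L * |x - y|)
    {a b1 b2 : ℝ}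
    (ha : a ∈ Set.Icc (0:ℝ) 1) (hb1 : b1 ∈ Set.Icc (0:ℝ) 1) (hb2 : b2 ∈ Set.Icc (0:ℝ) 1)
    (h12 : b1 ≤ b2) : hplus f a b1 - hplus f a b2 ≤ L * (b2 - b1) := by
  have hLd : 0 ≤ L * (b2 - b1) := mul_nonneg hL (by linarith)
  rcases le_or_gt a b1 with hab | hba
  · have hab2 : a ≤ b2 := hab.trans h12
    rw [hplus, hplus, if_pos hab, if_pos hab2]
    obtain ⟨⟨x, hx, hfx⟩, _⟩ := inf_spec hcont ha hb2 hab2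
    have hlb1 := (inf_spec hcont ha hb1 hab).2
    rcases le_or_gt x b1 with hxb | hbx
    · have := hlb1 x ⟨hx.1, hxb⟩
      linarith [hfx ▸ this]
    · have h1 : sInf (f '' Set.Icc a b1) ≤ f b1 := hlb1 b1 ⟨hab, le_rfl⟩
      have hxm : x ∈ Set.Icc (0:ℝ) 1 := icc_sub ha hb2 hx
      have h2 : f b1 - f x ≤ L * (x - b1) := by
        have := le_of_abs_le (hlip b1 hb1 x hxm)
        rwa [abs_of_nonpos (by linarith : b1 - x ≤ (0:ℝ)), neg_sub] at this
      have h3 : L * (x - b1) ≤ L * (b2 - b1) :=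
        mul_le_mul_of_nonneg_left (by linarith [hx.2]) hL
      linarith [hfx]
  · rcases le_or_gt a b2 with hab2 | hba2
    · rw [hplus, hplus, if_pos hab2, if_neg (not_le.2 hba)]
      obtain ⟨⟨x, hx, hfx⟩, _⟩ := sup_spec hcont hb1 ha hba.le
      obtain ⟨⟨y, hy, hfy⟩, _⟩ := inf_spec hcont ha hb2 hab2
      have hxm : x ∈ Set.Icc (0:ℝ) 1 := icc_sub hb1 ha hx
      have hym : y ∈ Set.Icc (0:ℝ) 1 := icc_sub ha hb2 hy
      have h2 : f x - f a ≤ L * (a - x) := by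
        have := le_of_abs_le (hlip x hxm a ha)
        rwa [abs_of_nonpos (by linarith [hx.2] : x - a ≤ (0:ℝ)), neg_sub] at this
      have h3 : f a - f y ≤ L * (y - a) := by
        have := le_of_abs_le (hlip a ha y hym)
        rwa [abs_of_nonpos (by linarith [hy.1] : a - y ≤ (0:ℝ)), neg_sub] at this
      have h4 : L * (a - x) ≤ L * (a - b1) :=
        mul_le_mul_of_nonneg_left (by linarith [hx.1]) hL
      have h5 : L * (y - a) ≤ L * (b2 - a) :=
        mul_le_mul_of_nonneg_left (by linarith [hy.2]) hL
      nlinarith [hfx, hfy]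
    · rw [hplus, hplus, if_neg (not_le.2 hba2), if_neg (not_le.2 hba)]
      obtain ⟨⟨x, hx, hfx⟩, _⟩ := sup_spec hcont hb1 ha hba.le
      have hub2 := (sup_spec hcont hb2 ha hba2.le).2
      rcases le_or_gt b2 x with hbx | hxb
      · have := hub2 x ⟨hbx, hx.2⟩
        linarith [hfx ▸ this]
      · have h1 : f b2 ≤ sSup (f '' Set.Icc b2 a) := hub2 b2 ⟨le_rfl, hba2.le⟩
        have hxm : x ∈ Set.Icc (0:ℝ) 1 := icc_sub hb1 ha hx
        have h2 : f x - f b2 ≤ L * (b2 - x) := by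
          have := le_of_abs_le (hlip x hxm b2 hb2)
          rwa [abs_of_nonpos (by linarith : x - b2 ≤ (0:ℝ)), neg_sub] at this
        have h3 : L * (b2 - x) ≤ L * (b2 - b1) :=
          mul_le_mul_of_nonneg_left (by linarith [hx.1]) hL
        linarith [hfx]

end aux

section march
variable {f : ℝ → ℝ} {L k h : ℝ}

private lemma Hplus_diag (hcont : ContinuousOn f (Set.Icc 0 1)) {κ : ℝ}
    (hκ : κ ∈ Set.Icc (0:ℝ) 1) : Hplus f k h κ κ κ = κ := by
  have : hplus f κ κ = f κ := by
    rw [hplus, if_pos le_rfl, Set.Icc_self, Set.image_singleton, csInf_singleton]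
  simp [Hplus, this]

private lemma Hplus_mono_s17 (hcont : ContinuousOn f (Set.Icc 0 1)) (hL : 0 < L)
    (hlip : ∀ x ∈ Set.Icc (0:ℝ) 1, ∀ y ∈ Set.Icc (0:ℝ) 1, |f x - f y| ≤ L * |x - y|)
    (hk : 0 < k) (hh : 0 < h) (hCFL : k * L ≤ h / 2)
    {a1 a2 b1 b2 c1 c2 : ℝ}
    (ha1 : a1 ∈ Set.Icc (0:ℝ) 1) (ha2 : a2 ∈ Set.Icc (0:ℝ) 1)
    (hb1 : b1 ∈ Set.Icc (0:ℝ) 1) (hb2 : b2 ∈ Set.Icc (0:ℝ) 1)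
    (hc1 : c1 ∈ Set.Icc (0:ℝ) 1) (hc2 : c2 ∈ Set.Icc (0:ℝ) 1)
    (ea : a1 ≤ a2) (eb : b1 ≤ b2) (ec : c1 ≤ c2) :
    Hplus f k h a1 b1 c1 ≤ Hplus f k h a2 b2 c2 := by
  have hlam : (0:ℝ) ≤ k / h := le_of_lt (div_pos hk hh)
  have hlamL : k / h * L ≤ 1 / 2 := by
    rw [div_mul_eq_mul_div, div_le_div_iff₀ hh (by norm_num : (0:ℝ) < 2)]
    linarith
  -- step in a
  have step_a : Hplus f k h a1 b1 c1 ≤ Hplus f k h a2 b1 c1 := by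
    have := hplus_mono1 hcont ha1 ha2 hb1 ea
    unfold Hplus
    nlinarith [mul_le_mul_of_nonneg_left this hlam]
  -- step in c
  have step_c : Hplus f k h a2 b1 c1 ≤ Hplus f k h a2 b1 c2 := by
    have := hplus_anti2 hcont hb1 hc1 hc2 ec
    unfold Hplus
    nlinarith [mul_le_mul_of_nonneg_left this hlam]
  -- step in b
  have step_b : Hplus f k h a2 b1 c2 ≤ Hplus f k h a2 b2 c2 := by
    have l1 : hplus f b2 c2 - hplus f b1 c2 ≤ L * (b2 - b1) :=
      hplus_lip1 hcont hL.le hlip hb1 hb2 hc2 eb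
    have l2 : hplus f a2 b1 - hplus f a2 b2 ≤ L * (b2 - b1) :=
      hplus_lip2 hcont hL.le hlip ha2 hb1 hb2 eb
    have e1 := mul_le_mul_of_nonneg_left l1 hlam
    have e2 := mul_le_mul_of_nonneg_left l2 hlam
    have e3 : k / h * (L * (b2 - b1)) ≤ 1 / 2 * (b2 - b1) := by
      rw [← mul_assoc]
      exact mul_le_mul_of_nonneg_right hlamL (by linarith)
    unfold Hplus
    nlinarith
  linarith

private lemma mem_sup {a κ : ℝ} (ha : a ∈ Set.Icc (0:ℝ) 1) (hκ : κ ∈ Set.Icc (0:ℝ) 1) :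
    a ⊔ κ ∈ Set.Icc (0:ℝ) 1 := ⟨le_trans ha.1 le_sup_left, sup_le ha.2 hκ.2⟩

private lemma mem_inf {a κ : ℝ} (ha : a ∈ Set.Icc (0:ℝ) 1) (hκ : κ ∈ Set.Icc (0:ℝ) 1) :
    a ⊓ κ ∈ Set.Icc (0:ℝ) 1 := ⟨le_inf ha.1 hκ.1, le_trans inf_le_left ha.2⟩

private lemma key (hcont : ContinuousOn f (Set.Icc 0 1)) (hL : 0 < L)
    (hlip : ∀ x ∈ Set.Icc (0:ℝ) 1, ∀ y ∈ Set.Icc (0:ℝ) 1, |f x - f y| ≤ L * |x - y|)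
    (hk : 0 < k) (hh : 0 < h) (hCFL : k * L ≤ h / 2)
    {a b c κ : ℝ}
    (ha : a ∈ Set.Icc (0:ℝ) 1) (hb : b ∈ Set.Icc (0:ℝ) 1)
    (hc : c ∈ Set.Icc (0:ℝ) 1) (hκ : κ ∈ Set.Icc (0:ℝ) 1) :
    h * |Hplus f k h a b c - κ| ≤ h * |b - κ| -
      k * ((hplus f (b ⊔ κ) (c ⊔ κ) - hplus f (b ⊓ κ) (c ⊓ κ)) -
           (hplus f (a ⊔ κ) (b ⊔ κ) - hplus f (a ⊓ κ) (b ⊓ κ))) := by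
  have hA := mem_sup ha hκ; have hB := mem_sup hb hκ; have hC := mem_sup hc hκ
  have hA' := mem_inf ha hκ; have hB' := mem_inf hb hκ; have hC' := mem_inf hc hκ
  have h1 : Hplus f k h a b c ≤ Hplus f k h (a ⊔ κ) (b ⊔ κ) (c ⊔ κ) :=
    Hplus_mono_s17 hcont hL hlip hk hh hCFL ha hA hb hB hc hC le_sup_left le_sup_left le_sup_left
  have h2 : Hplus f k h (a ⊓ κ) (b ⊓ κ) (c ⊓ κ) ≤ Hplus f k h a b c :=
    Hplus_mono_s17 hcont hL hlip hk hh hCFL hA' ha hB' hb hC' hc inf_le_left inf_le_left inf_le_left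
  have h3 : κ ≤ Hplus f k h (a ⊔ κ) (b ⊔ κ) (c ⊔ κ) := by
    have := Hplus_mono_s17 hcont hL hlip hk hh hCFL hκ hA hκ hB hκ hC
      le_sup_right le_sup_right le_sup_right
    rwa [Hplus_diag hcont hκ] at this
  have h4 : Hplus f k h (a ⊓ κ) (b ⊓ κ) (c ⊓ κ) ≤ κ := by
    have := Hplus_mono_s17 hcont hL hlip hk hh hCFL hA' hκ hB' hκ hC' hκ
      inf_le_right inf_le_right inf_le_right
    rwa [Hplus_diag hcont hκ] at this
  have habs : |Hplus f k h a b c - κ| ≤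
      Hplus f k h (a ⊔ κ) (b ⊔ κ) (c ⊔ κ) - Hplus f k h (a ⊓ κ) (b ⊓ κ) (c ⊓ κ) :=
    abs_le.2 ⟨by linarith, by linarith⟩
  have hdiff : b ⊔ κ - b ⊓ κ = |b - κ| := (max_sub_min_eq_abs b κ).trans (abs_sub_comm κ b)
  calc h * |Hplus f k h a b c - κ|
      ≤ h * (Hplus f k h (a ⊔ κ) (b ⊔ κ) (c ⊔ κ) - Hplus f k h (a ⊓ κ) (b ⊓ κ) (c ⊓ κ)) :=
        mul_le_mul_of_nonneg_left habs hh.le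
    _ = h * (b ⊔ κ - b ⊓ κ) -
        k * ((hplus f (b ⊔ κ) (c ⊔ κ) - hplus f (b ⊓ κ) (c ⊓ κ)) -
             (hplus f (a ⊔ κ) (b ⊔ κ) - hplus f (a ⊓ κ) (b ⊓ κ))) := by
        unfold Hplus; field_simp; ring
    _ = _ := by rw [hdiff]

end march

/-- Discrete Kruzhkov entropy inequality on the standard cells, for both Godunov
marching operators `H^±`. -/
theorem stmt_17
    (f : ℝ → ℝ)
    (hcont : ContinuousOn f (Set.Icc 0 1))
    (L : ℝ) (hL : 0 < L)
    (hlip : ∀ x ∈ Set.Icc (0:ℝ) 1, ∀ y ∈ Set.Icc (0:ℝ) 1, |f x - f y| ≤ L * |x - y|)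
    (k h : ℝ) (hk : 0 < k) (hh : 0 < h)
    (hCFL : k * L ≤ h / 2) :
    ∀ a b c κ : ℝ, a ∈ Set.Icc (0:ℝ) 1 → b ∈ Set.Icc (0:ℝ) 1 →
      c ∈ Set.Icc (0:ℝ) 1 → κ ∈ Set.Icc (0:ℝ) 1 →
      h * |Hplus f k h a b c - κ| ≤ h * |b - κ| -
        k * ((hplus f (b ⊔ κ) (c ⊔ κ) - hplus f (b ⊓ κ) (c ⊓ κ)) -
             (hplus f (a ⊔ κ) (b ⊔ κ) - hplus f (a ⊓ κ) (b ⊓ κ))) ∧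
      h * |Hminus f k h a b c - κ| ≤ h * |b - κ| -
        k * ((hminus f (b ⊔ κ) (c ⊔ κ) - hminus f (b ⊓ κ) (c ⊓ κ)) -
             (hminus f (a ⊔ κ) (b ⊔ κ) - hminus f (a ⊓ κ) (b ⊓ κ))) := by
  intro a b c κ ha hb hc hκ
  constructor
  · exact key hcont hL hlip hk hh hCFL ha hb hc hκ
  · have hgc : ContinuousOn (fun s => -f s) (Set.Icc 0 1) := hcont.neg
    have hgl : ∀ x ∈ Set.Icc (0:ℝ) 1, ∀ y ∈ Set.Icc (0:ℝ) 1,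
        |(fun s => -f s) x - (fun s => -f s) y| ≤ L * |x - y| := by
      intro x hx y hy
      have : |-f x + f y| = |f x - f y| := by rw [← abs_neg]; ring_nf
      simpa [this] using hlip x hx y hy
    have hm : hminus f = hplus (fun s => -f s) := rfl
    have hM : Hminus f k h a b c = Hplus (fun s => -f s) k h a b c := by
      simp [Hminus, Hplus, hm]
    rw [hM, hm]
    exact key hgc hL hgl hk hh hCFL ha hb hc hκ
end

section
/- Let f : [0,1] → ℝ be continuous, concave, Lipschitz with constant L > 0, with f(0) = 0 = f(1). Let k, h > 0, α ∈ ℝ and Δ_L satisfy the CFL condition k·max(L, |α|) ≤ h/2 and h ≤ Δ_L ≤ 2h. Then for all a, b, c, κ ∈ [0,1]: (Δ_L + αk)·|H^{AB}_L(a,b,c) − κ| ≤ Δ_L·|b − κ| − k·[(h₀(b∨κ, c∨κ, α) − h₀(b∧κ, c∧κ, α)) − (h⁻(a∨κ, b∨κ) − h⁻(a∧κ, b∧κ))] + k·R_L(κ, α), where ∨ and ∧ denote max and min. (Discrete entropy inequality for the cell to the left of the interface, Case A.) -/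
lemma concave_min_le {f : ℝ → ℝ} (hconc : ConcaveOn ℝ (Set.Icc 0 1) f)
    {x y z : ℝ} (hx : x ∈ Set.Icc (0:ℝ) 1) (hy : y ∈ Set.Icc (0:ℝ) 1)
    (hxz : x ≤ z) (hzy : z ≤ y) : min (f x) (f y) ≤ f z :=
  hconc.ge_on_segment hx hy (by rw [segment_eq_Icc (hxz.trans hzy)]; exact ⟨hxz, hzy⟩)

lemma f_mono1 {f : ℝ → ℝ} {σ : ℝ} (hconc : ConcaveOn ℝ (Set.Icc 0 1) f)
    (hσ : σ ∈ Set.Icc (0:ℝ) 1) (hmax : ∀ t ∈ Set.Icc (0:ℝ) 1, f t ≤ f σ)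
    {x y : ℝ} (hx : 0 ≤ x) (hxy : x ≤ y) (hy : y ≤ σ) : f x ≤ f y := by
  have hxI : x ∈ Set.Icc (0:ℝ) 1 := ⟨hx, (hxy.trans hy).trans hσ.2⟩
  have h := concave_min_le hconc hxI hσ hxy hy
  rwa [min_eq_left (hmax x hxI)] at h

lemma f_mono2 {f : ℝ → ℝ} {σ : ℝ} (hconc : ConcaveOn ℝ (Set.Icc 0 1) f)
    (hσ : σ ∈ Set.Icc (0:ℝ) 1) (hmax : ∀ t ∈ Set.Icc (0:ℝ) 1, f t ≤ f σ)
    {x y : ℝ} (hx : σ ≤ x) (hxy : x ≤ y) (hy : y ≤ 1) : f y ≤ f x := by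
  have hyI : y ∈ Set.Icc (0:ℝ) 1 := ⟨hσ.1.trans (hx.trans hxy), hy⟩
  have h := concave_min_le hconc hσ hyI hx hxy
  rwa [min_eq_right (hmax y hyI)] at h

lemma sSup_neg_image {f : ℝ → ℝ} (hconc : ConcaveOn ℝ (Set.Icc 0 1) f)
    {x y : ℝ} (hx : x ∈ Set.Icc (0:ℝ) 1) (hy : y ∈ Set.Icc (0:ℝ) 1) (hxy : x ≤ y) :
    sSup ((fun s => -f s) '' Set.Icc x y) = -min (f x) (f y) := by
  have hbdd : BddAbove ((fun s => -f s) '' Set.Icc x y) := by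
    refine ⟨-min (f x) (f y), ?_⟩
    rintro z ⟨s, hs, rfl⟩
    have := concave_min_le hconc hx hy hs.1 hs.2
    show -f s ≤ -min (f x) (f y)
    linarith
  apply le_antisymm
  · apply csSup_le ((Set.nonempty_Icc.2 hxy).image _)
    rintro z ⟨s, hs, rfl⟩
    have := concave_min_le hconc hx hy hs.1 hs.2
    show -f s ≤ -min (f x) (f y)
    linarith
  · rcases le_total (f x) (f y) with h | h
    · rw [min_eq_left h]
      exact le_csSup hbdd ⟨x, ⟨le_refl x, hxy⟩, rfl⟩
    · rw [min_eq_right h]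
      exact le_csSup hbdd ⟨y, ⟨hxy, le_refl y⟩, rfl⟩

lemma sInf_neg_image {f : ℝ → ℝ} {σ : ℝ} (hconc : ConcaveOn ℝ (Set.Icc 0 1) f)
    (hσ : σ ∈ Set.Icc (0:ℝ) 1) (hmax : ∀ t ∈ Set.Icc (0:ℝ) 1, f t ≤ f σ)
    {x y : ℝ} (hx : x ∈ Set.Icc (0:ℝ) 1) (hy : y ∈ Set.Icc (0:ℝ) 1) (hxy : x ≤ y) :
    sInf ((fun s => -f s) '' Set.Icc x y) = -f (x ⊔ (σ ⊓ y)) := by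
  set p := x ⊔ (σ ⊓ y) with hp
  have hpx : x ≤ p := le_sup_left
  have hpy : p ≤ y := sup_le hxy (min_le_right _ _)
  have hub : ∀ s, x ≤ s → s ≤ y → f s ≤ f p := by
    intro s hs1 hs2
    have hsI : s ∈ Set.Icc (0:ℝ) 1 := ⟨hx.1.trans hs1, hs2.trans hy.2⟩
    rcases le_total σ x with h1 | h1
    · have hpe : p = x := by
        rw [hp, sup_eq_left]
        exact (min_le_left _ _).trans h1
      rw [hpe]
      exact f_mono2 hconc hσ hmax h1 hs1 hsI.2
    · rcases le_total y σ with h2 | h2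
      · have hpe : p = y := by rw [hp, min_eq_right h2, sup_eq_right.2 hxy]
        rw [hpe]
        exact f_mono1 hconc hσ hmax hsI.1 hs2 h2
      · have hpe : p = σ := by rw [hp, min_eq_left h2, sup_eq_right.2 h1]
        rw [hpe]
        exact hmax s hsI
  apply le_antisymm
  · exact csInf_le ⟨-f p, by rintro z ⟨s, hs, rfl⟩; simpa using hub s hs.1 hs.2⟩
      ⟨p, ⟨hpx, hpy⟩, rfl⟩
  · apply le_csInf ((Set.nonempty_Icc.2 hxy).image _)
    rintro z ⟨s, hs, rfl⟩
    simpa using hub s hs.1 hs.2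

lemma hminus_of_le {f : ℝ → ℝ} {σ : ℝ} (hconc : ConcaveOn ℝ (Set.Icc 0 1) f)
    (hσ : σ ∈ Set.Icc (0:ℝ) 1) (hmax : ∀ t ∈ Set.Icc (0:ℝ) 1, f t ≤ f σ)
    {x y : ℝ} (hx : x ∈ Set.Icc (0:ℝ) 1) (hy : y ∈ Set.Icc (0:ℝ) 1) (hxy : x ≤ y) :
    hminus f x y = -f (x ⊔ (σ ⊓ y)) := by
  rw [hminus, if_pos hxy, sInf_neg_image hconc hσ hmax hx hy hxy]

lemma hminus_of_gt {f : ℝ → ℝ} (hconc : ConcaveOn ℝ (Set.Icc 0 1) f)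
    {x y : ℝ} (hx : x ∈ Set.Icc (0:ℝ) 1) (hy : y ∈ Set.Icc (0:ℝ) 1) (hyx : y < x) :
    hminus f x y = -min (f y) (f x) := by
  rw [hminus, if_neg (not_le.2 hyx), sSup_neg_image hconc hy hx hyx.le]

/-- `hminus` is nondecreasing in its first argument. -/
lemma hminus_mono_left {f : ℝ → ℝ} {σ : ℝ} (hconc : ConcaveOn ℝ (Set.Icc 0 1) f)
    (hσ : σ ∈ Set.Icc (0:ℝ) 1) (hmax : ∀ t ∈ Set.Icc (0:ℝ) 1, f t ≤ f σ)
    {a₁ a₂ b : ℝ} (ha₁ : a₁ ∈ Set.Icc (0:ℝ) 1) (ha₂ : a₂ ∈ Set.Icc (0:ℝ) 1)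
    (hb : b ∈ Set.Icc (0:ℝ) 1) (h12 : a₁ ≤ a₂) :
    hminus f a₁ b ≤ hminus f a₂ b := by
  rcases le_or_gt a₂ b with h2b | h2b
  · have h1b : a₁ ≤ b := h12.trans h2b
    rw [hminus_of_le hconc hσ hmax ha₁ hb h1b, hminus_of_le hconc hσ hmax ha₂ hb h2b]
    rcases le_or_gt a₂ (σ ⊓ b) with hc | hc
    · rw [sup_eq_right.2 hc, sup_eq_right.2 (h12.trans hc)]
    · -- σ ⊓ b < a₂ ≤ b forces σ ≤ b, so σ ⊓ b = σ
      have hσb : σ ≤ b := by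
        by_contra hh
        push_neg at hh
        rw [min_eq_right hh.le] at hc
        exact absurd h2b (not_le.2 hc)
      rw [min_eq_left hσb] at *
      have hσp1 : σ ≤ a₁ ⊔ σ := le_sup_right
      have hp12 : a₁ ⊔ σ ≤ a₂ ⊔ σ := sup_le_sup_right h12 σ
      have hp21 : a₂ ⊔ σ ≤ 1 := sup_le ha₂.2 hσ.2
      have := f_mono2 hconc hσ hmax hσp1 hp12 hp21
      linarith
  · rcases le_or_gt a₁ b with h1b | h1b
    · rw [hminus_of_le hconc hσ hmax ha₁ hb h1b, hminus_of_gt hconc ha₂ hb h2b]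
      have key : f b ≤ f (a₁ ⊔ (σ ⊓ b)) := by
        rcases le_total σ a₁ with h1 | h1
        · rw [sup_eq_left.2 ((min_le_left σ b).trans h1)]
          exact f_mono2 hconc hσ hmax h1 h1b hb.2
        · rcases le_total σ b with h2 | h2
          · rw [min_eq_left h2, sup_eq_right.2 h1]
            exact hmax b hb
          · rw [min_eq_right h2, sup_eq_right.2 h1b]
      have : min (f b) (f a₂) ≤ f b := min_le_left _ _
      linarith
    · rw [hminus_of_gt hconc ha₁ hb h1b, hminus_of_gt hconc ha₂ hb h2b]
      have h1 : min (f b) (f a₂) ≤ f a₁ := by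
        rcases eq_or_lt_of_le h12 with rfl | h12'
        · exact min_le_right _ _
        · exact concave_min_le hconc hb ha₂ h1b.le h12
      have h2 : min (f b) (f a₂) ≤ f b := min_le_left _ _
      have := le_min h2 h1
      linarith

/-- Refined bound on the decrease of `hminus` in its second argument. -/
lemma hminus_sub_le {f : ℝ → ℝ} {σ : ℝ} (hconc : ConcaveOn ℝ (Set.Icc 0 1) f)
    (hσ : σ ∈ Set.Icc (0:ℝ) 1) (hmax : ∀ t ∈ Set.Icc (0:ℝ) 1, f t ≤ f σ)
    {a b₁ b₂ : ℝ} (ha : a ∈ Set.Icc (0:ℝ) 1) (hb₁ : b₁ ∈ Set.Icc (0:ℝ) 1)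
    (hb₂ : b₂ ∈ Set.Icc (0:ℝ) 1) (h12 : b₁ ≤ b₂) :
    hminus f a b₁ - hminus f a b₂ ≤ f (σ ⊓ b₂) - f (σ ⊓ b₁) := by
  have hq12 : σ ⊓ b₁ ≤ σ ⊓ b₂ := min_le_min (le_refl σ) h12
  have hq1nn : (0:ℝ) ≤ σ ⊓ b₁ := le_min hσ.1 hb₁.1
  have hq2σ : σ ⊓ b₂ ≤ σ := min_le_left _ _
  have hqmono : f (σ ⊓ b₁) ≤ f (σ ⊓ b₂) := f_mono1 hconc hσ hmax hq1nn hq12 hq2σ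
  rcases le_or_gt a b₁ with hab1 | hab1
  · rw [hminus_of_le hconc hσ hmax ha hb₁ hab1,
      hminus_of_le hconc hσ hmax ha hb₂ (hab1.trans h12)]
    rcases le_or_gt a (σ ⊓ b₁) with hc | hc
    · rw [sup_eq_right.2 hc, sup_eq_right.2 (hc.trans hq12)]
      linarith
    · rw [sup_eq_left.2 hc.le]
      rcases le_or_gt (σ ⊓ b₂) a with hc2 | hc2
      · rw [sup_eq_left.2 hc2]
        linarith
      · rw [sup_eq_right.2 hc2.le]
        have : f (σ ⊓ b₁) ≤ f a := f_mono1 hconc hσ hmax hq1nn hc.le (hc2.le.trans hq2σ)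
        linarith
  · rcases le_or_gt a b₂ with hab2 | hab2
    · rw [hminus_of_gt hconc ha hb₁ hab1, hminus_of_le hconc hσ hmax ha hb₂ hab2]
      rcases le_or_gt (σ ⊓ b₂) a with hc2 | hc2
      · rw [sup_eq_left.2 hc2]
        rcases le_or_gt (f a) (f b₁) with hm | hm
        · rw [min_eq_right hm]
          linarith
        · rw [min_eq_left hm.le]
          have hfa2 : f a ≤ f (σ ⊓ b₂) := by
            rcases eq_or_lt_of_le hc2 with he | hlt
            · rw [← he]
            · have : σ ⊓ b₂ < b₂ := hlt.trans_le hab2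
              have hσlt : σ < b₂ := by
                by_contra hh
                push_neg at hh
                rw [min_eq_right hh] at this
                exact absurd rfl this.ne
              rw [min_eq_left hσlt.le]
              exact hmax a ha
          have hb1σ : b₁ ≤ σ := by
            by_contra hh
            push_neg at hh
            have : f a ≤ f b₁ := f_mono2 hconc hσ hmax hh.le hab1.le ha.2
            linarith
          rw [min_eq_right hb1σ]
          linarith
      · rw [sup_eq_right.2 hc2.le]
        have haσ : a ≤ σ := hc2.le.trans hq2σ
        have hb1σ : b₁ ≤ σ := hab1.le.trans haσ
        rw [min_eq_right hb1σ]
        have : f b₁ ≤ f a := f_mono1 hconc hσ hmax hb₁.1 hab1.le haσ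
        have : min (f b₁) (f a) = f b₁ := min_eq_left this
        rw [this]
        linarith
    · rw [hminus_of_gt hconc ha hb₁ hab1, hminus_of_gt hconc ha hb₂ hab2]
      rcases le_or_gt (f b₂) (f b₁) with hm | hm
      · have := min_le_min hm (le_refl (f a))
        linarith
      · have hb1σ : b₁ ≤ σ := by
          by_contra hh
          push_neg at hh
          have : f b₂ ≤ f b₁ := f_mono2 hconc hσ hmax hh.le h12 hb₂.2
          linarith
        rw [min_eq_right hb1σ]
        have hfb2 : f b₂ ≤ f (σ ⊓ b₂) := by
          rcases le_total b₂ σ with h2 | h2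
          · rw [min_eq_right h2]
          · rw [min_eq_left h2]
            exact hmax b₂ hb₂
        rcases le_total (f a) (f b₁) with hma | hma
        · have h1 : min (f b₁) (f a) = f a := min_eq_right hma
          have h2 : min (f b₂) (f a) ≤ f a := min_le_right _ _
          linarith
        · have h1 : min (f b₁) (f a) = f b₁ := min_eq_left hma
          have h2 : min (f b₂) (f a) ≤ f b₂ := min_le_left _ _
          linarith

/-- Positive part of `β·x − f x` is nondecreasing on `[0,1]` (uses `f 0 = 0`, concavity). -/
lemma pospart_flux_mono {f : ℝ → ℝ} (hconc : ConcaveOn ℝ (Set.Icc 0 1) f) (hf0 : f 0 = 0)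
    {β x y : ℝ} (hx0 : 0 ≤ x) (hxy : x ≤ y) (hy1 : y ≤ 1) :
    max (β * x - f x) 0 ≤ max (β * y - f y) 0 := by
  rcases le_or_gt (β * x - f x) 0 with h | h
  · rw [max_eq_right h]
    exact le_max_right _ _
  rcases eq_or_lt_of_le hx0 with he | hx0'
  · exfalso
    rw [← he] at h
    simp [hf0] at h
  have hy0 : 0 < y := lt_of_lt_of_le hx0' hxy
  set t := x / y with ht
  have ht0 : 0 ≤ t := div_nonneg hx0 hy0.le
  have ht1 : t ≤ 1 := by
    rw [ht, div_le_one hy0]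
    exact hxy
  have hxe : (1 - t) * 0 + t * y = x := by
    rw [ht, mul_zero, zero_add, div_mul_cancel₀ _ hy0.ne']
  have hcomb : (1 - t) * f 0 + t * f y ≤ f x := by
    have := hconc.2 (Set.mem_Icc.2 ⟨le_refl 0, zero_le_one⟩)
      (Set.mem_Icc.2 ⟨hy0.le, hy1⟩) (by linarith : (0:ℝ) ≤ 1 - t) ht0 (by ring)
    rw [smul_eq_mul, smul_eq_mul, smul_eq_mul, smul_eq_mul, hxe] at this
    exact this
  have hfx : t * f y ≤ f x := by rw [hf0] at hcomb; linarith
  have hβ : β * x = t * (β * y) := by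
    rw [ht]; field_simp
  have hkey : β * x - f x ≤ t * (β * y - f y) := by
    rw [hβ]; nlinarith
  have hvpos : 0 < β * y - f y := by nlinarith
  calc max (β * x - f x) 0 = β * x - f x := max_eq_left h.le
    _ ≤ t * (β * y - f y) := hkey
    _ ≤ β * y - f y := by nlinarith
    _ ≤ max (β * y - f y) 0 := le_max_left _ _

/-- Numerator of the marching operator. -/
noncomputable def Nop (f : ℝ → ℝ) (ΔL k α x y z : ℝ) : ℝ :=
  ΔL * y - k * (h0flux f y z α - hminus f x y)

lemma Nop_eq (f : ℝ → ℝ) (ΔL k α x y z : ℝ) :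
    Nop f ΔL k α x y z = ΔL * y + k * max (α * z - f z) 0
      - k * max (-α * y - f y) 0 + k * hminus f x y := by
  simp only [Nop, h0flux]; ring

set_option maxHeartbeats 1000000 in
/-- Discrete entropy inequality for the cell to the left of the interface (Case A). -/
theorem stmt_18
    (f : ℝ → ℝ)
    (hcont : ContinuousOn f (Set.Icc 0 1))
    (hconc : ConcaveOn ℝ (Set.Icc 0 1) f)
    (L : ℝ) (hL : 0 < L)
    (hlip : ∀ x ∈ Set.Icc (0:ℝ) 1, ∀ y ∈ Set.Icc (0:ℝ) 1, |f x - f y| ≤ L * |x - y|)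
    (hf0 : f 0 = 0) (hf1 : f 1 = 0)
    (k h α ΔL : ℝ) (hk : 0 < k) (hh : 0 < h)
    (hCFL : k * max L |α| ≤ h / 2)
    (hΔL : h ≤ ΔL ∧ ΔL ≤ 2 * h) :
    ∀ a b c κ : ℝ, a ∈ Set.Icc (0:ℝ) 1 → b ∈ Set.Icc (0:ℝ) 1 →
      c ∈ Set.Icc (0:ℝ) 1 → κ ∈ Set.Icc (0:ℝ) 1 →
      (ΔL + α * k) * |HABL f α k ΔL a b c - κ| ≤ ΔL * |b - κ| -
        k * ((h0flux f (b ⊔ κ) (c ⊔ κ) α - h0flux f (b ⊓ κ) (c ⊓ κ) α) -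
             (hminus f (a ⊔ κ) (b ⊔ κ) - hminus f (a ⊓ κ) (b ⊓ κ))) +
        k * RL f κ α := by
  intro a b c κ ha hb hc hκ
  -- a maximizer of f on [0,1]
  obtain ⟨σ, hσmem, hσmax0⟩ :=
    isCompact_Icc.exists_isMaxOn (Set.nonempty_Icc.2 zero_le_one) hcont
  have hmax : ∀ t ∈ Set.Icc (0:ℝ) 1, f t ≤ f σ := isMaxOn_iff.mp hσmax0
  -- basic numeric facts
  have hkL : k * L ≤ h / 2 :=
    le_trans (mul_le_mul_of_nonneg_left (le_max_left L |α|) hk.le) hCFL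
  have hkα : k * |α| ≤ h / 2 :=
    le_trans (mul_le_mul_of_nonneg_left (le_max_right L |α|) hk.le) hCFL
  have hαk : -(k * |α|) ≤ α * k := by
    have := mul_le_mul_of_nonneg_right (neg_abs_le α) hk.le
    nlinarith [this]
  have hD : 0 < ΔL + α * k := by linarith [hΔL.1]
  -- monotonicity of Nop in the first argument
  have hmono_a : ∀ x₁ x₂ y z, x₁ ∈ Set.Icc (0:ℝ) 1 → x₂ ∈ Set.Icc (0:ℝ) 1 →
      y ∈ Set.Icc (0:ℝ) 1 → x₁ ≤ x₂ → Nop f ΔL k α x₁ y z ≤ Nop f ΔL k α x₂ y z := by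
    intro x₁ x₂ y z h1 h2 h3 h12
    rw [Nop_eq, Nop_eq]
    have hm := hminus_mono_left hconc hσmem hmax h1 h2 h3 h12
    nlinarith [mul_le_mul_of_nonneg_left hm hk.le]
  -- monotonicity of Nop in the third argument
  have hmono_c : ∀ x y z₁ z₂, z₁ ∈ Set.Icc (0:ℝ) 1 → z₂ ∈ Set.Icc (0:ℝ) 1 →
      z₁ ≤ z₂ → Nop f ΔL k α x y z₁ ≤ Nop f ΔL k α x y z₂ := by
    intro x y z₁ z₂ h1 h2 h12
    rw [Nop_eq, Nop_eq]
    have hm := pospart_flux_mono hconc hf0 (β := α) h1.1 h12 h2.2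
    nlinarith [mul_le_mul_of_nonneg_left hm hk.le]
  -- monotonicity of Nop in the second argument (uses the CFL condition)
  have hmono_b : ∀ x y₁ y₂ z, x ∈ Set.Icc (0:ℝ) 1 → y₁ ∈ Set.Icc (0:ℝ) 1 →
      y₂ ∈ Set.Icc (0:ℝ) 1 → y₁ ≤ y₂ → Nop f ΔL k α x y₁ z ≤ Nop f ΔL k α x y₂ z := by
    intro x y₁ y₂ z hx hy1 hy2 h12
    rw [Nop_eq, Nop_eq]
    have hΔy : (0:ℝ) ≤ y₂ - y₁ := sub_nonneg.2 h12
    have hdrop : hminus f x y₁ - hminus f x y₂ ≤ f (σ ⊓ y₂) - f (σ ⊓ y₁) :=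
      hminus_sub_le hconc hσmem hmax hx hy1 hy2 h12
    have hq1I : σ ⊓ y₁ ∈ Set.Icc (0:ℝ) 1 :=
      ⟨le_min hσmem.1 hy1.1, (min_le_left _ _).trans hσmem.2⟩
    have hq2I : σ ⊓ y₂ ∈ Set.Icc (0:ℝ) 1 :=
      ⟨le_min hσmem.1 hy2.1, (min_le_left _ _).trans hσmem.2⟩
    have hq12 : σ ⊓ y₁ ≤ σ ⊓ y₂ := min_le_min le_rfl h12
    have hqd : σ ⊓ y₂ - σ ⊓ y₁ ≤ y₂ - y₁ := by
      rcases le_total σ y₁ with hh | hh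
      · rw [min_eq_left hh, min_eq_left (hh.trans h12)]; linarith
      · rw [min_eq_right hh]
        have := min_le_right σ y₂
        linarith
    have hlip2 : f (σ ⊓ y₂) - f (σ ⊓ y₁) ≤ L * (y₂ - y₁) := by
      have h1 := hlip (σ ⊓ y₂) hq2I (σ ⊓ y₁) hq1I
      rw [abs_of_nonneg (by linarith : (0:ℝ) ≤ σ ⊓ y₂ - σ ⊓ y₁)] at h1
      have h2 := le_abs_self (f (σ ⊓ y₂) - f (σ ⊓ y₁))
      nlinarith [hL.le]
    rcases le_or_gt (-α * y₂ - f y₂) 0 with hneg | hpos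
    · -- the inflow positive part vanishes at y₂
      have h1 : max (-α * y₂ - f y₂) 0 = 0 := max_eq_right hneg
      have h2 : (0:ℝ) ≤ max (-α * y₁ - f y₁) 0 := le_max_right _ _
      have t1 := mul_le_mul_of_nonneg_left (hdrop.trans hlip2) hk.le
      have t2 := mul_le_mul_of_nonneg_right hkL hΔy
      have t3 := mul_le_mul_of_nonneg_right hΔL.1 hΔy
      nlinarith [t1, t2, t3]
    · have h1 : max (-α * y₂ - f y₂) 0 = -α * y₂ - f y₂ := max_eq_left hpos.le
      have h2 : -α * y₁ - f y₁ ≤ max (-α * y₁ - f y₁) 0 := le_max_left _ _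
      have habs := mul_le_mul_of_nonneg_right (neg_le_abs α) hΔy
      have m1 : max (-α * y₂ - f y₂) 0 - max (-α * y₁ - f y₁) 0
          ≤ |α| * (y₂ - y₁) + (f y₁ - f y₂) := by
        rw [h1]; nlinarith [h2, habs]
      have hbr : f y₁ - f y₂ + (f (σ ⊓ y₂) - f (σ ⊓ y₁)) ≤ L * (y₂ - y₁) := by
        rcases le_total σ y₁ with hh | hh
        · rw [min_eq_left hh, min_eq_left (hh.trans h12)]
          have h3 := hlip y₁ hy1 y₂ hy2
          rw [abs_of_nonpos (by linarith : y₁ - y₂ ≤ 0)] at h3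
          have h4 := le_abs_self (f y₁ - f y₂)
          linarith
        · rw [min_eq_right hh]
          rcases le_total σ y₂ with hh2 | hh2
          · rw [min_eq_left hh2]
            have h3 := hlip σ hσmem y₂ hy2
            rw [abs_of_nonpos (by linarith : σ - y₂ ≤ 0)] at h3
            have h4 := le_abs_self (f σ - f y₂)
            nlinarith [mul_nonneg hL.le (sub_nonneg.2 hh), h3, h4]
          · rw [min_eq_right hh2]
            nlinarith [mul_nonneg hL.le hΔy]
      have t1 := mul_le_mul_of_nonneg_left
        (by linarith [m1, hbr, hdrop] :
          (max (-α * y₂ - f y₂) 0 - max (-α * y₁ - f y₁) 0)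
            + (hminus f x y₁ - hminus f x y₂)
            ≤ |α| * (y₂ - y₁) + L * (y₂ - y₁)) hk.le
      have t2 := mul_le_mul_of_nonneg_right hkα hΔy
      have t3 := mul_le_mul_of_nonneg_right hkL hΔy
      have t4 := mul_le_mul_of_nonneg_right hΔL.1 hΔy
      nlinarith [t1, t2, t3, t4]
  -- combined monotonicity
  have hNmono : ∀ x₁ y₁ z₁ x₂ y₂ z₂, x₁ ∈ Set.Icc (0:ℝ) 1 → y₁ ∈ Set.Icc (0:ℝ) 1 →
      z₁ ∈ Set.Icc (0:ℝ) 1 → x₂ ∈ Set.Icc (0:ℝ) 1 → y₂ ∈ Set.Icc (0:ℝ) 1 →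
      z₂ ∈ Set.Icc (0:ℝ) 1 → x₁ ≤ x₂ → y₁ ≤ y₂ → z₁ ≤ z₂ →
      Nop f ΔL k α x₁ y₁ z₁ ≤ Nop f ΔL k α x₂ y₂ z₂ := by
    intro x₁ y₁ z₁ x₂ y₂ z₂ hx1 hy1 hz1 hx2 hy2 hz2 hx hy hz
    calc Nop f ΔL k α x₁ y₁ z₁ ≤ Nop f ΔL k α x₂ y₁ z₁ := hmono_a _ _ _ _ hx1 hx2 hy1 hx
      _ ≤ Nop f ΔL k α x₂ y₂ z₁ := hmono_b _ _ _ _ hx2 hy1 hy2 hy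
      _ ≤ Nop f ΔL k α x₂ y₂ z₂ := hmono_c _ _ _ _ hz1 hz2 hz
  -- nonnegativity of f on [0,1]
  have hfκ : 0 ≤ f κ := by
    have h01 : ((1 - κ) • (0:ℝ) + κ • (1:ℝ)) = κ := by simp
    have := hconc.2 (Set.mem_Icc.2 ⟨le_rfl, zero_le_one⟩)
      (Set.mem_Icc.2 ⟨zero_le_one, le_rfl⟩)
      (by linarith [hκ.2] : (0:ℝ) ≤ 1 - κ) hκ.1 (by ring)
    rw [h01] at this
    simpa [hf0, hf1] using this
  -- the key identity at κ
  have hNκ : Nop f ΔL k α κ κ κ = (ΔL + α * k) * κ - k * RL f κ α := by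
    have hmκ : hminus f κ κ = -f κ := by
      rw [hminus_of_le hconc hσmem hmax hκ hκ le_rfl, sup_eq_left.2 (min_le_right σ κ)]
    rw [Nop_eq, hmκ, RL]
    rcases le_total (α * κ) (-(f κ)) with h1 | h1
    · rw [max_eq_right (by linarith : α * κ - f κ ≤ 0),
        max_eq_left (by linarith : (0:ℝ) ≤ -α * κ - f κ),
        max_eq_right (by linarith : α * κ + f κ ≤ 0),
        min_eq_left (by linarith : (0:ℝ) ≤ 2 * f κ)]
      ring
    · rcases le_total (α * κ) (f κ) with h2 | h2
      · rw [max_eq_right (by linarith : α * κ - f κ ≤ 0),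
          max_eq_right (by linarith : -α * κ - f κ ≤ 0),
          max_eq_left (by linarith : (0:ℝ) ≤ α * κ + f κ),
          min_eq_left (by linarith : α * κ + f κ ≤ 2 * f κ)]
        ring
      · rw [max_eq_left (by linarith : (0:ℝ) ≤ α * κ - f κ),
          max_eq_right (by linarith : -α * κ - f κ ≤ 0),
          max_eq_left (by linarith : (0:ℝ) ≤ α * κ + f κ),
          min_eq_right (by linarith : 2 * f κ ≤ α * κ + f κ)]
        ring
  have hRL0 : 0 ≤ RL f κ α := le_min (le_max_right _ _) (by linarith)
  -- memberships of sups and infs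
  have hsupa : a ⊔ κ ∈ Set.Icc (0:ℝ) 1 := ⟨le_trans ha.1 le_sup_left, sup_le ha.2 hκ.2⟩
  have hsupb : b ⊔ κ ∈ Set.Icc (0:ℝ) 1 := ⟨le_trans hb.1 le_sup_left, sup_le hb.2 hκ.2⟩
  have hsupc : c ⊔ κ ∈ Set.Icc (0:ℝ) 1 := ⟨le_trans hc.1 le_sup_left, sup_le hc.2 hκ.2⟩
  have hinfa : a ⊓ κ ∈ Set.Icc (0:ℝ) 1 := ⟨le_inf ha.1 hκ.1, le_trans inf_le_left ha.2⟩
  have hinfb : b ⊓ κ ∈ Set.Icc (0:ℝ) 1 := ⟨le_inf hb.1 hκ.1, le_trans inf_le_left hb.2⟩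
  have hinfc : c ⊓ κ ∈ Set.Icc (0:ℝ) 1 := ⟨le_inf hc.1 hκ.1, le_trans inf_le_left hc.2⟩
  -- the four comparisons
  have hc1 : Nop f ΔL k α a b c ≤ Nop f ΔL k α (a ⊔ κ) (b ⊔ κ) (c ⊔ κ) :=
    hNmono _ _ _ _ _ _ ha hb hc hsupa hsupb hsupc le_sup_left le_sup_left le_sup_left
  have hc2 : Nop f ΔL k α (a ⊓ κ) (b ⊓ κ) (c ⊓ κ) ≤ Nop f ΔL k α a b c :=
    hNmono _ _ _ _ _ _ hinfa hinfb hinfc ha hb hc inf_le_left inf_le_left inf_le_left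
  have hc3 : Nop f ΔL k α κ κ κ ≤ Nop f ΔL k α (a ⊔ κ) (b ⊔ κ) (c ⊔ κ) :=
    hNmono _ _ _ _ _ _ hκ hκ hκ hsupa hsupb hsupc le_sup_right le_sup_right le_sup_right
  have hc4 : Nop f ΔL k α (a ⊓ κ) (b ⊓ κ) (c ⊓ κ) ≤ Nop f ΔL k α κ κ κ :=
    hNmono _ _ _ _ _ _ hinfa hinfb hinfc hκ hκ hκ inf_le_right inf_le_right inf_le_right
  -- rewrite the left-hand side
  have hHdiff : HABL f α k ΔL a b c - κ
      = (Nop f ΔL k α a b c - (ΔL + α * k) * κ) / (ΔL + α * k) := by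
    rw [HABL]
    rw [eq_div_iff hD.ne', sub_mul, div_mul_cancel₀ _ hD.ne', Nop]
    ring
  have hLHS : (ΔL + α * k) * |HABL f α k ΔL a b c - κ|
      = |Nop f ΔL k α a b c - (ΔL + α * k) * κ| := by
    rw [hHdiff, abs_div, abs_of_pos hD, mul_div_cancel₀ _ hD.ne']
  -- rewrite the right-hand side
  have hRHS : ΔL * |b - κ| -
        k * ((h0flux f (b ⊔ κ) (c ⊔ κ) α - h0flux f (b ⊓ κ) (c ⊓ κ) α) -
             (hminus f (a ⊔ κ) (b ⊔ κ) - hminus f (a ⊓ κ) (b ⊓ κ))) +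
        k * RL f κ α
      = (Nop f ΔL k α (a ⊔ κ) (b ⊔ κ) (c ⊔ κ) - Nop f ΔL k α (a ⊓ κ) (b ⊓ κ) (c ⊓ κ))
        + k * RL f κ α := by
    have habs2 : |b - κ| = b ⊔ κ - b ⊓ κ := by
      rw [abs_sub_comm]; exact (max_sub_min_eq_abs b κ).symm
    rw [habs2]
    simp only [Nop]
    ring
  have hkRL : 0 ≤ k * RL f κ α := mul_nonneg hk.le hRL0
  rw [hLHS, hRHS]
  rw [abs_le]
  constructor
  · linarith
  · linarith
end
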